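/- arXiv:2307.13317 — 8 statements merged into one kernel-verified Lean document; each statement's English description precedes it below -/
import Mathlib

section
/- For k≥2, let a k-Pell string of length n be a word over the alphabet {0,1,…,k} of length n in which every maximal run of the letter k has even length. Then the number of k-Pell strings of length n equals F(n+1,k), the (n+1)-st k-Fibonacci number. -/
def kFib (k : ℕ) : ℕ → ℕ
  | 0 => 0
  | 1 => 1
  | n + 2 => k * kFib k (n + 1) + kFib k n

def isPellStr (k : ℕ) : List ℕ → Bool
  | [] => true
  | [a] => decide (a < k)
  | a :: b :: rest =>
    if a = k then (b == k) && isPellStr k rest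
    else decide (a < k) && isPellStr k (b :: rest)

def pellF (k : ℕ) : ℕ → Finset (List ℕ)
  | 0 => {[]}
  | 1 => (Finset.range k).image (fun a => [a])
  | n + 2 =>
      ((Finset.range k ×ˢ pellF k (n + 1)).image (fun p => p.1 :: p.2)) ∪
      ((pellF k n).image (fun l => k :: k :: l))

lemma mem_pellF (k : ℕ) : ∀ (n : ℕ) (l : List ℕ),
    l ∈ pellF k n ↔ l.length = n ∧ isPellStr k l = true
  | 0, l => by
      simp only [pellF, Finset.mem_singleton]
      constructor
      · rintro rfl; simp [isPellStr]
      · rintro ⟨h, -⟩; exact List.length_eq_zero_iff.mp h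
  | 1, l => by
      simp only [pellF, Finset.mem_image, Finset.mem_range]
      constructor
      · rintro ⟨a, ha, rfl⟩; simp [isPellStr, ha]
      · rintro ⟨h, hp⟩
        match l with
        | [a] =>
          refine ⟨a, ?_, rfl⟩
          simpa [isPellStr] using hp
  | n + 2, l => by
      simp only [pellF, Finset.mem_union, Finset.mem_image, Finset.mem_product,
        Finset.mem_range, Prod.exists]
      constructor
      · rintro (⟨a, t, ⟨ha, ht⟩, rfl⟩ | ⟨t, ht, rfl⟩)
        · rw [mem_pellF k (n+1)] at ht
          obtain ⟨hlen, hp⟩ := ht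
          refine ⟨by simp [hlen], ?_⟩
          match t with
          | [] => simp at hlen
          | b :: rest =>
            have hak : a ≠ k := Nat.ne_of_lt ha
            simp [isPellStr, hak, ha, hp]
        · rw [mem_pellF k n] at ht
          obtain ⟨hlen, hp⟩ := ht
          refine ⟨by simp [hlen], ?_⟩
          simp [isPellStr, hp]
      · rintro ⟨hlen, hp⟩
        match l with
        | a :: b :: rest =>
          by_cases hak : a = k
          · have hrw : isPellStr k (a :: b :: rest) = ((b == k) && isPellStr k rest) := by
              simp [isPellStr, hak]
            rw [hrw, Bool.and_eq_true, beq_iff_eq] at hp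
            obtain ⟨hb, hp⟩ := hp
            right
            refine ⟨rest, (mem_pellF k n rest).mpr ⟨by simpa using hlen, hp⟩, ?_⟩
            rw [hak, hb]
          · simp only [isPellStr, if_neg hak, Bool.and_eq_true, decide_eq_true_eq] at hp
            obtain ⟨ha, hp⟩ := hp
            left
            exact ⟨a, b :: rest, ⟨ha, (mem_pellF k (n+1) (b :: rest)).mpr
              ⟨by simpa using hlen, hp⟩⟩, rfl⟩

lemma card_pellF (k : ℕ) : ∀ n, (pellF k n).card = kFib k (n + 1)
  | 0 => by simp [pellF, kFib]
  | 1 => by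
      rw [pellF, Finset.card_image_of_injective _ (fun a b h => by simpa using h)]
      simp [kFib]
  | n + 2 => by
      rw [pellF]
      rw [Finset.card_union_of_disjoint]
      · rw [Finset.card_image_of_injective _
          (fun p q h => by
            obtain ⟨p1, p2⟩ := p; obtain ⟨q1, q2⟩ := q
            simpa [Prod.ext_iff] using h),
          Finset.card_image_of_injective _
          (fun a b h => by simpa using h),
          Finset.card_product, Finset.card_range,
          card_pellF k (n + 1), card_pellF k n]
        rfl
      · rw [Finset.disjoint_left]
        rintro l hl hr
        simp only [Finset.mem_image, Finset.mem_product, Finset.mem_range, Prod.exists] at hl hr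
        obtain ⟨a, t, ⟨ha, -⟩, rfl⟩ := hl
        obtain ⟨s, -, h⟩ := hr
        injection h with h1 h2
        omega

theorem card_kPell_strings (k n : ℕ) (hk : 2 ≤ k) :
    Nat.card {l : List ℕ // l.length = n ∧ isPellStr k l = true} = kFib k (n + 1) := by
  have hset : {l : List ℕ | l.length = n ∧ isPellStr k l = true} = ↑(pellF k n) := by
    ext l
    simp [mem_pellF k n l]
  calc Nat.card {l : List ℕ // l.length = n ∧ isPellStr k l = true}
      = Nat.card {l : List ℕ | l.length = n ∧ isPellStr k l = true} := rfl
    _ = (pellF k n).card := by rw [hset, Nat.card_coe_set_eq, Set.ncard_coe_finset]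
  exact card_pellF k n
end

section
/- For k≥2, the set of k-Pell strings of length n+2 decomposes as the disjoint union of j·(k-Pell strings of length n+1) for j ∈ {0,…,k-1} together with kk·(k-Pell strings of length n). Consequently the counts P(n) = |{k-Pell strings of length n}| satisfy P(n+2) = k·P(n+1) + P(n), with P(0)=1 and P(1)=k. -/
lemma pell_decomp (k n : ℕ) (l : List ℕ) :
    (l.length = n + 2 ∧ isPellStr k l = true) ↔
      ((∃ j, j < k ∧ ∃ t, t.length = n + 1 ∧ isPellStr k t = true ∧ l = j :: t) ∨
        (∃ t, t.length = n ∧ isPellStr k t = true ∧ l = k :: k :: t)) := by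
  constructor
  · rintro ⟨hlen, hP⟩
    obtain ⟨a, b, rest, rfl⟩ : ∃ a b rest, l = a :: b :: rest := by
      rcases l with _ | ⟨a, _ | ⟨b, rest⟩⟩
      · simp at hlen
      · simp at hlen
      · exact ⟨a, b, rest, rfl⟩
    by_cases ha : a = k
    · subst ha
      simp [isPellStr] at hP
      exact Or.inr ⟨rest, by simpa using hlen, hP.2, by rw [hP.1]⟩
    · simp [isPellStr, ha] at hP
      exact Or.inl ⟨a, hP.1, b :: rest, by simpa using hlen, hP.2, rfl⟩
  · rintro (⟨j, hj, t, hlen, hP, rfl⟩ | ⟨t, hlen, hP, rfl⟩)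
    · refine ⟨by simp [hlen], ?_⟩
      cases t with
      | nil => simp at hlen
      | cons b rest => simp [isPellStr, Nat.ne_of_lt hj, hj, hP]
    · exact ⟨by simp [hlen], by simp [isPellStr, hP]⟩

def PC (k n : ℕ) := {l : List ℕ // l.length = n ∧ isPellStr k l = true}

def f0 (k : ℕ) : Unit → PC k 0 := fun _ => ⟨[], rfl, rfl⟩

lemma f0_bij (k : ℕ) : Function.Bijective (f0 k) := by
  constructor
  · intro a b _; rfl
  · rintro ⟨l, hl, hP⟩
    have : l = [] := List.length_eq_zero_iff.mp hl
    exact ⟨(), by subst this; rfl⟩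

def f1 (k : ℕ) : Fin k → PC k 1 :=
  fun j => ⟨[j.1], rfl, by simp [isPellStr]⟩

lemma f1_bij (k : ℕ) : Function.Bijective (f1 k) := by
  constructor
  · intro a b hab
    have h := congrArg Subtype.val hab
    simp only [f1, List.cons.injEq] at h
    exact Fin.ext h.1
  · rintro ⟨l, hl, hP⟩
    obtain ⟨a, rfl⟩ : ∃ a, l = [a] := by
      rcases l with _ | ⟨a, _ | ⟨b, t⟩⟩
      · simp at hl
      · exact ⟨a, rfl⟩
      · simp at hl
    simp [isPellStr] at hP
    exact ⟨⟨a, hP⟩, rfl⟩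

def f2 (k n : ℕ) : (Fin k × PC k (n + 1)) ⊕ PC k n → PC k (n + 2)
  | Sum.inl (j, t) => ⟨j.1 :: t.1,
      (pell_decomp k n _).mpr (Or.inl ⟨j.1, j.2, t.1, t.2.1, t.2.2, rfl⟩)⟩
  | Sum.inr t => ⟨k :: k :: t.1,
      (pell_decomp k n _).mpr (Or.inr ⟨t.1, t.2.1, t.2.2, rfl⟩)⟩

lemma f2_bij (k n : ℕ) : Function.Bijective (f2 k n) := by
  constructor
  · rintro (⟨j, t⟩ | t) (⟨j', t'⟩ | t') h <;>
      have h := congrArg Subtype.val h <;>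
      simp only [f2, List.cons.injEq] at h
    · simp only [Sum.inl.injEq, Prod.mk.injEq]
      exact ⟨Fin.ext h.1, Subtype.ext h.2⟩
    · exact absurd h.1 (Nat.ne_of_lt j.2)
    · exact absurd h.1.symm (Nat.ne_of_lt j'.2)
    · simp only [Sum.inr.injEq]
      exact Subtype.ext h.2.2
  · rintro ⟨l, hl⟩
    rcases (pell_decomp k n l).mp hl with ⟨j, hj, t, ht1, ht2, rfl⟩ | ⟨t, ht1, ht2, rfl⟩
    · exact ⟨Sum.inl (⟨j, hj⟩, ⟨t, ht1, ht2⟩), rfl⟩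
    · exact ⟨Sum.inr ⟨t, ht1, ht2⟩, rfl⟩

lemma pc_finite (k : ℕ) : ∀ n, Finite (PC k n) := by
  intro n
  induction n using Nat.strong_induction_on with
  | _ n ih =>
    match n with
    | 0 => exact Finite.of_surjective (f0 k) (f0_bij k).2
    | 1 => exact Finite.of_surjective (f1 k) (f1_bij k).2
    | (m + 2) =>
      haveI := ih (m + 1) (by omega)
      haveI := ih m (by omega)
      exact Finite.of_surjective (f2 k m) (f2_bij k m).2

theorem kPell_strings_decomposition (k : ℕ) (hk : 2 ≤ k) :
    (∀ (n : ℕ) (l : List ℕ),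
      (l.length = n + 2 ∧ isPellStr k l = true) ↔
        ((∃ j, j < k ∧ ∃ t, t.length = n + 1 ∧ isPellStr k t = true ∧ l = j :: t) ∨
          (∃ t, t.length = n ∧ isPellStr k t = true ∧ l = k :: k :: t))) ∧
    (∀ n, Nat.card {l : List ℕ // l.length = n + 2 ∧ isPellStr k l = true} =
        k * Nat.card {l : List ℕ // l.length = n + 1 ∧ isPellStr k l = true} +
          Nat.card {l : List ℕ // l.length = n ∧ isPellStr k l = true}) ∧
    Nat.card {l : List ℕ // l.length = 0 ∧ isPellStr k l = true} = 1 ∧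
    Nat.card {l : List ℕ // l.length = 1 ∧ isPellStr k l = true} = k := by
  refine ⟨fun n l => pell_decomp k n l, ?_, ?_, ?_⟩
  · intro n
    haveI := pc_finite k n
    haveI := pc_finite k (n + 1)
    have h1 : Nat.card (PC k (n + 2)) = Nat.card ((Fin k × PC k (n + 1)) ⊕ PC k n) :=
      (Nat.card_congr (Equiv.ofBijective _ (f2_bij k n))).symm
    show Nat.card (PC k (n + 2)) = k * Nat.card (PC k (n + 1)) + Nat.card (PC k n)
    rw [h1, Nat.card_sum, Nat.card_prod, Nat.card_eq_fintype_card, Fintype.card_fin]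
  · show Nat.card (PC k 0) = 1
    rw [← Nat.card_congr (Equiv.ofBijective _ (f0_bij k))]
    simp
  · show Nat.card (PC k 1) = k
    rw [← Nat.card_congr (Equiv.ofBijective _ (f1_bij k))]
    simp
end

section
/- Let E(n) denote the number of edges of the k-Pell graph Π(n,k), satisfying E(0)=0, E(1)=k-1, and E(n)=k·E(n-1)+E(n-2)+F(n+1,k)-F(n,k) for n≥2, where F(n,k) are the k-Fibonacci numbers. Then the generating function satisfies (1-kt-t²)² · ∑_{n≥0} E(n)·tⁿ = (k-1+t)·t as formal power series. -/
noncomputable def kPellE (k : ℕ) : ℕ → ℚ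
  | 0 => 0
  | 1 => (k : ℚ) - 1
  | n + 2 => (k : ℚ) * kPellE k (n + 1) + kPellE k n
      + (kFib k (n + 3) : ℚ) - (kFib k (n + 2) : ℚ)

open PowerSeries

private lemma coeff_A_zero (c : ℚ) (φ : PowerSeries ℚ) :
    coeff 0 ((1 - C c * X - X ^ 2) * φ) = coeff 0 φ := by
  simp [sub_mul, mul_assoc, coeff_zero_eq_constantCoeff, map_mul]

private lemma coeff_A_one (c : ℚ) (φ : PowerSeries ℚ) :
    coeff 1 ((1 - C c * X - X ^ 2) * φ) = coeff 1 φ - c * coeff 0 φ := by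
  have h2 : (X:PowerSeries ℚ) ^ 2 * φ = X * (X * φ) := by ring
  simp [sub_mul, mul_assoc, h2, coeff_succ_X_mul, coeff_zero_eq_constantCoeff, map_mul]

private lemma coeff_A_two (c : ℚ) (φ : PowerSeries ℚ) (n : ℕ) :
    coeff (n + 2) ((1 - C c * X - X ^ 2) * φ) =
      coeff (n + 2) φ - c * coeff (n + 1) φ - coeff n φ := by
  have h2 : coeff (n + 2) ((X:PowerSeries ℚ) ^ 2 * φ) = coeff n φ := coeff_X_pow_mul φ 2 n
  simp [sub_mul, mul_assoc, coeff_succ_X_mul, h2]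

theorem kPellE_generating_function (k : ℕ) (hk : 2 ≤ k) :
    (1 - (k : PowerSeries ℚ) * PowerSeries.X - PowerSeries.X ^ 2) ^ 2 *
      PowerSeries.mk (fun n => kPellE k n) =
      ((k : PowerSeries ℚ) - 1 + PowerSeries.X) * PowerSeries.X := by
  have hC : (k : PowerSeries ℚ) = C (k : ℚ) := (map_natCast (C (R := ℚ)) k).symm
  set F : PowerSeries ℚ := PowerSeries.mk (fun n => (kFib k n : ℚ)) with hFdef
  set E : PowerSeries ℚ := PowerSeries.mk (fun n => kPellE k n) with hEdef
  have cF : ∀ n, coeff n F = (kFib k n : ℚ) := fun n => coeff_mk n _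
  have cE : ∀ n, coeff n E = kPellE k n := fun n => coeff_mk n _
  have hF : (1 - C (k : ℚ) * X - X ^ 2) * F = X := by
    ext n
    match n with
    | 0 => rw [coeff_A_zero, cF]; simp [kFib]
    | 1 => rw [coeff_A_one, cF, cF]; simp [kFib]
    | m + 2 =>
      rw [coeff_A_two, cF, cF, cF, coeff_X]
      simp only [kFib]
      push_cast
      simp
  have hE : X * ((1 - C (k : ℚ) * X - X ^ 2) * E) = F * (1 - X) - X := by
    have hR : F * (1 - X) = F - X * F := by ring
    rw [hR]
    ext n
    match n with
    | 0 =>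
      rw [map_sub, map_sub, cF, coeff_zero_eq_constantCoeff, map_mul, constantCoeff_X]
      simp [kFib]
    | 1 =>
      rw [coeff_succ_X_mul, coeff_A_zero, cE, map_sub, map_sub, cF, coeff_succ_X_mul, cF,
        coeff_X]
      simp [kPellE, kFib]
    | 2 =>
      rw [coeff_succ_X_mul, coeff_A_one, cE, cE, map_sub, map_sub, cF, coeff_succ_X_mul, cF,
        coeff_X]
      simp [kPellE, kFib]
    | m + 3 =>
      rw [coeff_succ_X_mul, coeff_A_two, cE, cE, cE, map_sub, map_sub, cF, coeff_succ_X_mul,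
        cF, coeff_X]
      have : kPellE k (m + 2) = (k : ℚ) * kPellE k (m + 1) + kPellE k m
          + (kFib k (m + 3) : ℚ) - (kFib k (m + 2) : ℚ) := rfl
      rw [this]
      simp
      ring
  have hX : (X : PowerSeries ℚ) ≠ 0 := X_ne_zero
  apply mul_left_cancel₀ hX
  rw [hC]
  calc X * ((1 - C (k:ℚ) * X - X ^ 2) ^ 2 * E)
      = (1 - C (k:ℚ) * X - X ^ 2) * (X * ((1 - C (k:ℚ) * X - X ^ 2) * E)) := by ring
    _ = (1 - C (k:ℚ) * X - X ^ 2) * (F * (1 - X) - X) := by rw [hE]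
    _ = ((1 - C (k:ℚ) * X - X ^ 2) * F) * (1 - X) - (1 - C (k:ℚ) * X - X ^ 2) * X := by
        ring
    _ = X * (1 - X) - (1 - C (k:ℚ) * X - X ^ 2) * X := by rw [hF]
    _ = X * ((C (k:ℚ) - 1 + X) * X) := by ring
end

section
/- Let E(n) satisfy E(0)=0, E(1)=k-1, E(n)=k·E(n-1)+E(n-2)+F(n+1,k)-F(n,k) for n≥2, where F(n,k) are the k-Fibonacci numbers. Then E(n) = ∑_{i=0}^{n} F(i,k)·(F(n-i+2,k) - F(n-i+1,k)) for all n≥0. -/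
theorem kPellE_closed_form (k : ℕ) (hk : 2 ≤ k) (n : ℕ) :
    kPellE k n = ∑ i ∈ Finset.range (n + 1),
      (kFib k i : ℚ) * ((kFib k (n - i + 2) : ℚ) - (kFib k (n - i + 1) : ℚ)) := by
  induction n using Nat.strong_induction_on with
  | _ n ih =>
    match n with
    | 0 => simp [kPellE, kFib]
    | 1 =>
      simp [kPellE, Finset.sum_range_succ, kFib]
    | (n + 2) =>
      have h1 := ih (n + 1) (by omega)
      have h0 := ih n (by omega)
      rw [kPellE, h1, h0]
      rw [Finset.sum_range_succ (n := n + 2), Finset.sum_range_succ (n := n + 1),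
        Finset.sum_range_succ (n := n + 1)]
      have key : ∑ x ∈ Finset.range (n + 1),
          (kFib k x : ℚ) * ((kFib k (n + 2 - x + 2) : ℚ) - (kFib k (n + 2 - x + 1) : ℚ))
          = ∑ x ∈ Finset.range (n + 1),
          ((k : ℚ) * ((kFib k x : ℚ) * ((kFib k (n + 1 - x + 2) : ℚ) - (kFib k (n + 1 - x + 1) : ℚ)))
            + (kFib k x : ℚ) * ((kFib k (n - x + 2) : ℚ) - (kFib k (n - x + 1) : ℚ))) := by
        refine Finset.sum_congr rfl fun i hi => ?_
        have hin : i ≤ n := by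
          have := Finset.mem_range.mp hi; omega
        have e1 : n + 1 - i = n - i + 1 := by omega
        have e2 : n + 2 - i = n - i + 2 := by omega
        rw [e1, e2]
        have r1 : kFib k (n - i + 2 + 2) = k * kFib k (n - i + 1 + 2) + kFib k (n - i + 2) := rfl
        have r2 : kFib k (n - i + 1 + 2) = k * kFib k (n - i + 2) + kFib k (n - i + 1) := rfl
        rw [r1, r2]
        push_cast
        ring
      rw [key, Finset.sum_add_distrib, ← Finset.mul_sum]
      simp only [Nat.sub_self, Nat.add_sub_cancel_left, Nat.add_sub_cancel,
        show n + 1 + 1 - (n + 1) = 1 by omega, show n + 2 - (n + 1) = 1 by omega]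
      simp only [kFib]
      push_cast
      ring
end

section
/- For n≥1 and k≥2, the radius of the k-Pell graph Π(n,k) equals ⌊kn/2⌋. -/
abbrev PellVert (n k : ℕ) := {f : Fin n → Fin (k + 1) // isPellStr k (List.ofFn fun i => (f i : ℕ)) = true}

def pellAdj (k : ℕ) {n : ℕ} (f g : Fin n → Fin (k + 1)) : Prop :=
  (∃ j : Fin n, ((g j : ℕ) = (f j : ℕ) + 1) ∧ ((f j : ℕ) + 1 < k) ∧ ∀ i, i ≠ j → f i = g i) ∨
  (∃ j j' : Fin n, ((j' : ℕ) = (j : ℕ) + 1) ∧ ((f j : ℕ) = k - 1) ∧ ((f j' : ℕ) = k - 1) ∧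
    ((g j : ℕ) = k) ∧ ((g j' : ℕ) = k) ∧ ∀ i, i ≠ j → i ≠ j' → f i = g i)

def kPellGraph (n k : ℕ) : SimpleGraph (PellVert n k) :=
  SimpleGraph.fromRel (fun u v => pellAdj k u.1 v.1)

noncomputable def pellEcc {n k : ℕ} (v : PellVert n k) : ℕ :=
  Finset.univ.sup fun u => (kPellGraph n k).dist v u

noncomputable def pellRadius (n k : ℕ) : ℕ := sInf (Set.range (pellEcc (n := n) (k := k)))

noncomputable def pellDiam (n k : ℕ) : ℕ := Finset.univ.sup (pellEcc (n := n) (k := k))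

def pellCenter (n k : ℕ) : Set (PellVert n k) := {v | pellEcc v = pellRadius n k}


variable {k : ℕ}

lemma pell_cons_lt {a : ℕ} (h : a < k) (l : List ℕ) :
    isPellStr k (a :: l) = isPellStr k l := by
  cases l with
  | nil => simp [isPellStr, h]
  | cons b t => simp [isPellStr, h, Nat.ne_of_lt h]

lemma pell_kk (l : List ℕ) : isPellStr k (k :: k :: l) = isPellStr k l := by
  simp [isPellStr]

lemma pell_cons_inv {a : ℕ} {l : List ℕ} (h : isPellStr k (a :: l) = true) :
    (a < k ∧ isPellStr k l = true) ∨ (a = k ∧ ∃ t, l = k :: t ∧ isPellStr k t = true) := by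
  by_cases hak : a = k
  · right
    refine ⟨hak, ?_⟩
    cases l with
    | nil => rw [hak] at h; simp [isPellStr] at h
    | cons b t =>
      rw [hak] at h
      simp [isPellStr] at h
      exact ⟨t, by rw [h.1], h.2⟩
  · left
    cases l with
    | nil =>
      simp only [isPellStr, decide_eq_true_eq] at h
      exact ⟨h, rfl⟩
    | cons b t =>
      simp only [isPellStr, if_neg hak, Bool.and_eq_true, decide_eq_true_eq] at h
      exact h

lemma pell_of_all_lt : ∀ (l : List ℕ), (∀ a ∈ l, a < k) → isPellStr k l = true := by
  intro l
  induction l with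
  | nil => intro _; rfl
  | cons a t ih =>
    intro h
    rw [pell_cons_lt (h a (by simp))]
    exact ih fun b hb => h b (by simp [hb])

lemma pell_replicate : ∀ p : ℕ, isPellStr k (List.replicate p k) = true → Even p := by
  intro p
  induction p using Nat.strong_induction_on with
  | _ p ih => ?_
  match p with
  | 0 => intro _; exact Even.zero
  | 1 => intro h; simp [isPellStr] at h
  | (p+2) =>
    intro h
    have hrep : List.replicate (p+2) k = k :: k :: List.replicate p k := rfl
    rw [hrep, pell_kk] at h
    obtain ⟨r, hr⟩ := ih p (by omega) h
    exact ⟨r + 1, by omega⟩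

lemma pell_partner : ∀ (l : List ℕ), isPellStr k l = true →
    ∀ i (h : i < l.length), l[i] = k → (∀ j (hj : j < i), l[j]'(by omega) ≠ k) →
    ∃ h' : i + 1 < l.length, l[i+1] = k := by
  intro l
  induction l with
  | nil => intro _ i h; simp at h
  | cons a t ih =>
    intro hv i h hik hmin
    rcases pell_cons_inv hv with ⟨hak, ht⟩ | ⟨hak, t', ht', hvt'⟩
    · match i with
      | 0 => simp only [List.getElem_cons_zero] at hik; omega
      | (i+1) =>
        simp only [List.getElem_cons_succ] at hik
        have hlt : i < t.length := by simp at h; omega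
        have hmin' : ∀ j (hj : j < i), t[j]'(by omega) ≠ k := by
          intro j hj
          have := hmin (j+1) (by omega)
          simpa using this
        obtain ⟨h', hk'⟩ := ih ht i hlt hik hmin'
        exact ⟨by simp; omega, by simpa using hk'⟩
    · subst ht'
      match i with
      | 0 => exact ⟨by simp, by simp⟩
      | (i+1) =>
        exfalso
        exact hmin 0 (by omega) (by simpa using hak)

lemma pell_congr_aux : ∀ (N : ℕ) (l l' : List ℕ) (hN : l.length ≤ N)
    (hlen : l'.length = l.length)
    (hiff : ∀ j (hj : j < l.length), (l[j] = k ↔ l'[j]'(by omega) = k))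
    (hle : ∀ j (hj : j < l.length), l'[j]'(by omega) ≤ k),
    isPellStr k l = true → isPellStr k l' = true := by
  intro N
  induction N with
  | zero =>
    intro l l' hN hlen _ _ _
    rw [Nat.le_zero, List.length_eq_zero_iff] at hN
    subst hN
    rw [List.length_nil, List.length_eq_zero_iff] at hlen
    subst hlen; rfl
  | succ N ih =>
    intro l l' hN hlen hiff hle hv
    cases l with
    | nil =>
      rw [List.length_nil, List.length_eq_zero_iff] at hlen
      subst hlen; rfl
    | cons a t => ?_
    cases l' with
    | nil => simp at hlen
    | cons b t' => ?_
    rcases pell_cons_inv hv with ⟨hak, ht⟩ | ⟨hak, t₂, ht₂, hvt₂⟩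
    · have hbk : b ≠ k := by
        intro hbk
        have := (hiff 0 (by simp)).2 (by simpa using hbk)
        simp only [List.getElem_cons_zero] at this; omega
      have hblt : b < k := lt_of_le_of_ne (by simpa using hle 0 (by simp)) hbk
      rw [pell_cons_lt hblt]
      apply ih t t' (by simp at hN; omega) (by simpa using hlen)
      · intro j hj
        have := hiff (j+1) (by simpa using Nat.succ_lt_succ hj)
        simpa using this
      · intro j hj
        have := hle (j+1) (by simpa using Nat.succ_lt_succ hj)
        simpa using this
      · exact ht
    · subst ht₂
      have hb : b = k := (hiff 0 (by simp)).1 (by simpa using hak)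
      cases t' with
      | nil => simp at hlen
      | cons c t'' => ?_
      have hc : c = k := by
        have := (hiff 1 (by simp)).1 (by simp)
        simpa using this
      subst hb hc
      rw [pell_kk]
      apply ih t₂ t'' (by simp at hN; omega) (by simpa using hlen) _ _ hvt₂
      · intro j hj
        have := hiff (j+2) (by simp; omega)
        simpa using this
      · intro j hj
        have := hle (j+2) (by simp; omega)
        simpa using this

lemma pell_congr (l l' : List ℕ) (hlen : l'.length = l.length)
    (hiff : ∀ j (hj : j < l.length), (l[j] = k ↔ l'[j]'(by omega) = k))
    (hle : ∀ j (hj : j < l.length), l'[j]'(by omega) ≤ k) :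
    isPellStr k l = true → isPellStr k l' = true :=
  pell_congr_aux l.length l l' le_rfl hlen hiff hle

lemma pell_subst : ∀ (i₀ : ℕ) (l l' : List ℕ) (hlen : l'.length = l.length) (hk : 1 ≤ k)
    (hi : i₀ + 1 < l.length)
    (hsame : ∀ j (hj : j < l.length), j ≠ i₀ → j ≠ i₀ + 1 → l'[j]'(by omega) = l[j])
    (hpre : ∀ j (hj : j < i₀), l[j]'(by omega) < k)
    (h0 : l[i₀]'(by omega) = k) (h1 : l[i₀+1] = k)
    (h0' : l'[i₀]'(by omega) = k - 1) (h1' : l'[i₀+1]'(by omega) = k - 1),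
    isPellStr k l = true → isPellStr k l' = true := by
  intro i₀
  induction i₀ with
  | zero =>
    intro l l' hlen hk hi hsame hpre h0 h1 h0' h1' hv
    cases l with | nil => simp at hi | cons a t => ?_
    cases t with | nil => simp at hi | cons a₂ t₂ => ?_
    cases l' with | nil => simp at hlen | cons b t' => ?_
    cases t' with | nil => simp at hlen | cons b₂ t₂' => ?_
    simp only [List.getElem_cons_zero, List.getElem_cons_succ] at h0 h1 h0' h1'
    subst h0 h1 h0' h1'
    rw [pell_kk] at hv
    have ht' : t₂' = t₂ := by
      apply List.ext_getElem (by simpa using hlen)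
      intro j hj hj2
      have := hsame (j+2) (by simp; omega) (by omega) (by omega)
      simpa using this
    subst ht'
    rw [pell_cons_lt (by omega), pell_cons_lt (by omega)]
    exact hv
  | succ i₀ ih =>
    intro l l' hlen hk hi hsame hpre h0 h1 h0' h1' hv
    cases l with | nil => simp at hi | cons a t => ?_
    cases l' with | nil => simp at hlen | cons a' t' => ?_
    have ha : a < k := by simpa using hpre 0 (by omega)
    have ha' : a' = a := by have := hsame 0 (by simp) (by omega) (by omega); exact this
    subst ha'
    rw [pell_cons_lt ha] at hv ⊢
    apply ih t t' (by simpa using hlen) hk (by simp at hi ⊢; omega) _ _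
      (by simpa using h0) (by simpa using h1) (by simpa using h0') (by simpa using h1') hv
    · intro j hj hj1 hj2
      have := hsame (j+1) (by simp at hj ⊢; omega) (by omega) (by omega)
      simpa using this
    · intro j hj
      have := hpre (j+1) (by omega)
      simpa using this

lemma pell_of_parity : ∀ (N : ℕ) (l : List ℕ) (hN : l.length ≤ N) (p : ℕ) (hk : 0 < k)
    (hle : ∀ j (hj : j < l.length), l[j] ≤ k)
    (H : ∀ i (h : i < l.length), l[i] = k →
      (Even (i + p) → ∃ h' : i + 1 < l.length, l[i+1] = k) ∧
      (¬ Even (i + p) → 1 ≤ i ∧ l[i-1]'(by omega) = k)),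
    isPellStr k l = true := by
  intro N
  induction N with
  | zero =>
    intro l hN _ _ _ _
    rw [Nat.le_zero, List.length_eq_zero_iff] at hN
    subst hN; rfl
  | succ N ih =>
    intro l hN p hk hle H
    cases l with
    | nil => rfl
    | cons a t => ?_
    by_cases hak : a = k
    · have hEp : Even p := by
        by_contra hodd
        have := ((H 0 (by simp) (by simpa using hak)).2 (by simpa using hodd)).1
        omega
      obtain ⟨h1, hk1⟩ := (H 0 (by simp) (by simpa using hak)).1 (by simpa using hEp)
      cases t with
      | nil => simp at h1
      | cons b t₂ => ?_
      have hb : b = k := by simpa using hk1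
      rw [hak, hb, pell_kk]
      apply ih t₂ (by simp at hN; omega) p hk
      · intro j hj
        have := hle (j+2) (by simp; omega)
        simpa using this
      · intro i h hik
        have hpar : Even (i + 2 + p) ↔ Even (i + p) := by
          rw [show i + 2 + p = (i + p) + 2 by omega]
          simp [Nat.even_add]
        constructor
        · intro hev
          obtain ⟨h', hk'⟩ := (H (i+2) (by simp at h ⊢; omega) (by simpa using hik)).1
            (hpar.mpr hev)
          exact ⟨by simp at h' ⊢; omega, by simpa using hk'⟩
        · intro hodd
          have hodd2 : ¬ Even (i + 2 + p) := fun hc => hodd (hpar.mp hc)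
          have hgot := ((H (i+2) (by simp at h ⊢; omega) (by simpa using hik)).2 hodd2).2
          have hi1 : 1 ≤ i := by
            by_contra hi0
            have hi0' : i = 0 := by omega
            subst hi0'
            exact (by simpa [parity_simps] using hodd : ¬ Even p) hEp
          refine ⟨hi1, ?_⟩
          have hre : (a :: b :: t₂)[i+2-1]'(by simp at h ⊢; omega)
              = t₂[i-1]'(by omega) := by
            have h2 : (a :: b :: t₂)[(i-1)+2]'(by simp; omega) = t₂[i-1]'(by omega) := by simp
            rw [← h2]
            congr 1
            omega
          rw [hre] at hgot
          exact hgot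
    · have ha : a < k := lt_of_le_of_ne (by have := hle 0 (by simp); exact this) hak
      rw [pell_cons_lt ha]
      apply ih t (by simp at hN; omega) (p+1) hk
      · intro j hj
        have := hle (j+1) (by simpa using Nat.succ_lt_succ hj)
        simpa using this
      · intro i h hik
        have hpar : Even (i + 1 + p) ↔ Even (i + (p+1)) := by rw [show i+1+p = i+(p+1) by omega]
        constructor
        · intro hev
          obtain ⟨h', hk'⟩ := (H (i+1) (by simpa using Nat.succ_lt_succ h) (by simpa using hik)).1
            (hpar.mpr hev)
          exact ⟨by simp at h' ⊢; omega, by simpa using hk'⟩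
        · intro hodd
          have hgot := ((H (i+1) (by simpa using Nat.succ_lt_succ h)
            (by simpa using hik)).2 (fun hc => hodd (hpar.mp hc))).2
          have hi1 : 1 ≤ i := by
            by_contra hi0
            have hi0' : i = 0 := by omega
            subst hi0'
            simp only [Nat.add_sub_cancel, List.getElem_cons_zero] at hgot
            omega
          refine ⟨hi1, ?_⟩
          have hre : (a :: t)[i+1-1]'(by simp; omega) = t[i-1]'(by omega) := by
            have h2 : (a :: t)[(i-1)+1]'(by simp; omega) = t[i-1]'(by omega) := by simp
            rw [← h2]
            congr 1
            omega
          rw [hre] at hgot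
          exact hgot


variable {n k : ℕ}

def pstr (f : Fin n → Fin (k+1)) : List ℕ := List.ofFn fun i => (f i : ℕ)

lemma pstr_length (f : Fin n → Fin (k+1)) : (pstr f).length = n := by
  simp [pstr]

lemma pstr_get (f : Fin n → Fin (k+1)) (j : ℕ) (hj : j < (pstr f).length) :
    (pstr f)[j] = (f ⟨j, by simpa [pstr] using hj⟩ : ℕ) := by
  simp [pstr]

def pvalid (f : Fin n → Fin (k+1)) : Prop := isPellStr k (pstr f) = true

lemma pvalid_iff (f : Fin n → Fin (k+1)) :
    pvalid f ↔ isPellStr k (List.ofFn fun i => (f i : ℕ)) = true := Iff.rfl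

lemma pvalid_of_all_lt (f : Fin n → Fin (k+1)) (h : ∀ i, (f i : ℕ) < k) : pvalid f := by
  apply pell_of_all_lt
  intro a ha
  simp only [pstr, List.mem_ofFn] at ha
  obtain ⟨i, rfl⟩ := ha
  exact h i

lemma pvalid_congr {f g : Fin n → Fin (k+1)} (hfg : ∀ i, ((f i : ℕ) = k ↔ (g i : ℕ) = k))
    (hf : pvalid f) : pvalid g := by
  apply pell_congr (pstr f) (pstr g) (by simp [pstr_length])
  · intro j hj
    rw [pstr_get f j hj, pstr_get g j (by simp [pstr_length] at hj ⊢; omega)]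
    exact hfg _
  · intro j hj
    rw [pstr_get g j (by simp [pstr_length] at hj ⊢; omega)]
    omega
  · exact hf

lemma pvalid_partner {f : Fin n → Fin (k+1)} (hf : pvalid f) (i₀ : ℕ) (hi₀ : i₀ < n)
    (hk : (f ⟨i₀, hi₀⟩ : ℕ) = k) (hmin : ∀ j (hj : j < i₀), (f ⟨j, by omega⟩ : ℕ) ≠ k) :
    ∃ h' : i₀ + 1 < n, (f ⟨i₀ + 1, h'⟩ : ℕ) = k := by
  have h1 : i₀ < (pstr f).length := by rw [pstr_length]; omega
  obtain ⟨h', hk'⟩ := pell_partner (pstr f) hf i₀ h1 (by rw [pstr_get]; exact hk)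
    (by intro j hj; rw [pstr_get f j (by rw [pstr_length]; omega)]; exact hmin j hj)
  rw [pstr_length] at h'
  refine ⟨h', ?_⟩
  rw [pstr_get f (i₀+1) (by rw [pstr_length]; omega)] at hk'
  exact hk'

lemma pvalid_all_k_even {f : Fin n → Fin (k+1)} (hf : pvalid f)
    (hall : ∀ i, (f i : ℕ) = k) : Even n := by
  apply pell_replicate (k := k) n
  have : pstr f = List.replicate n k := by
    apply List.ext_getElem (by simp [pstr_length])
    intro j hj hj2
    rw [pstr_get f j hj]
    simp [hall]
  have hf' : isPellStr k (pstr f) = true := hf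
  rwa [this] at hf'

lemma pvalid_subst {f g : Fin n → Fin (k+1)} (hk : 1 ≤ k) (i₀ : ℕ) (hi : i₀ + 1 < n)
    (hsame : ∀ j (hj : j < n), j ≠ i₀ → j ≠ i₀ + 1 → (g ⟨j, hj⟩ : ℕ) = (f ⟨j, hj⟩ : ℕ))
    (hpre : ∀ j (hj : j < i₀), (f ⟨j, by omega⟩ : ℕ) < k)
    (h0 : (f ⟨i₀, by omega⟩ : ℕ) = k) (h1 : (f ⟨i₀+1, hi⟩ : ℕ) = k)
    (h0' : (g ⟨i₀, by omega⟩ : ℕ) = k - 1) (h1' : (g ⟨i₀+1, hi⟩ : ℕ) = k - 1)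
    (hf : pvalid f) : pvalid g := by
  apply pell_subst i₀ (pstr f) (pstr g) (by simp [pstr_length]) hk
    (by rw [pstr_length]; omega)
  · intro j hj hj1 hj2
    rw [pstr_get, pstr_get]
    exact hsame j (by rw [pstr_length] at hj; omega) hj1 hj2
  · intro j hj
    rw [pstr_get]
    exact hpre j hj
  · rw [pstr_get]; exact h0
  · rw [pstr_get]; exact h1
  · rw [pstr_get]; exact h0'
  · rw [pstr_get]; exact h1'
  · exact hf

lemma pvalid_of_parity {f : Fin n → Fin (k+1)} (hk : 0 < k)
    (H : ∀ i (h : i < n), (f ⟨i, h⟩ : ℕ) = k →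
      (Even i → ∃ h' : i + 1 < n, (f ⟨i+1, h'⟩ : ℕ) = k) ∧
      (¬ Even i → 1 ≤ i ∧ (f ⟨i-1, by omega⟩ : ℕ) = k)) : pvalid f := by
  apply pell_of_parity (pstr f).length (pstr f) le_rfl 0 hk
  · intro j hj
    rw [pstr_get]
    omega
  · intro i h hik
    rw [pstr_get] at hik
    have h' : i < n := by rw [pstr_length] at h; omega
    constructor
    · intro hev
      rw [Nat.add_zero] at hev
      obtain ⟨h2, hk2⟩ := (H i h' hik).1 hev
      refine ⟨by rw [pstr_length]; omega, ?_⟩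
      rw [pstr_get]
      exact hk2
    · intro hodd
      rw [Nat.add_zero] at hodd
      obtain ⟨h2, hk2⟩ := (H i h' hik).2 hodd
      refine ⟨h2, ?_⟩
      rw [pstr_get]
      exact hk2

/-! ## sum helpers -/

lemma sum_swap_one {φ : Fin n → ℕ → ℕ} {f g : Fin n → Fin (k+1)} (j : Fin n)
    (h : ∀ i, i ≠ j → f i = g i) :
    (∑ i, φ i (f i : ℕ)) + φ j (g j : ℕ) = (∑ i, φ i (g i : ℕ)) + φ j (f j : ℕ) := by
  have e1 := Finset.sum_erase_add Finset.univ (fun i => φ i (f i : ℕ)) (Finset.mem_univ j)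
  have e2 := Finset.sum_erase_add Finset.univ (fun i => φ i (g i : ℕ)) (Finset.mem_univ j)
  have e3 : ∑ i ∈ Finset.univ.erase j, φ i (f i : ℕ) = ∑ i ∈ Finset.univ.erase j, φ i (g i : ℕ) :=
    Finset.sum_congr rfl fun i hi => by rw [h i (Finset.ne_of_mem_erase hi)]
  omega

lemma sum_swap_two {φ : Fin n → ℕ → ℕ} {f g : Fin n → Fin (k+1)} (j j' : Fin n) (hjj : j ≠ j')
    (h : ∀ i, i ≠ j → i ≠ j' → f i = g i) :
    (∑ i, φ i (f i : ℕ)) + φ j (g j : ℕ) + φ j' (g j' : ℕ)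
      = (∑ i, φ i (g i : ℕ)) + φ j (f j : ℕ) + φ j' (f j' : ℕ) := by
  have hj'm : j' ∈ Finset.univ.erase j := Finset.mem_erase.mpr ⟨hjj.symm, Finset.mem_univ _⟩
  have e1 := Finset.sum_erase_add Finset.univ (fun i => φ i (f i : ℕ)) (Finset.mem_univ j)
  have e2 := Finset.sum_erase_add Finset.univ (fun i => φ i (g i : ℕ)) (Finset.mem_univ j)
  have e1' := Finset.sum_erase_add (Finset.univ.erase j) (fun i => φ i (f i : ℕ)) hj'm
  have e2' := Finset.sum_erase_add (Finset.univ.erase j) (fun i => φ i (g i : ℕ)) hj'm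
  have e3 : ∑ i ∈ (Finset.univ.erase j).erase j', φ i (f i : ℕ)
      = ∑ i ∈ (Finset.univ.erase j).erase j', φ i (g i : ℕ) := by
    apply Finset.sum_congr rfl
    intro i hi
    rw [h i (Finset.ne_of_mem_erase (Finset.mem_of_mem_erase hi)) (Finset.ne_of_mem_erase hi)]
  omega

/-! ## Upper bound: walks from the center -/

def cost2 (k a : ℕ) : ℕ := if a = k then 2*k - 2*(k/2) - 1 else 2 * (Nat.dist a (k/2))

def D2 (f : Fin n → Fin (k+1)) : ℕ := ∑ i, cost2 k (f i : ℕ)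

def cfun (n k : ℕ) : Fin n → Fin (k+1) := fun _ => ⟨k/2, by omega⟩

lemma cfun_valid (hk : 1 ≤ k) : pvalid (cfun n k) :=
  pvalid_of_all_lt _ (fun _ => by simp [cfun]; omega)

def cV (n k : ℕ) (hk : 1 ≤ k) : PellVert n k := ⟨cfun n k, cfun_valid hk⟩

lemma graph_adj_iff (x y : PellVert n k) :
    (kPellGraph n k).Adj x y ↔ x ≠ y ∧ (pellAdj k x.1 y.1 ∨ pellAdj k y.1 x.1) := by
  rw [kPellGraph, SimpleGraph.fromRel_adj]

lemma D2_zero_eq_cfun (hk : 1 ≤ k) {f : Fin n → Fin (k+1)} (h : D2 f = 0) : f = cfun n k := by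
  funext i
  have hi : cost2 k (f i : ℕ) = 0 := by
    have := Finset.sum_eq_zero_iff.mp h i (Finset.mem_univ i)
    exact this
  unfold cost2 at hi
  by_cases hik : (f i : ℕ) = k
  · rw [if_pos hik] at hi
    omega
  · rw [if_neg hik] at hi
    simp only [Nat.dist] at hi
    apply Fin.ext
    simp only [cfun]
    omega

lemma exists_step (hk : 1 ≤ k) (v : PellVert n k) (hD : 0 < D2 v.1) :
    ∃ v' : PellVert n k, (kPellGraph n k).Adj v' v ∧ D2 v'.1 + 2 = D2 v.1 := by
  by_cases hA : ∃ i, (v.1 i : ℕ) < k ∧ (v.1 i : ℕ) ≠ k / 2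
  · obtain ⟨i, hik, him⟩ := hA
    set m := k / 2 with hm
    set b : ℕ := if m < (v.1 i : ℕ) then (v.1 i : ℕ) - 1 else (v.1 i : ℕ) + 1 with hb
    have hbk : b < k := by
      rw [hb]
      split <;> omega
    set g : Fin n → Fin (k+1) := Function.update v.1 i ⟨b, by omega⟩ with hg
    have hgi : (g i : ℕ) = b := by rw [hg]; simp
    have hgne : ∀ j, j ≠ i → g j = v.1 j := by
      intro j hj
      rw [hg, Function.update_of_ne hj]
    have hgval : pvalid g := by
      apply pvalid_congr (f := v.1) _ v.2
      intro j
      by_cases hji : j = i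
      · subst hji
        constructor
        · intro h; omega
        · intro h; rw [hgi] at h; omega
      · rw [hgne j hji]
    refine ⟨⟨g, hgval⟩, ?_, ?_⟩
    · rw [graph_adj_iff]
      constructor
      · intro hc
        have hc' : g = v.1 := congrArg Subtype.val hc
        have hgv : (g i : ℕ) = (v.1 i : ℕ) := by rw [hc']
        rw [hgi, hb] at hgv
        split at hgv <;> omega
      · by_cases hcase : m < (v.1 i : ℕ)
        · left; left
          refine ⟨i, ?_, ?_, ?_⟩
          · rw [hgi, hb, if_pos hcase]; omega
          · rw [hgi, hb, if_pos hcase]; omega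
          · intro j hj; exact (hgne j hj)
        · right; left
          refine ⟨i, ?_, ?_, ?_⟩
          · rw [hgi, hb, if_neg hcase]
          · omega
          · intro j hj; exact (hgne j hj).symm
    · show D2 g + 2 = D2 v.1
      have hswap := sum_swap_one (φ := fun _ a => cost2 k a) (f := g) (g := v.1) i
        (fun j hj => hgne j hj)
      have hc1 : cost2 k (g i : ℕ) + 2 = cost2 k (v.1 i : ℕ) := by
        rw [hgi]
        unfold cost2
        rw [if_neg (by omega), if_neg (by omega), hb]
        simp only [Nat.dist]
        split <;> omega
      unfold D2
      omega
  · push_neg at hA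
    have hex : ∃ i : Fin n, (v.1 i : ℕ) = k := by
      by_contra hno
      push_neg at hno
      have : D2 v.1 = 0 := by
        apply Finset.sum_eq_zero
        intro i _
        have h1 : (v.1 i : ℕ) < k := lt_of_le_of_ne (by omega) (hno i)
        have h2 : (v.1 i : ℕ) = k / 2 := hA i h1
        unfold cost2
        rw [if_neg (by omega), h2]
        simp [Nat.dist]
      omega
    obtain ⟨iw, hiw⟩ := hex
    have hPex : ∃ j : ℕ, ∃ hj : j < n, (v.1 ⟨j, hj⟩ : ℕ) = k := ⟨iw, iw.2, by simpa using hiw⟩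
    classical
    set i₀ := Nat.find hPex with hi₀def
    obtain ⟨hi₀n, hi₀k⟩ := Nat.find_spec hPex
    have hmin : ∀ j (hj : j < i₀), (v.1 ⟨j, by omega⟩ : ℕ) ≠ k := by
      intro j hj hjk
      exact Nat.find_min hPex hj ⟨by omega, hjk⟩
    obtain ⟨hsucc, hsk⟩ := pvalid_partner v.2 i₀ hi₀n hi₀k hmin
    set ii : Fin n := ⟨i₀, hi₀n⟩ with hii
    set ii' : Fin n := ⟨i₀ + 1, hsucc⟩ with hii'
    have hne : ii ≠ ii' := by rw [hii, hii']; intro hc; simp at hc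
    set g : Fin n → Fin (k+1) :=
      Function.update (Function.update v.1 ii ⟨k-1, by omega⟩) ii' ⟨k-1, by omega⟩ with hg
    have hgii : (g ii : ℕ) = k - 1 := by rw [hg]; rw [Function.update_of_ne hne]; simp
    have hgii' : (g ii' : ℕ) = k - 1 := by rw [hg]; simp
    have hgne : ∀ j, j ≠ ii → j ≠ ii' → g j = v.1 j := by
      intro j h1 h2
      rw [hg, Function.update_of_ne h2, Function.update_of_ne h1]
    have hgval : pvalid g := by
      apply pvalid_subst hk i₀ hsucc _ _ (by simpa using hi₀k) (by simpa using hsk)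
        (by simpa using hgii) (by simpa using hgii') v.2
      · intro j hj hj1 hj2
        have : (⟨j, hj⟩ : Fin n) ≠ ii := by rw [hii]; intro hc; simp at hc; omega
        have h2 : (⟨j, hj⟩ : Fin n) ≠ ii' := by rw [hii']; intro hc; simp at hc; omega
        rw [hgne _ this h2]
      · intro j hj
        have := hmin j hj
        omega
    refine ⟨⟨g, hgval⟩, ?_, ?_⟩
    · rw [graph_adj_iff]
      constructor
      · intro hc
        have hc' : g = v.1 := congrArg Subtype.val hc
        have hgv : (g ii : ℕ) = (v.1 ii : ℕ) := by rw [hc']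
        rw [hgii] at hgv
        have hvk : (v.1 ii : ℕ) = k := hi₀k
        omega
      · left; right
        refine ⟨ii, ii', by rw [hii, hii'], hgii, hgii', hi₀k, hsk, fun j h1 h2 => hgne j h1 h2⟩
    · show D2 g + 2 = D2 v.1
      have hswap := sum_swap_two (φ := fun _ a => cost2 k a) (f := g) (g := v.1) ii ii' hne
        (fun j h1 h2 => hgne j h1 h2)
      have hc1 : cost2 k (g ii : ℕ) + 1 = cost2 k (v.1 ii : ℕ) := by
        rw [hgii, hi₀k]
        unfold cost2
        rw [if_neg (by omega), if_pos rfl]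
        simp only [Nat.dist]
        omega
      have hc2 : cost2 k (g ii' : ℕ) + 1 = cost2 k (v.1 ii' : ℕ) := by
        rw [hgii', hsk]
        unfold cost2
        rw [if_neg (by omega), if_pos rfl]
        simp only [Nat.dist]
        omega
      unfold D2
      omega

lemma exists_walk_from_center (hk : 1 ≤ k) :
    ∀ (N : ℕ) (v : PellVert n k), D2 v.1 ≤ N →
    ∃ W : (kPellGraph n k).Walk (cV n k hk) v, 2 * W.length ≤ D2 v.1 := by
  intro N
  induction N with
  | zero =>
    intro v hD
    have h0 : D2 v.1 = 0 := by omega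
    have : v = cV n k hk := by
      apply Subtype.ext
      exact D2_zero_eq_cfun hk h0
    subst this
    exact ⟨SimpleGraph.Walk.nil, by simp⟩
  | succ N ih =>
    intro v hD
    by_cases h0 : D2 v.1 = 0
    · have : v = cV n k hk := Subtype.ext (D2_zero_eq_cfun hk h0)
      subst this
      exact ⟨SimpleGraph.Walk.nil, by simp⟩
    · obtain ⟨v', hadj, hD'⟩ := exists_step hk v (by omega)
      obtain ⟨W', hW'⟩ := ih v' (by omega)
      refine ⟨W'.concat hadj, ?_⟩
      rw [SimpleGraph.Walk.length_concat]
      omega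

lemma D2_le (hk : 2 ≤ k) (v : PellVert n k) : D2 v.1 ≤ 2 * (k * n / 2) := by
  classical
  by_cases hke : k % 2 = 0
  · -- k even : every letter costs at most k
    have hbound : ∀ i : Fin n, cost2 k (v.1 i : ℕ) ≤ k := by
      intro i
      have hle : (v.1 i : ℕ) ≤ k := by omega
      unfold cost2
      split
      · omega
      · simp only [Nat.dist]
        omega
    have : D2 v.1 ≤ ∑ _i : Fin n, k := Finset.sum_le_sum fun i _ => hbound i
    simp only [Finset.sum_const, Finset.card_univ, Fintype.card_fin, smul_eq_mul] at this
    have hk2 : k = 2 * (k/2) := by omega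
    have h2 : k * n = 2 * ((k/2) * n) := by
      calc k * n = (2 * (k/2)) * n := by rw [← hk2]
        _ = 2 * ((k/2) * n) := by ring
    have hnk : n * k = k * n := Nat.mul_comm n k
    omega
  · -- k odd
    set K := (Finset.univ.filter (fun i : Fin n => (v.1 i : ℕ) = k)).card with hK
    have hbound : ∀ i : Fin n, cost2 k (v.1 i : ℕ) ≤ (k - 1) + (if (v.1 i : ℕ) = k then 1 else 0) := by
      intro i
      have hle : (v.1 i : ℕ) ≤ k := by omega
      unfold cost2
      by_cases hik : (v.1 i : ℕ) = k
      · rw [if_pos hik, if_pos hik]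
        omega
      · rw [if_neg hik, if_neg hik]
        simp only [Nat.dist]
        omega
    have hsum : D2 v.1 ≤ (k - 1) * n + K := by
      have h1 : D2 v.1 ≤ ∑ i : Fin n, ((k - 1) + (if (v.1 i : ℕ) = k then 1 else 0)) :=
        Finset.sum_le_sum fun i _ => hbound i
      rw [Finset.sum_add_distrib, Finset.sum_const, Finset.sum_boole] at h1
      simp only [Finset.card_univ, Fintype.card_fin, smul_eq_mul, Nat.cast_id] at h1
      have hc : n * (k-1) = (k-1) * n := Nat.mul_comm n (k-1)
      omega
    have hKn : K ≤ n := by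
      have := Finset.card_filter_le Finset.univ (fun i : Fin n => (v.1 i : ℕ) = k)
      simpa using this
    by_cases hne : n % 2 = 0
    · have h2 : 2 * (k * n / 2) = k * n := by
        have hn2 : n = 2 * (n/2) := by omega
        calc 2 * (k * n / 2) = 2 * (k * (2 * (n/2)) / 2) := by rw [← hn2]
          _ = 2 * (k * (n/2)) := by rw [show k * (2 * (n/2)) = (k * (n/2)) * 2 by ring]; simp
          _ = k * n := by rw [show 2 * (k * (n/2)) = k * (2 * (n/2)) by ring, ← hn2]
      have hsub : (k-1) * n = k * n - n := Nat.sub_one_mul k n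
      have hge : n ≤ k * n := Nat.le_mul_of_pos_left n (by omega)
      omega
    · -- n odd : K < n
      have hKlt : K < n := by
        rcases Nat.lt_or_ge K n with h | h
        · exact h
        · exfalso
          have hKeq : K = n := le_antisymm hKn h
          have hall : ∀ i : Fin n, (v.1 i : ℕ) = k := by
            have : (Finset.univ.filter (fun i : Fin n => (v.1 i : ℕ) = k)) = Finset.univ := by
              apply Finset.eq_univ_of_card
              rw [← hK, hKeq]
              simp
            intro i
            have := Finset.mem_filter.mp (this ▸ Finset.mem_univ i)
            exact this.2
          obtain ⟨r, hr⟩ := pvalid_all_k_even v.2 hall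
          omega
      have h2 : 2 * (k * n / 2) = k * n - 1 := by
        have hk1 : k % 2 = 1 := by omega
        have hn1 : n % 2 = 1 := by omega
        have hm : (k * n) % 2 = 1 := by rw [Nat.mul_mod, hk1, hn1]
        omega
      have hsub : (k-1) * n = k * n - n := Nat.sub_one_mul k n
      have hge : n ≤ k * n := Nat.le_mul_of_pos_left n (by omega)
      omega

/-! ## Lower bound: potential -/

def psi (k : ℕ) {n : ℕ} (vv : Fin n → Fin (k+1)) (i : Fin n) (a : ℕ) : ℕ :=
  if 2 * (vv i : ℕ) < k then (2*k - 1) - (if a = k then 2*k - 1 else 2*a) else 2 * min a (k-1)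

def Psi (k : ℕ) {n : ℕ} (vv : Fin n → Fin (k+1)) (f : Fin n → Fin (k+1)) : ℕ :=
  ∑ i, psi k vv i (f i : ℕ)

lemma psi_inc (vv : Fin n → Fin (k+1)) (i : Fin n) (a : ℕ) (h : a + 1 < k) :
    psi k vv i a ≤ psi k vv i (a+1) + 2 ∧ psi k vv i (a+1) ≤ psi k vv i a + 2 := by
  unfold psi
  split
  · rw [if_neg (by omega), if_neg (by omega)]
    omega
  · omega

lemma psi_kk (vv : Fin n → Fin (k+1)) (i : Fin n) (hk : 1 ≤ k) :
    psi k vv i (k-1) ≤ psi k vv i k + 1 ∧ psi k vv i k ≤ psi k vv i (k-1) + 1 := by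
  unfold psi
  split
  · rw [if_neg (by omega), if_pos rfl]
    omega
  · omega

lemma Psi_pellAdj (vv : Fin n → Fin (k+1)) (hk : 1 ≤ k) {f g : Fin n → Fin (k+1)}
    (h : pellAdj k f g) :
    Psi k vv f ≤ Psi k vv g + 2 ∧ Psi k vv g ≤ Psi k vv f + 2 := by
  rcases h with ⟨j, hgj, hlt, hoth⟩ | ⟨j, j', hjj', f0, f1, g0, g1, hoth⟩
  · have hswap := sum_swap_one (φ := psi k vv) (f := f) (g := g) j hoth
    have hinc := psi_inc vv j (f j : ℕ) hlt
    rw [← hgj] at hinc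
    unfold Psi
    omega
  · have hne : j ≠ j' := by
      intro hc
      rw [hc] at hjj'
      omega
    have hswap := sum_swap_two (φ := psi k vv) (f := f) (g := g) j j' hne hoth
    have h1 := psi_kk vv j hk
    have h2 := psi_kk vv j' hk
    have a1 : psi k vv j (f j : ℕ) = psi k vv j (k-1) := by rw [f0]
    have a2 : psi k vv j (g j : ℕ) = psi k vv j k := by rw [g0]
    have a3 : psi k vv j' (f j' : ℕ) = psi k vv j' (k-1) := by rw [f1]
    have a4 : psi k vv j' (g j' : ℕ) = psi k vv j' k := by rw [g1]
    unfold Psi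
    omega

lemma Psi_adj (vv : Fin n → Fin (k+1)) (hk : 1 ≤ k) {x y : PellVert n k}
    (h : (kPellGraph n k).Adj x y) :
    Psi k vv x.1 ≤ Psi k vv y.1 + 2 ∧ Psi k vv y.1 ≤ Psi k vv x.1 + 2 := by
  rw [graph_adj_iff] at h
  rcases h.2 with h' | h'
  · exact Psi_pellAdj vv hk h'
  · exact (Psi_pellAdj vv hk h').symm

lemma Psi_walk (vv : Fin n → Fin (k+1)) (hk : 1 ≤ k) {x y : PellVert n k}
    (W : (kPellGraph n k).Walk x y) :
    Psi k vv x.1 ≤ Psi k vv y.1 + 2 * W.length := by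
  induction W with
  | nil => simp
  | cons hadj p ih =>
    have := (Psi_adj vv hk hadj).1
    rw [SimpleGraph.Walk.length_cons]
    omega

/-! ## The far vertex -/

def upb (v : Fin n → Fin (k+1)) (j : ℕ) : Bool :=
  if hj : j < n then decide (2 * (v ⟨j, hj⟩ : ℕ) < k) else false

def pcb (v : Fin n → Fin (k+1)) (j : ℕ) : Bool :=
  (decide (Even j) && upb v (j+1)) || (!decide (Even j) && upb v (j-1))

def ufun (v : Fin n → Fin (k+1)) : Fin n → Fin (k+1) := fun i =>
  if upb v (i : ℕ) then (if pcb v (i : ℕ) then ⟨k, by omega⟩ else ⟨k-1, by omega⟩)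
  else ⟨0, by omega⟩

lemma upb_coe (v : Fin n → Fin (k+1)) (i : Fin n) :
    upb v (i : ℕ) = decide (2 * (v i : ℕ) < k) := by
  unfold upb
  rw [dif_pos i.isLt]

lemma upb_lt {v : Fin n → Fin (k+1)} {j : ℕ} (h : upb v j = true) : j < n := by
  unfold upb at h
  by_contra hc
  rw [dif_neg hc] at h
  simp at h

lemma upb_val {v : Fin n → Fin (k+1)} {j : ℕ} (h : upb v j = true) :
    ∃ hj : j < n, 2 * (v ⟨j, hj⟩ : ℕ) < k := by
  have hj := upb_lt h
  refine ⟨hj, ?_⟩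
  unfold upb at h
  rw [dif_pos hj] at h
  simpa using h

lemma ufun_val_k {v : Fin n → Fin (k+1)} (hk : 2 ≤ k) {i : Fin n}
    (h : (ufun v i : ℕ) = k) : upb v (i : ℕ) = true ∧ pcb v (i : ℕ) = true := by
  unfold ufun at h
  by_cases h1 : upb v (i : ℕ) = true
  · rw [if_pos h1] at h
    by_cases h2 : pcb v (i : ℕ) = true
    · exact ⟨h1, h2⟩
    · rw [if_neg h2] at h
      simp at h
      omega
  · rw [if_neg h1] at h
    simp at h
    omega

lemma ufun_valid (hk : 2 ≤ k) (v : Fin n → Fin (k+1)) : pvalid (ufun v) := by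
  apply pvalid_of_parity (by omega)
  intro i h hik
  obtain ⟨hup, hpc⟩ := ufun_val_k hk (i := ⟨i, h⟩) hik
  simp only [Fin.val_mk] at hup hpc
  constructor
  · intro hev
    unfold pcb at hpc
    rw [Bool.or_eq_true, Bool.and_eq_true, Bool.and_eq_true] at hpc
    have hup1 : upb v (i+1) = true := by
      rcases hpc with ⟨_, h2⟩ | ⟨h1, _⟩
      · exact h2
      · rw [Bool.not_eq_true'] at h1
        simp only [decide_eq_false_iff_not] at h1
        exact absurd hev h1
    have hlt1 : i + 1 < n := upb_lt hup1
    refine ⟨hlt1, ?_⟩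
    unfold ufun
    simp only [Fin.val_mk]
    rw [if_pos hup1]
    have hpc1 : pcb v (i+1) = true := by
      unfold pcb
      rw [Bool.or_eq_true, Bool.and_eq_true, Bool.and_eq_true]
      right
      constructor
      · simp [Nat.even_add_one, hev]
      · simpa using hup
    rw [if_pos hpc1]
  · intro hodd
    unfold pcb at hpc
    rw [Bool.or_eq_true, Bool.and_eq_true, Bool.and_eq_true] at hpc
    have hup1 : upb v (i-1) = true := by
      rcases hpc with ⟨h1, _⟩ | ⟨_, h2⟩
      · simp only [decide_eq_true_eq] at h1
        exact absurd h1 hodd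
      · exact h2
    have hi1 : 1 ≤ i := by
      rcases Nat.eq_zero_or_pos i with h0 | h0
      · exact absurd (by simp [h0]) hodd
      · omega
    refine ⟨hi1, ?_⟩
    unfold ufun
    simp only [Fin.val_mk]
    rw [if_pos hup1]
    have hpc1 : pcb v (i-1) = true := by
      unfold pcb
      rw [Bool.or_eq_true, Bool.and_eq_true, Bool.and_eq_true]
      left
      constructor
      · have : Even (i - 1) := by
          rcases Nat.odd_iff.mp (Nat.not_even_iff_odd.mp hodd) with h1
          have := Nat.even_iff.mpr (by omega : (i-1) % 2 = 0)
          exact this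
        simpa using this
      · rw [show i - 1 + 1 = i by omega]
        exact hup
    rw [if_pos hpc1]

lemma Psi_ufun (hk : 2 ≤ k) (v : Fin n → Fin (k+1)) :
    Psi k v (ufun v)
      = (Finset.univ.filter (fun i : Fin n => upb v (i : ℕ) = true ∧ pcb v (i : ℕ) = false)).card := by
  unfold Psi
  have hcong : ∀ i : Fin n, psi k v i (ufun v i : ℕ)
      = if (upb v (i : ℕ) = true ∧ pcb v (i : ℕ) = false) then 1 else 0 := by
    intro i
    by_cases h1 : upb v (i : ℕ) = true
    · have hupv : 2 * (v i : ℕ) < k := by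
        have := upb_coe v i
        rw [h1] at this
        simpa using this.symm
      by_cases h2 : pcb v (i : ℕ) = true
      · have hv : (ufun v i : ℕ) = k := by unfold ufun; rw [if_pos h1, if_pos h2]
        rw [hv]
        unfold psi
        rw [if_pos hupv, if_pos rfl, if_neg (fun hcc => by simp [hcc.2] at h2)]
        omega
      · have hv : (ufun v i : ℕ) = k - 1 := by unfold ufun; rw [if_pos h1, if_neg h2]
        rw [hv]
        unfold psi
        rw [if_pos hupv, if_neg (by omega : ¬ (k - 1 = k)),
          if_pos ⟨h1, by rw [Bool.not_eq_true] at h2; exact h2⟩]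
        omega
    · have hupv : ¬ (2 * (v i : ℕ) < k) := by
        have := upb_coe v i
        rw [Bool.not_eq_true] at h1
        rw [h1] at this
        simpa using this.symm
      have hv : (ufun v i : ℕ) = 0 := by unfold ufun; rw [if_neg h1]
      rw [hv]
      unfold psi
      rw [if_neg hupv, if_neg (fun hcc => h1 hcc.1)]
      simp
  rw [Finset.sum_congr rfl (fun i _ => hcong i)]
  rw [Finset.sum_boole]
  simp

lemma Psi_self_ge (hk : 2 ≤ k) (v : Fin n → Fin (k+1)) (hval : pvalid v) :
    (k % 2 = 0 → Psi k v v ≥ k * n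
        + (Finset.univ.filter (fun i : Fin n => 2 * (v i : ℕ) < k)).card) ∧
    (k % 2 = 1 → Psi k v v ≥ k * n
        + (Finset.univ.filter (fun i : Fin n => ¬ (2 * (v i : ℕ) < k))).card) := by
  constructor
  · intro hke
    have hpoint : ∀ i : Fin n, k + (if 2 * (v i : ℕ) < k then 1 else 0) ≤ psi k v i (v i : ℕ) := by
      intro i
      have hle : (v i : ℕ) ≤ k := by omega
      unfold psi
      by_cases hup : 2 * (v i : ℕ) < k
      · rw [if_pos hup, if_pos hup, if_neg (by omega)]
        omega
      · rw [if_neg hup, if_neg hup]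
        omega
    have := Finset.sum_le_sum (fun i (_ : i ∈ Finset.univ) => hpoint i)
    unfold Psi
    rw [Finset.sum_add_distrib, Finset.sum_const, Finset.sum_boole] at this
    simp only [Finset.card_univ, Fintype.card_fin, smul_eq_mul, Nat.cast_id] at this
    have hc : n * k = k * n := Nat.mul_comm n k
    omega
  · intro hke
    have hpoint : ∀ i : Fin n, k + (if ¬ (2 * (v i : ℕ) < k) then 1 else 0) ≤ psi k v i (v i : ℕ) := by
      intro i
      have hle : (v i : ℕ) ≤ k := by omega
      unfold psi
      by_cases hup : 2 * (v i : ℕ) < k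
      · rw [if_pos hup, if_neg (by omega), if_neg (by omega)]
        omega
      · rw [if_neg hup, if_pos hup]
        omega
    have := Finset.sum_le_sum (fun i (_ : i ∈ Finset.univ) => hpoint i)
    unfold Psi
    rw [Finset.sum_add_distrib, Finset.sum_const, Finset.sum_boole] at this
    simp only [Finset.card_univ, Fintype.card_fin, smul_eq_mul, Nat.cast_id] at this
    have hc : n * k = k * n := Nat.mul_comm n k
    omega

lemma singles_le_up (v : Fin n → Fin (k+1)) :
    (Finset.univ.filter (fun i : Fin n => upb v (i : ℕ) = true ∧ pcb v (i : ℕ) = false)).card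
      ≤ (Finset.univ.filter (fun i : Fin n => 2 * (v i : ℕ) < k)).card := by
  apply Finset.card_le_card
  intro i hi
  rw [Finset.mem_filter] at hi ⊢
  refine ⟨hi.1, ?_⟩
  have := hi.2.1
  rw [upb_coe] at this
  simpa using this

lemma singles_le_down (v : Fin n → Fin (k+1)) :
    (Finset.univ.filter (fun i : Fin n => upb v (i : ℕ) = true ∧ pcb v (i : ℕ) = false)).card
      ≤ (Finset.univ.filter (fun i : Fin n => ¬ (2 * (v i : ℕ) < k))).card + 1 := by
  classical
  set S := Finset.univ.filter (fun i : Fin n => upb v (i : ℕ) = true ∧ pcb v (i : ℕ) = false) with hS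
  set Dw := Finset.univ.filter (fun i : Fin n => ¬ (2 * (v i : ℕ) < k)) with hD
  set T : Finset ℕ := Dw.image (fun i : Fin n => (i : ℕ)) ∪ {n} with hT
  have hmap : ∀ i ∈ S, (if Even (i : ℕ) then (i : ℕ) + 1 else (i : ℕ) - 1) ∈ T := by
    intro i hi
    rw [hS, Finset.mem_filter] at hi
    obtain ⟨_, hup, hpc⟩ := hi
    unfold pcb at hpc
    rw [Bool.or_eq_false_iff, Bool.and_eq_false_iff, Bool.and_eq_false_iff] at hpc
    by_cases hev : Even (i : ℕ)
    · rw [if_pos hev]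
      have hup1 : upb v ((i : ℕ) + 1) = false := by
        rcases hpc.1 with h | h
        · simp [hev] at h
        · exact h
      by_cases hin : (i : ℕ) + 1 < n
      · rw [hT, Finset.mem_union]
        left
        rw [Finset.mem_image]
        refine ⟨⟨(i : ℕ) + 1, hin⟩, ?_, rfl⟩
        rw [hD, Finset.mem_filter]
        refine ⟨Finset.mem_univ _, ?_⟩
        intro hc
        unfold upb at hup1
        rw [dif_pos hin] at hup1
        simp [hc] at hup1
      · have : (i : ℕ) + 1 = n := by have := i.isLt; omega
        rw [hT, Finset.mem_union]
        right
        simp [this]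
    · rw [if_neg hev]
      have hup1 : upb v ((i : ℕ) - 1) = false := by
        rcases hpc.2 with h | h
        · simp [hev] at h
        · exact h
      have hin : (i : ℕ) - 1 < n := by have := i.isLt; omega
      rw [hT, Finset.mem_union]
      left
      rw [Finset.mem_image]
      refine ⟨⟨(i : ℕ) - 1, hin⟩, ?_, rfl⟩
      rw [hD, Finset.mem_filter]
      refine ⟨Finset.mem_univ _, ?_⟩
      intro hc
      unfold upb at hup1
      rw [dif_pos hin] at hup1
      simp [hc] at hup1
  have hinj : ∀ i ∈ S, ∀ j ∈ S,
      (if Even (i : ℕ) then (i : ℕ) + 1 else (i : ℕ) - 1)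
        = (if Even (j : ℕ) then (j : ℕ) + 1 else (j : ℕ) - 1) → i = j := by
    intro i _ j _ hij
    have hi2 := Nat.even_or_odd (i : ℕ)
    have hj2 := Nat.even_or_odd (j : ℕ)
    apply Fin.ext
    rcases hi2 with hie | hio <;> rcases hj2 with hje | hjo
    · rw [if_pos hie, if_pos hje] at hij; omega
    · rw [if_pos hie, if_neg (Nat.not_even_iff_odd.mpr hjo)] at hij
      obtain ⟨a, ha⟩ := hie
      obtain ⟨b, hb⟩ := hjo
      omega
    · rw [if_neg (Nat.not_even_iff_odd.mpr hio), if_pos hje] at hij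
      obtain ⟨a, ha⟩ := hio
      obtain ⟨b, hb⟩ := hje
      omega
    · rw [if_neg (Nat.not_even_iff_odd.mpr hio), if_neg (Nat.not_even_iff_odd.mpr hjo)] at hij
      obtain ⟨a, ha⟩ := hio
      obtain ⟨b, hb⟩ := hjo
      omega
  have hcard : S.card ≤ T.card := Finset.card_le_card_of_injOn _ hmap hinj
  have hTcard : T.card ≤ Dw.card + 1 := by
    calc T.card ≤ (Dw.image (fun i : Fin n => (i : ℕ))).card + ({n} : Finset ℕ).card :=
          Finset.card_union_le _ _
      _ ≤ Dw.card + 1 := by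
          have := Finset.card_image_le (s := Dw) (f := fun i : Fin n => (i : ℕ))
          simp only [Finset.card_singleton]
          omega
  omega

/-! ## Eccentricity and radius -/


lemma ecc_lower (hk : 2 ≤ k) (v : PellVert n k) : k * n / 2 ≤ pellEcc v := by
  have hk1 : 1 ≤ k := by omega
  set u : PellVert n k := ⟨ufun v.1, ufun_valid hk v.1⟩ with hu
  obtain ⟨W1, _⟩ := exists_walk_from_center (n := n) hk1 (D2 v.1) v le_rfl
  obtain ⟨W2, _⟩ := exists_walk_from_center (n := n) hk1 (D2 u.1) u le_rfl
  have hreach : (kPellGraph n k).Reachable v u := SimpleGraph.Walk.reachable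
    (W1.reverse.append W2)
  obtain ⟨P, hP⟩ := hreach.exists_walk_length_eq_dist
  have hkey := Psi_walk v.1 hk1 P
  have hPsiu : Psi k v.1 u.1 = (Finset.univ.filter
      (fun i : Fin n => upb v.1 (i : ℕ) = true ∧ pcb v.1 (i : ℕ) = false)).card :=
    Psi_ufun hk v.1
  have hself := Psi_self_ge hk v.1 v.2
  have hsu := singles_le_up (k := k) v.1
  have hsd := singles_le_down (k := k) v.1
  have hdist : k * n / 2 ≤ (kPellGraph n k).dist v u := by
    rcases Nat.even_or_odd k with hke | hko
    · have hke' : k % 2 = 0 := Nat.even_iff.mp hke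
      have h1 := hself.1 hke'
      rw [hP] at hkey
      omega
    · have hko' : k % 2 = 1 := Nat.odd_iff.mp hko
      have h1 := hself.2 hko'
      rw [hP] at hkey
      omega
  calc k * n / 2 ≤ (kPellGraph n k).dist v u := hdist
    _ ≤ pellEcc v := Finset.le_sup (Finset.mem_univ u)

theorem kPellGraph_radius (n k : ℕ) (hn : 1 ≤ n) (hk : 2 ≤ k) :
    pellRadius n k = k * n / 2 := by
  have hk1 : 1 ≤ k := by omega
  have hup : pellEcc (cV n k hk1) ≤ k * n / 2 := by
    apply Finset.sup_le
    intro u _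
    obtain ⟨W, hW⟩ := exists_walk_from_center (n := n) hk1 (D2 u.1) u le_rfl
    have hd := SimpleGraph.dist_le W
    have hD := D2_le hk u
    omega
  have h1 : pellRadius n k ≤ k * n / 2 :=
    le_trans (Nat.sInf_le ⟨cV n k hk1, rfl⟩) hup
  have h2 : k * n / 2 ≤ pellRadius n k := by
    have hne : (Set.range (pellEcc (n := n) (k := k))).Nonempty :=
      ⟨pellEcc (cV n k hk1), ⟨cV n k hk1, rfl⟩⟩
    apply le_csInf hne
    rintro b ⟨v, rfl⟩
    exact ecc_lower hk v
  omega
end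

section
/- For n odd, the number of binary strings of length n over {a,b} that start and end with a, contain no factor bb, and in which every maximal run of a's has odd length, equals 2^{(n-1)/2}. -/
namespace OddRunAux

def Good (a b : ℕ) (l : List ℕ) : Prop :=
  (∀ x ∈ l, x = a ∨ x = b) ∧ l.head? = some a ∧ l.getLast? = some a ∧
  ¬ ([b, b] <:+: l) ∧
  ∀ (p q : List ℕ) (m : ℕ), 0 < m → l = p ++ List.replicate m a ++ q →
    p.getLast? ≠ some a → q.head? ≠ some a → Odd m

lemma good_single (a b : ℕ) : Good a b [a] := by
  refine ⟨by simp, by simp, by simp, ?_, ?_⟩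
  · intro h; have := h.length_le; simp at this
  · intro p q m hm hl _ _
    have := congrArg List.length hl
    simp at this
    have hm1 : m = 1 := by omega
    simp [hm1]

lemma good_cons_iff (a b : ℕ) (hab : a ≠ b) (c : ℕ) (w : List ℕ) :
    Good a b (a :: c :: w) ↔ ((c = a ∨ c = b) ∧ Good a b w) := by
  constructor
  · rintro ⟨hmem, -, hlast, hbb, hrun⟩
    have hc : c = a ∨ c = b := hmem c (by simp)
    have hw : w ≠ [] := by
      rintro rfl
      rcases hc with hc' | hc'
      · subst c
        have := hrun [] [] 2 (by norm_num) (by rfl) (by simp) (by simp)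
        simp [Nat.odd_iff] at this
      · subst c
        simp at hlast; exact hab hlast.symm
    rcases w with _ | ⟨z, w'⟩
    · exact absurd rfl hw
    have hz : z = a := by
      rcases hmem z (by simp) with h | h
      · exact h
      subst z
      rcases hc with hc' | hc'
      · subst c
        have := hrun [] (b :: w') 2 (by norm_num) (by rfl)
          (by simp) (by simp [Ne.symm hab])
        simp [Nat.odd_iff] at this
      · subst c
        exact absurd (show [b, b] <:+: a :: b :: b :: w' from ⟨[a], w', by simp⟩) hbb
    subst z
    refine ⟨hc, fun x hx =>
        hmem x (List.mem_cons_of_mem _ (List.mem_cons_of_mem _ hx)), rfl, ?_, ?_, ?_⟩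
    · rwa [List.getLast?_cons_cons, List.getLast?_cons_cons] at hlast
    · intro h
      exact hbb (h.trans ((List.suffix_append [a, c] (a :: w')).isInfix))
    · intro p q m hm hl hp hq
      rcases hc with hc' | hc'
      · subst c
        rcases p with _ | ⟨x, p'⟩
        · simp only [List.nil_append] at hl
          have h2 := hrun [] q (m + 2) (by omega)
            (by simp [List.replicate_succ, hl]) (by simp) hq
          rcases h2 with ⟨t, ht⟩
          exact ⟨t - 1, by omega⟩
        · exact hrun (a :: a :: x :: p') q m hm (by simp [hl])
            (by rw [List.getLast?_cons_cons, List.getLast?_cons_cons]; exact hp) hq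
      · subst c
        exact hrun (a :: b :: p) q m hm (by simp [hl])
          (by
            rcases p with _ | ⟨x, p'⟩
            · simp [Ne.symm hab]
            · rw [List.getLast?_cons_cons, List.getLast?_cons_cons]; exact hp) hq
  · rintro ⟨hc, hmem, hhead, hlast, hbb, hrun⟩
    rcases w with _ | ⟨z, w'⟩
    · simp at hhead
    have hz : z = a := by simpa using hhead
    subst z
    refine ⟨?_, rfl, ?_, ?_, ?_⟩
    · intro x hx
      rcases List.mem_cons.mp hx with rfl | hx
      · exact Or.inl rfl
      rcases List.mem_cons.mp hx with rfl | hx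
      · exact hc
      · exact hmem x hx
    · rwa [List.getLast?_cons_cons, List.getLast?_cons_cons]
    · intro h
      rcases List.infix_cons_iff.mp h with hpre | h2
      · rcases hpre with ⟨t, ht⟩
        simp at ht
        exact hab ht.1.symm
      rcases List.infix_cons_iff.mp h2 with hpre | h3
      · rcases hpre with ⟨t, ht⟩
        simp at ht
        exact hab ht.2.1.symm
      · exact hbb h3
    · intro p q m hm hl hp hq
      rcases p with _ | ⟨x, _ | ⟨y, p'⟩⟩
      · simp only [List.nil_append] at hl
        rcases hc with hc' | hc'
        · subst c
          rcases m with _ | _ | n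
          · omega
          · simp only [List.replicate_succ, List.replicate_zero, List.nil_append,
              List.cons_append, List.cons.injEq] at hl
            rw [← hl.2] at hq
            simp at hq
          · simp only [List.replicate_succ, List.cons_append, List.cons.injEq] at hl
            have h3 := hl.2.2
            rcases Nat.eq_zero_or_pos n with rfl | hpos
            · simp only [List.replicate_zero, List.nil_append] at h3
              rw [← h3] at hq
              simp at hq
            · have h2 := hrun [] q n hpos (by simpa using h3) (by simp) hq
              rcases h2 with ⟨t, ht⟩
              exact ⟨t + 1, by omega⟩
        · subst c
          rcases m with _ | _ | n
          · omega
          · exact odd_one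
          · simp only [List.replicate_succ, List.cons_append, List.cons.injEq] at hl
            exact absurd hl.2.1.symm hab
      · simp only [List.cons_append, List.nil_append, List.cons.injEq] at hl
        exact absurd (show ([x].getLast? = some a) by simp [hl.1]) hp
      · simp only [List.cons_append, List.cons.injEq] at hl
        refine hrun p' q m hm hl.2.2 ?_ hq
        rcases p' with _ | ⟨u, p''⟩
        · simp
        · rw [List.getLast?_cons_cons, List.getLast?_cons_cons] at hp
          exact hp

def enc (a b : ℕ) : List Bool → List ℕ
  | [] => [a]
  | c :: t => a :: (if c then a else b) :: enc a b t

lemma enc_length (a b : ℕ) : ∀ L : List Bool, (enc a b L).length = 2 * L.length + 1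
  | [] => rfl
  | c :: t => by
    show (a :: (if c then a else b) :: enc a b t).length = 2 * (c :: t).length + 1
    simp only [List.length_cons, enc_length a b t]
    omega

lemma enc_good (a b : ℕ) (hab : a ≠ b) : ∀ L, Good a b (enc a b L)
  | [] => good_single a b
  | c :: t => by
    show Good a b (a :: (if c then a else b) :: enc a b t)
    exact (good_cons_iff a b hab _ _).mpr ⟨by cases c <;> simp, enc_good a b hab t⟩

lemma enc_injective (a b : ℕ) (hab : a ≠ b) : Function.Injective (enc a b) := by
  intro L1
  induction L1 with
  | nil =>
    intro L2 h
    cases L2 with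
    | nil => rfl
    | cons c t => simp [enc] at h
  | cons c t ih =>
    intro L2 h
    cases L2 with
    | nil => simp [enc] at h
    | cons c' t' =>
      simp only [enc, List.cons.injEq, true_and] at h
      obtain ⟨h1, h2⟩ := h
      have hcc : c = c' := by
        cases c <;> cases c' <;> simp_all
      subst hcc
      rw [ih h2]

lemma good_surj (a b : ℕ) (hab : a ≠ b) :
    ∀ k (w : List ℕ), w.length = 2 * k + 1 → Good a b w →
      ∃ L : List Bool, L.length = k ∧ enc a b L = w := by
  intro k
  induction k with
  | zero =>
    intro w hlen hg
    rcases w with _ | ⟨x, _ | ⟨y, w'⟩⟩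
    · simp only [List.length_nil] at hlen; omega
    · have hx : x = a := by simpa using hg.2.1
      subst x
      exact ⟨[], rfl, rfl⟩
    · simp only [List.length_cons] at hlen; omega
  | succ k ih =>
    intro w hlen hg
    rcases w with _ | ⟨x, _ | ⟨c, w'⟩⟩
    · simp only [List.length_nil] at hlen; omega
    · simp only [List.length_cons, List.length_nil] at hlen; omega
    · simp only [List.length_cons] at hlen
      have hx : x = a := by simpa using hg.2.1
      subst x
      obtain ⟨hc, hg'⟩ := (good_cons_iff a b hab c w').mp hg
      obtain ⟨L, hL, hE⟩ := ih w' (by omega) hg'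
      rcases hc with hc' | hc'
      · subst c
        exact ⟨true :: L, by simp [hL], by simp [enc, hE]⟩
      · subst c
        exact ⟨false :: L, by simp [hL], by simp [enc, hE]⟩

end OddRunAux

open OddRunAux in
theorem count_odd_run_words (a b : ℕ) (hab : a ≠ b) (n : ℕ) (hn : Odd n) :
    Nat.card {l : List ℕ // l.length = n ∧ (∀ x ∈ l, x = a ∨ x = b) ∧
        l.head? = some a ∧ l.getLast? = some a ∧ ¬ ([b, b] <:+: l) ∧
        ∀ (p q : List ℕ) (m : ℕ), 0 < m → l = p ++ List.replicate m a ++ q →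
          p.getLast? ≠ some a → q.head? ≠ some a → Odd m} =
      2 ^ ((n - 1) / 2) := by
  have hk : n = 2 * ((n - 1) / 2) + 1 := by
    obtain ⟨m, rfl⟩ := hn; omega
  set k := (n - 1) / 2 with hkdef
  let f : {L : List Bool // L.length = k} →
      {l : List ℕ // l.length = n ∧ (∀ x ∈ l, x = a ∨ x = b) ∧
        l.head? = some a ∧ l.getLast? = some a ∧ ¬ ([b, b] <:+: l) ∧
        ∀ (p q : List ℕ) (m : ℕ), 0 < m → l = p ++ List.replicate m a ++ q →
          p.getLast? ≠ some a → q.head? ≠ some a → Odd m} :=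
    fun L => ⟨enc a b L.1, by rw [enc_length, L.2]; omega, enc_good a b hab L.1⟩
  have hbij : Function.Bijective f := by
    constructor
    · intro L1 L2 h
      exact Subtype.ext (enc_injective a b hab (congrArg Subtype.val h))
    · rintro ⟨w, hlen, hrest⟩
      obtain ⟨L, hL, hE⟩ := good_surj a b hab k w (by omega) hrest
      exact ⟨⟨L, hL⟩, Subtype.ext hE⟩
  rw [Nat.card_congr (Equiv.ofBijective f hbij).symm]
  show Nat.card (List.Vector Bool k) = 2 ^ k
  rw [Nat.card_eq_fintype_card, card_vector]
  simp
end

section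
/- For n≥1 and k≥3, the degree of a vertex t in the k-Pell graph Π(n,k) equals |t|₀ + 2·∑_{i=1}^{k-1} |t|ᵢ + (1/2)|t|ₖ − r, where |t|ᵢ is the number of occurrences of letter i in t and r is the number of maximal runs of the letter k−1 in t. -/
instance pellAdjDec (k n : ℕ) (f g : Fin n → Fin (k + 1)) : Decidable (pellAdj k f g) := by
  unfold pellAdj; infer_instance

instance kPellGraphAdjDec (n k : ℕ) : DecidableRel (kPellGraph n k).Adj := fun u v => by
  have : (kPellGraph n k).Adj u v ↔ u ≠ v ∧ (pellAdj k u.1 v.1 ∨ pellAdj k v.1 u.1) :=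
    SimpleGraph.fromRel_adj _ u v
  exact decidable_of_iff _ this.symm

/-- length of the maximal run of `k`'s ending at index `j` -/
def cIdx (k : ℕ) (l : List ℕ) : ℕ → ℕ
  | 0 => if l.getD 0 0 = k then 1 else 0
  | j+1 => if l.getD (j+1) 0 = k then cIdx k l j + 1 else 0

/-- positional characterization of Pell strings -/
def PellPos (k : ℕ) (l : List ℕ) : Prop :=
  ∀ j, Odd (cIdx k l j) → l.getD (j+1) 0 = k

lemma cIdx_zero (k : ℕ) (l : List ℕ) : cIdx k l 0 = if l.getD 0 0 = k then 1 else 0 := rfl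

lemma cIdx_succ (k : ℕ) (l : List ℕ) (j : ℕ) :
    cIdx k l (j+1) = if l.getD (j+1) 0 = k then cIdx k l j + 1 else 0 := rfl

lemma getD_cons_succ (a : ℕ) (l : List ℕ) (j : ℕ) : (a :: l).getD (j+1) 0 = l.getD j 0 := rfl
lemma getD_cons_zero (a : ℕ) (l : List ℕ) : (a :: l).getD 0 0 = a := rfl

lemma cIdx_eq_zero {k : ℕ} {l : List ℕ} {j : ℕ} (h : l.getD j 0 ≠ k) : cIdx k l j = 0 := by
  cases j with
  | zero => rw [cIdx_zero, if_neg h]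
  | succ j => rw [cIdx_succ, if_neg h]

lemma cIdx_succ_of_eq {k : ℕ} {l : List ℕ} {j : ℕ} (h : l.getD (j+1) 0 = k) :
    cIdx k l (j+1) = cIdx k l j + 1 := by rw [cIdx_succ, if_pos h]

lemma getD_eq_k_of_cIdx_pos {k : ℕ} {l : List ℕ} {j : ℕ} (h : 0 < cIdx k l j) :
    l.getD j 0 = k := by
  by_contra hc
  rw [cIdx_eq_zero hc] at h
  exact Nat.lt_irrefl 0 h

lemma cIdx_pos_of_eq {k : ℕ} {l : List ℕ} {j : ℕ} (h : l.getD j 0 = k) : 0 < cIdx k l j := by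
  cases j with
  | zero => rw [cIdx_zero, if_pos h]; omega
  | succ j => rw [cIdx_succ, if_pos h]; omega

lemma cIdx_cons_of_ne {k a : ℕ} (ha : a ≠ k) (l : List ℕ) (j : ℕ) :
    cIdx k (a :: l) (j+1) = cIdx k l j := by
  induction j with
  | zero =>
    rw [cIdx_succ, getD_cons_succ, cIdx_zero (l := a::l), getD_cons_zero, if_neg ha, cIdx_zero]
  | succ j ih =>
    rw [cIdx_succ, getD_cons_succ, ih, cIdx_succ]

lemma cIdx_kk_parity (k : ℕ) (l : List ℕ) (j : ℕ) :
    cIdx k (k :: k :: l) (j+2) % 2 = cIdx k l j % 2 := by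
  induction j with
  | zero =>
    have h1 : cIdx k (k :: k :: l) 1 = 2 := by
      rw [cIdx_succ_of_eq (by rw [getD_cons_succ, getD_cons_zero]), cIdx_zero,
        if_pos (getD_cons_zero k (k::l))]
    rw [cIdx_succ, cIdx_zero, getD_cons_succ, getD_cons_succ, h1]
    by_cases h : l.getD 0 0 = k
    · rw [if_pos h, if_pos h]
    · rw [if_neg h, if_neg h]
  | succ j ih =>
    rw [cIdx_succ (j := j+2), getD_cons_succ, getD_cons_succ, cIdx_succ (l := l)]
    by_cases h : l.getD (j+1) 0 = k
    · rw [if_pos h, if_pos h]; omega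
    · rw [if_neg h, if_neg h]

lemma odd_iff_of_mod_eq {a b : ℕ} (h : a % 2 = b % 2) : Odd a ↔ Odd b := by
  rw [Nat.odd_iff, Nat.odd_iff, h]

lemma pellPos_cons {k a : ℕ} (hk : k ≠ 0) (ha : a ≠ k) (l : List ℕ) :
    PellPos k (a :: l) ↔ PellPos k l := by
  constructor
  · intro h j hj
    have := h (j+1) (by rwa [cIdx_cons_of_ne ha])
    rwa [getD_cons_succ] at this
  · intro h j hj
    cases j with
    | zero =>
      exfalso
      rw [cIdx_zero, getD_cons_zero, if_neg ha] at hj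
      exact (Nat.not_odd_iff_even.2 Even.zero) hj
    | succ j =>
      rw [cIdx_cons_of_ne ha] at hj
      rw [getD_cons_succ]
      exact h j hj

lemma pellPos_kk {k : ℕ} (hk : k ≠ 0) (l : List ℕ) :
    PellPos k (k :: k :: l) ↔ PellPos k l := by
  have h1 : cIdx k (k :: k :: l) 1 = 2 := by
    rw [cIdx_succ_of_eq (by rw [getD_cons_succ, getD_cons_zero]), cIdx_zero,
      if_pos (getD_cons_zero k (k::l))]
  constructor
  · intro h j hj
    have := h (j+2) (by rwa [odd_iff_of_mod_eq (cIdx_kk_parity k l j)])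
    rwa [getD_cons_succ, getD_cons_succ] at this
  · intro h j hj
    match j with
    | 0 => rw [getD_cons_succ, getD_cons_zero]
    | 1 =>
      exfalso
      rw [h1] at hj
      exact (by decide : ¬ Odd 2) hj
    | (j+2) =>
      rw [odd_iff_of_mod_eq (cIdx_kk_parity k l j)] at hj
      rw [getD_cons_succ, getD_cons_succ]
      exact h j hj

lemma getD_nil (j : ℕ) : ([] : List ℕ).getD j 0 = 0 := by cases j <;> rfl

lemma pellPos_nil (k : ℕ) (hk : k ≠ 0) : PellPos k [] := by
  intro j hj
  exfalso
  have : cIdx k [] j = 0 := cIdx_eq_zero (by rw [getD_nil]; omega)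
  rw [this] at hj
  exact (Nat.not_odd_iff_even.2 Even.zero) hj

lemma pell_iff_pellPos {k : ℕ} (hk : k ≠ 0) :
    ∀ l : List ℕ, (∀ a ∈ l, a ≤ k) → (isPellStr k l = true ↔ PellPos k l)
  | [] => fun _ => by
      simp only [isPellStr, true_iff]
      exact pellPos_nil k hk
  | [a] => fun hle => by
      have ha : a ≤ k := hle a (by simp)
      simp only [isPellStr, decide_eq_true_eq]
      constructor
      · intro h j hj
        exfalso
        have hane : a ≠ k := Nat.ne_of_lt h
        have : ∀ j, ([a] : List ℕ).getD j 0 ≠ k := by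
          intro j
          match j with
          | 0 => rwa [getD_cons_zero]
          | (j+1) => show (0:ℕ) ≠ k; omega
        rw [cIdx_eq_zero (this j)] at hj
        exact (Nat.not_odd_iff_even.2 Even.zero) hj
      · intro h
        rcases Nat.lt_or_ge a k with h' | h'
        · exact h'
        · exfalso
          have hak : a = k := le_antisymm ha h'
          have := h 0 (by rw [cIdx_zero, getD_cons_zero, if_pos hak]; decide)
          exact hk (by simpa using this.symm)
  | a :: b :: rest => fun hle => by
      by_cases hak : a = k
      · by_cases hbk : b = k
        · have heq : isPellStr k (a :: b :: rest) = isPellStr k rest := by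
            simp [isPellStr, hak, hbk]
          rw [heq, hak, hbk, pellPos_kk hk]
          exact pell_iff_pellPos hk rest (fun x hx => hle x (by simp [hx]))
        · have heq : isPellStr k (a :: b :: rest) = false := by
            simp [isPellStr, hak, hbk]
          rw [heq]
          simp only [Bool.false_eq_true, false_iff]
          intro h
          have := h 0 (by rw [cIdx_zero, getD_cons_zero, if_pos hak]; decide)
          rw [getD_cons_succ, getD_cons_zero] at this
          exact hbk this
      · have halt : a < k := Nat.lt_of_le_of_ne (hle a (by simp)) hak
        have : isPellStr k (a :: b :: rest) = isPellStr k (b :: rest) := by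
          simp [isPellStr, hak, halt]
        rw [this, pell_iff_pellPos hk (b :: rest) (fun x hx => hle x (by simp [hx])),
          pellPos_cons hk hak]

lemma cIdx_congr {k : ℕ} {l₁ l₂ : List ℕ} :
    ∀ j : ℕ, (∀ i ≤ j, (l₁.getD i 0 = k ↔ l₂.getD i 0 = k)) → cIdx k l₁ j = cIdx k l₂ j
  | 0, h => by
      rw [cIdx_zero, cIdx_zero]
      by_cases h0 : l₁.getD 0 0 = k
      · rw [if_pos h0, if_pos ((h 0 le_rfl).1 h0)]
      · rw [if_neg h0, if_neg (fun hc => h0 ((h 0 le_rfl).2 hc))]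
  | (j+1), h => by
      have ih := cIdx_congr j (fun i hi => h i (Nat.le_succ_of_le hi))
      rw [cIdx_succ, cIdx_succ, ih]
      by_cases h0 : l₁.getD (j+1) 0 = k
      · rw [if_pos h0, if_pos ((h (j+1) le_rfl).1 h0)]
      · rw [if_neg h0, if_neg (fun hc => h0 ((h (j+1) le_rfl).2 hc))]

lemma cIdx_parity_propagate {k : ℕ} {l₁ l₂ : List ℕ} {m : ℕ}
    (hagree : ∀ i, m < i → (l₁.getD i 0 = k ↔ l₂.getD i 0 = k))
    (hbase : cIdx k l₁ m % 2 = cIdx k l₂ m % 2) :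
    ∀ j, m ≤ j → cIdx k l₁ j % 2 = cIdx k l₂ j % 2 := by
  intro j hj
  induction j, hj using Nat.le_induction with
  | base => exact hbase
  | succ j hj ih =>
    rw [cIdx_succ, cIdx_succ]
    by_cases h0 : l₁.getD (j+1) 0 = k
    · rw [if_pos h0, if_pos ((hagree (j+1) (by omega)).1 h0)]; omega
    · rw [if_neg h0, if_neg (fun hc => h0 ((hagree (j+1) (by omega)).2 hc))]

lemma pellPos_single {k : ℕ} {l₁ l₂ : List ℕ} (j₀ : ℕ)
    (h1 : l₁.getD j₀ 0 ≠ k) (h2 : l₂.getD j₀ 0 ≠ k)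
    (hag : ∀ i, i ≠ j₀ → l₁.getD i 0 = l₂.getD i 0)
    (hp : PellPos k l₁) : PellPos k l₂ := by
  have hkk : ∀ i, l₁.getD i 0 = k ↔ l₂.getD i 0 = k := by
    intro i
    by_cases hi : i = j₀
    · subst hi; exact ⟨fun h => absurd h h1, fun h => absurd h h2⟩
    · rw [hag i hi]
  intro j hj
  rw [← cIdx_congr j (fun i _ => hkk i)] at hj
  exact (hkk (j+1)).1 (hp j hj)

lemma pellPos_pairUp {k : ℕ} {l₁ l₂ : List ℕ} (j₀ : ℕ)
    (h1 : l₁.getD j₀ 0 ≠ k) (h1' : l₁.getD (j₀+1) 0 ≠ k)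
    (h2 : l₂.getD j₀ 0 = k) (h2' : l₂.getD (j₀+1) 0 = k)
    (hag : ∀ i, i ≠ j₀ → i ≠ j₀+1 → l₁.getD i 0 = l₂.getD i 0)
    (hp : PellPos k l₁) : PellPos k l₂ := by
  have pre : ∀ i, i < j₀ → cIdx k l₁ i = cIdx k l₂ i := by
    intro i hi
    exact cIdx_congr i (fun i' hi' => by rw [hag i' (by omega) (by omega)])
  have hodd0 : Odd (cIdx k l₂ j₀) := by
    cases j₀ with
    | zero => rw [cIdx_zero, if_pos h2]; decide
    | succ m =>
      rw [cIdx_succ_of_eq h2, ← pre m (by omega)]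
      have : ¬ Odd (cIdx k l₁ m) := fun ho => h1 (hp m ho)
      rw [Nat.not_odd_iff_even] at this
      exact this.add_one
  have hc2succ : cIdx k l₂ (j₀+1) = cIdx k l₂ j₀ + 1 := cIdx_succ_of_eq h2'
  have hc1succ : cIdx k l₁ (j₀+1) = 0 := cIdx_eq_zero h1'
  have hpar : ∀ j, j₀+1 ≤ j → cIdx k l₁ j % 2 = cIdx k l₂ j % 2 := by
    apply cIdx_parity_propagate
    · intro i hi; rw [hag i (by omega) (by omega)]
    · rw [hc1succ, hc2succ]
      rcases hodd0 with ⟨t, ht⟩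
      omega
  intro j hj
  by_cases e1 : j + 1 = j₀
  · rw [e1]; exact h2
  by_cases e2 : j + 1 = j₀ + 1
  · rw [e2]; exact h2'
  rcases Nat.lt_or_ge j j₀ with hlt | hge
  · have : cIdx k l₁ j = cIdx k l₂ j := pre j hlt
    rw [← this] at hj
    rw [← hag (j+1) e1 e2]
    exact hp j hj
  · rcases Nat.eq_or_lt_of_le hge with he | hgt
    · exact absurd (by omega) e2
    · have hge2 : j₀ + 1 ≤ j := hgt
      rcases Nat.eq_or_lt_of_le hge2 with he2 | hgt2
      · exfalso
        rw [← he2, hc2succ] at hj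
        rcases hodd0 with ⟨t, ht⟩
        rcases hj with ⟨s, hs⟩
        omega
      · have := hpar j (by omega)
        rw [Nat.odd_iff, ← this, ← Nat.odd_iff] at hj
        rw [← hag (j+1) e1 e2]
        exact hp j hj

lemma pellPos_pairDown {k : ℕ} {l₁ l₂ : List ℕ} (j₀ : ℕ)
    (h1 : l₁.getD j₀ 0 = k) (h1' : l₁.getD (j₀+1) 0 = k)
    (h2 : l₂.getD j₀ 0 ≠ k) (h2' : l₂.getD (j₀+1) 0 ≠ k)
    (hag : ∀ i, i ≠ j₀ → i ≠ j₀+1 → l₁.getD i 0 = l₂.getD i 0)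
    (hp : PellPos k l₁) (hodd : Odd (cIdx k l₁ j₀)) : PellPos k l₂ := by
  have pre : ∀ i, i < j₀ → cIdx k l₁ i = cIdx k l₂ i := by
    intro i hi
    exact cIdx_congr i (fun i' hi' => by rw [hag i' (by omega) (by omega)])
  have hc2 : cIdx k l₂ j₀ = 0 := cIdx_eq_zero h2
  have hc2' : cIdx k l₂ (j₀+1) = 0 := cIdx_eq_zero h2'
  have hc1succ : cIdx k l₁ (j₀+1) = cIdx k l₁ j₀ + 1 := cIdx_succ_of_eq h1'
  have hpar : ∀ j, j₀+1 ≤ j → cIdx k l₁ j % 2 = cIdx k l₂ j % 2 := by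
    apply cIdx_parity_propagate
    · intro i hi; rw [hag i (by omega) (by omega)]
    · rw [hc1succ, hc2']
      rcases hodd with ⟨t, ht⟩
      omega
  intro j hj
  rcases Nat.lt_or_ge j j₀ with hlt | hge
  · rw [← pre j hlt] at hj
    by_cases e1 : j + 1 = j₀
    · exfalso
      have : cIdx k l₁ j₀ = cIdx k l₁ j + 1 := by
        rw [← e1] at h1 ⊢
        exact cIdx_succ_of_eq h1
      rcases hodd with ⟨t, ht⟩
      rcases hj with ⟨s, hs⟩
      omega
    · rw [← hag (j+1) e1 (by omega)]
      exact hp j hj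
  · rcases Nat.eq_or_lt_of_le hge with he | hgt
    · exfalso; rw [← he, hc2] at hj; exact (by decide : ¬ Odd 0) hj
    · rcases Nat.eq_or_lt_of_le (show j₀ + 1 ≤ j from hgt) with he2 | hgt2
      · exfalso; rw [← he2, hc2'] at hj; exact (by decide : ¬ Odd 0) hj
      · have := hpar j (by omega)
        rw [Nat.odd_iff, ← this, ← Nat.odd_iff] at hj
        rw [← hag (j+1) (by omega) (by omega)]
        exact hp j hj

lemma pairDown_odd {k : ℕ} {l₁ l₂ : List ℕ} (j₀ : ℕ)
    (h1 : l₁.getD j₀ 0 = k)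
    (h2 : l₂.getD j₀ 0 ≠ k)
    (hag : ∀ i, i ≠ j₀ → i ≠ j₀+1 → l₁.getD i 0 = l₂.getD i 0)
    (hp1 : PellPos k l₁) (hp2 : PellPos k l₂) : Odd (cIdx k l₁ j₀) := by
  by_contra hev
  rw [Nat.not_odd_iff_even] at hev
  have hpos : 0 < cIdx k l₁ j₀ := cIdx_pos_of_eq h1
  cases j₀ with
  | zero =>
    rw [cIdx_zero, if_pos h1] at hev hpos
    exact (by decide : ¬ Even 1) hev
  | succ m =>
    have hcs : cIdx k l₁ (m+1) = cIdx k l₁ m + 1 := cIdx_succ_of_eq h1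
    have hoddm : Odd (cIdx k l₁ m) := by
      rw [hcs] at hev
      rcases hev with ⟨t, ht⟩
      exact ⟨t - 1, by omega⟩
    have hprem : cIdx k l₁ m = cIdx k l₂ m :=
      cIdx_congr m (fun i hi => by rw [hag i (by omega) (by omega)])
    have := hp2 m (by rwa [← hprem])
    exact h2 this

/-! ### Function layer -/

variable {n k : ℕ}

def fstr (f : Fin n → Fin (k+1)) : List ℕ := List.ofFn (fun i => (f i : ℕ))

lemma fstr_getD (f : Fin n → Fin (k+1)) (i : ℕ) :
    (fstr f).getD i 0 = if h : i < n then (f ⟨i, h⟩ : ℕ) else 0 := by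
  by_cases h : i < n
  · rw [dif_pos h, List.getD_eq_getElem _ _ (by simpa [fstr] using h)]
    simp [fstr]
  · rw [dif_neg h, List.getD_eq_default]
    simp [fstr]; omega

lemma fstr_getD_fin (f : Fin n → Fin (k+1)) (j : Fin n) :
    (fstr f).getD (j : ℕ) 0 = (f j : ℕ) := by
  rw [fstr_getD, dif_pos j.isLt]

lemma fstr_le (f : Fin n → Fin (k+1)) : ∀ a ∈ fstr f, a ≤ k := by
  intro a ha
  rw [fstr, List.mem_ofFn] at ha
  obtain ⟨i, rfl⟩ := ha
  exact Nat.lt_succ_iff.mp (f i).isLt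

lemma pell_iff_pos_f (hk : k ≠ 0) (f : Fin n → Fin (k+1)) :
    isPellStr k (fstr f) = true ↔ PellPos k (fstr f) :=
  pell_iff_pellPos hk _ (fstr_le f)

def updF (f : Fin n → Fin (k+1)) (j : Fin n) (a : Fin (k+1)) : Fin n → Fin (k+1) :=
  fun i => if i = j then a else f i

lemma updF_self (f : Fin n → Fin (k+1)) (j : Fin n) (a : Fin (k+1)) : updF f j a j = a := by
  simp [updF]

lemma updF_ne (f : Fin n → Fin (k+1)) (j : Fin n) (a : Fin (k+1)) {i : Fin n} (h : i ≠ j) :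
    updF f j a i = f i := by
  simp [updF, h]

lemma fstr_upd_getD (f : Fin n → Fin (k+1)) (j : Fin n) (a : Fin (k+1)) (i : ℕ)
    (hne : i ≠ (j : ℕ)) : (fstr (updF f j a)).getD i 0 = (fstr f).getD i 0 := by
  rw [fstr_getD, fstr_getD]
  by_cases h : i < n
  · rw [dif_pos h, dif_pos h, updF_ne _ _ _ (Fin.ne_of_val_ne hne)]
  · rw [dif_neg h, dif_neg h]

lemma fstr_upd_getD_self (f : Fin n → Fin (k+1)) (j : Fin n) (a : Fin (k+1)) :
    (fstr (updF f j a)).getD (j : ℕ) 0 = (a : ℕ) := by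
  rw [fstr_getD, dif_pos j.isLt]
  have : (⟨(j:ℕ), j.isLt⟩ : Fin n) = j := Fin.eta j j.isLt
  rw [this, updF_self]

lemma fstr_agree_of_updF2 (f : Fin n → Fin (k+1)) (j j' : Fin n) (a : Fin (k+1)) (i : ℕ)
    (h1 : i ≠ (j : ℕ)) (h2 : i ≠ (j' : ℕ)) :
    (fstr (updF (updF f j a) j' a)).getD i 0 = (fstr f).getD i 0 := by
  rw [fstr_upd_getD _ _ _ _ h2, fstr_upd_getD _ _ _ _ h1]

lemma fstr_updF2_getD_fst (f : Fin n → Fin (k+1)) (j j' : Fin n) (a : Fin (k+1))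
    (hne : (j : ℕ) ≠ (j' : ℕ)) :
    (fstr (updF (updF f j a) j' a)).getD (j : ℕ) 0 = (a : ℕ) := by
  rw [fstr_upd_getD _ _ _ _ hne, fstr_upd_getD_self]

lemma pell_up (hk : k ≠ 0) (f : Fin n → Fin (k+1)) (hf : isPellStr k (fstr f) = true)
    (j : Fin n) (h : (f j : ℕ) + 1 < k) :
    isPellStr k (fstr (updF f j ⟨(f j : ℕ) + 1, by omega⟩)) = true := by
  rw [pell_iff_pos_f hk] at hf ⊢
  refine pellPos_single (j : ℕ) ?_ ?_ ?_ hf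
  · rw [fstr_getD_fin]; omega
  · rw [fstr_upd_getD_self]; simp; omega
  · intro i hi; exact (fstr_upd_getD _ _ _ _ hi).symm

lemma pell_down (hk : k ≠ 0) (f : Fin n → Fin (k+1)) (hf : isPellStr k (fstr f) = true)
    (j : Fin n) (h1 : 1 ≤ (f j : ℕ)) (h2 : (f j : ℕ) < k) :
    isPellStr k (fstr (updF f j ⟨(f j : ℕ) - 1, by omega⟩)) = true := by
  rw [pell_iff_pos_f hk] at hf ⊢
  refine pellPos_single (j : ℕ) ?_ ?_ ?_ hf
  · rw [fstr_getD_fin]; omega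
  · rw [fstr_upd_getD_self]; simp; omega
  · intro i hi; exact (fstr_upd_getD _ _ _ _ hi).symm

lemma pell_pairUp (hk : 1 ≤ k) (f : Fin n → Fin (k+1)) (hf : isPellStr k (fstr f) = true)
    (j : Fin n) (h : (j : ℕ) + 1 < n) (hj : (f j : ℕ) = k - 1)
    (hj' : (f ⟨(j:ℕ)+1, h⟩ : ℕ) = k - 1) :
    isPellStr k (fstr (updF (updF f j ⟨k, by omega⟩) ⟨(j:ℕ)+1, h⟩ ⟨k, by omega⟩)) = true := by
  rw [pell_iff_pos_f (by omega)] at hf ⊢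
  refine pellPos_pairUp (j : ℕ) ?_ ?_ ?_ ?_ ?_ hf
  · rw [fstr_getD_fin]; omega
  · have : ((⟨(j:ℕ)+1, h⟩ : Fin n) : ℕ) = (j:ℕ)+1 := rfl
    rw [← this, fstr_getD_fin]; omega
  · rw [fstr_updF2_getD_fst _ _ _ _ (by simp)]
  · have h5 := fstr_upd_getD_self (updF f j (⟨k, by omega⟩ : Fin (k+1))) ⟨(j:ℕ)+1, h⟩ ⟨k, by omega⟩
    simpa using h5
  · intro i hi1 hi2
    exact (fstr_agree_of_updF2 _ _ _ _ _ hi1 hi2).symm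

lemma pell_pairDown (hk : 1 ≤ k) (f : Fin n → Fin (k+1)) (hf : isPellStr k (fstr f) = true)
    (j : Fin n) (h : (j : ℕ) + 1 < n) (hj : (f j : ℕ) = k)
    (hj' : (f ⟨(j:ℕ)+1, h⟩ : ℕ) = k) (hodd : Odd (cIdx k (fstr f) (j : ℕ))) :
    isPellStr k (fstr (updF (updF f j ⟨k-1, by omega⟩) ⟨(j:ℕ)+1, h⟩ ⟨k-1, by omega⟩)) = true := by
  rw [pell_iff_pos_f (by omega)] at hf ⊢
  refine pellPos_pairDown (j : ℕ) ?_ ?_ ?_ ?_ ?_ hf hodd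
  · rw [fstr_getD_fin]; omega
  · have : ((⟨(j:ℕ)+1, h⟩ : Fin n) : ℕ) = (j:ℕ)+1 := rfl
    rw [← this, fstr_getD_fin]; omega
  · rw [fstr_updF2_getD_fst _ _ _ _ (by simp)]; simp; omega
  · have h5 := fstr_upd_getD_self (updF f j (⟨k-1, by omega⟩ : Fin (k+1))) ⟨(j:ℕ)+1, h⟩ ⟨k-1, by omega⟩
    simp only [Fin.val_mk] at h5
    rw [h5]; omega
  · intro i hi1 hi2
    exact (fstr_agree_of_updF2 _ _ _ _ _ hi1 hi2).symm

lemma odd_of_pairDown (hk : 1 ≤ k) (f g : Fin n → Fin (k+1))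
    (hf : isPellStr k (fstr f) = true) (hg : isPellStr k (fstr g) = true)
    (j j' : Fin n) (hjj : (j' : ℕ) = (j : ℕ) + 1)
    (hfj : (f j : ℕ) = k) (hgj : (g j : ℕ) = k - 1)
    (hag : ∀ i, i ≠ j → i ≠ j' → f i = g i) : Odd (cIdx k (fstr f) (j : ℕ)) := by
  rw [pell_iff_pos_f (by omega)] at hf hg
  refine pairDown_odd (j : ℕ) ?_ ?_ ?_ hf hg
  · rw [fstr_getD_fin]; exact hfj
  · rw [fstr_getD_fin]; omega
  · intro i hi1 hi2
    rw [fstr_getD, fstr_getD]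
    by_cases h : i < n
    · rw [dif_pos h, dif_pos h,
        hag ⟨i, h⟩ (Fin.ne_of_val_ne hi1) (Fin.ne_of_val_ne (show i ≠ (j':ℕ) by rw [hjj]; exact hi2))]
    · rw [dif_neg h, dif_neg h]

lemma succ_lt_of_odd (hk : 1 ≤ k) (f : Fin n → Fin (k+1)) (hf : isPellStr k (fstr f) = true)
    (j : Fin n) (hodd : Odd (cIdx k (fstr f) (j : ℕ))) :
    (j : ℕ) + 1 < n ∧ (fstr f).getD ((j:ℕ)+1) 0 = k := by
  rw [pell_iff_pos_f (by omega)] at hf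
  have hK := hf (j : ℕ) hodd
  refine ⟨?_, hK⟩
  by_contra hc
  rw [fstr_getD, dif_neg hc] at hK
  omega

/-! ### Moves as vertices -/

section Moves

variable (v : PellVert n k)

def pU (j : Fin n) : Prop := (v.1 j : ℕ) + 1 < k
def pD (j : Fin n) : Prop := 1 ≤ (v.1 j : ℕ) ∧ (v.1 j : ℕ) < k
def pP (j : Fin n) : Prop :=
  (j:ℕ)+1 < n ∧ (v.1 j : ℕ) = k - 1 ∧ (fstr v.1).getD ((j:ℕ)+1) 0 = k - 1
def pQ (j : Fin n) : Prop := (v.1 j : ℕ) = k ∧ Odd (cIdx k (fstr v.1) (j:ℕ))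

instance : DecidablePred (pU v) := fun j => by unfold pU; infer_instance
instance : DecidablePred (pD v) := fun j => by unfold pD; infer_instance
instance : DecidablePred (pP v) := fun j => by unfold pP; infer_instance
instance : DecidablePred (pQ v) := fun j => by
  unfold pQ
  exact instDecidableAnd (dq := decidable_of_iff _ Nat.odd_iff.symm)

def mkU (hk : 3 ≤ k) (j : Fin n) (h : pU v j) : PellVert n k :=
  ⟨updF v.1 j ⟨(v.1 j : ℕ) + 1, by have hh : (v.1 j : ℕ) + 1 < k := h; omega⟩, pell_up (by omega) v.1 v.2 j h⟩

def mkD (hk : 3 ≤ k) (j : Fin n) (h : pD v j) : PellVert n k :=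
  ⟨updF v.1 j ⟨(v.1 j : ℕ) - 1, by omega⟩, pell_down (by omega) v.1 v.2 j h.1 h.2⟩

def mkP (hk : 3 ≤ k) (j : Fin n) (h : pP v j) : PellVert n k :=
  ⟨updF (updF v.1 j ⟨k, by omega⟩) ⟨(j:ℕ)+1, h.1⟩ ⟨k, by omega⟩,
    pell_pairUp (by omega) v.1 v.2 j h.1 h.2.1
      (by have := h.2.2; rwa [fstr_getD, dif_pos h.1] at this)⟩

lemma pQ_succ_lt (hk : 3 ≤ k) (j : Fin n) (h : pQ v j) : (j:ℕ)+1 < n :=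
  (succ_lt_of_odd (by omega) v.1 v.2 j h.2).1

lemma pQ_succ_val (hk : 3 ≤ k) (j : Fin n) (h : pQ v j) :
    (v.1 ⟨(j:ℕ)+1, pQ_succ_lt v hk j h⟩ : ℕ) = k := by
  have := (succ_lt_of_odd (by omega : 1 ≤ k) v.1 v.2 j h.2).2
  rwa [fstr_getD, dif_pos (pQ_succ_lt v hk j h)] at this

def mkQ (hk : 3 ≤ k) (j : Fin n) (h : pQ v j) : PellVert n k :=
  ⟨updF (updF v.1 j ⟨k-1, by omega⟩) ⟨(j:ℕ)+1, pQ_succ_lt v hk j h⟩ ⟨k-1, by omega⟩,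
    pell_pairDown (by omega) v.1 v.2 j (pQ_succ_lt v hk j h) h.1
      (pQ_succ_val v hk j h) h.2⟩

variable (hk : 3 ≤ k)

lemma vert_ne_of {v w : PellVert n k} (j : Fin n) (h : (v.1 j : ℕ) ≠ (w.1 j : ℕ)) : v ≠ w :=
  fun he => h (by rw [he])

lemma adj_iff (w : PellVert n k) :
    (kPellGraph n k).Adj v w ↔ v ≠ w ∧ (pellAdj k v.1 w.1 ∨ pellAdj k w.1 v.1) :=
  SimpleGraph.fromRel_adj _ v w

lemma mkU_val_self (j : Fin n) (h : pU v j) : ((mkU v hk j h).1 j : ℕ) = (v.1 j : ℕ) + 1 := by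
  show ((updF v.1 j _) j : ℕ) = _
  rw [updF_self]

lemma mkU_val_ne (j : Fin n) (h : pU v j) {i : Fin n} (hi : i ≠ j) :
    (mkU v hk j h).1 i = v.1 i := updF_ne _ _ _ hi

lemma mkD_val_self (j : Fin n) (h : pD v j) : ((mkD v hk j h).1 j : ℕ) = (v.1 j : ℕ) - 1 := by
  show ((updF v.1 j _) j : ℕ) = _
  rw [updF_self]

lemma mkD_val_ne (j : Fin n) (h : pD v j) {i : Fin n} (hi : i ≠ j) :
    (mkD v hk j h).1 i = v.1 i := updF_ne _ _ _ hi

lemma mkP_val_fst (j : Fin n) (h : pP v j) : ((mkP v hk j h).1 j : ℕ) = k := by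
  show ((updF (updF v.1 j ⟨k, by omega⟩) _ _) j : ℕ) = k
  rw [updF_ne _ _ _ (Fin.ne_of_val_ne (by simp)), updF_self]

lemma mkP_val_snd (j : Fin n) (h : pP v j) :
    ((mkP v hk j h).1 ⟨(j:ℕ)+1, h.1⟩ : ℕ) = k := by
  show ((updF _ ⟨(j:ℕ)+1, h.1⟩ _) _ : ℕ) = k
  rw [updF_self]

lemma mkP_val_ne (j : Fin n) (h : pP v j) {i : Fin n} (hi : i ≠ j)
    (hi' : i ≠ ⟨(j:ℕ)+1, h.1⟩) : (mkP v hk j h).1 i = v.1 i := by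
  show (updF (updF _ _ _) _ _) i = _
  rw [updF_ne _ _ _ hi', updF_ne _ _ _ hi]

lemma mkQ_val_fst (j : Fin n) (h : pQ v j) : ((mkQ v hk j h).1 j : ℕ) = k - 1 := by
  show ((updF (updF v.1 j ⟨k-1, by omega⟩) _ _) j : ℕ) = k - 1
  rw [updF_ne _ _ _ (Fin.ne_of_val_ne (by simp)), updF_self]

lemma mkQ_val_snd (j : Fin n) (h : pQ v j) :
    ((mkQ v hk j h).1 ⟨(j:ℕ)+1, pQ_succ_lt v hk j h⟩ : ℕ) = k - 1 := by
  show ((updF _ ⟨(j:ℕ)+1, _⟩ _) _ : ℕ) = k - 1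
  rw [updF_self]

lemma mkQ_val_ne (j : Fin n) (h : pQ v j) {i : Fin n} (hi : i ≠ j)
    (hi' : i ≠ ⟨(j:ℕ)+1, pQ_succ_lt v hk j h⟩) : (mkQ v hk j h).1 i = v.1 i := by
  show (updF (updF _ _ _) _ _) i = _
  rw [updF_ne _ _ _ hi', updF_ne _ _ _ hi]

lemma adj_mkU (j : Fin n) (h : pU v j) : (kPellGraph n k).Adj v (mkU v hk j h) := by
  rw [adj_iff]
  refine ⟨vert_ne_of j (by rw [mkU_val_self]; omega), Or.inl (Or.inl ⟨j, ?_, ?_, ?_⟩)⟩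
  · rw [mkU_val_self]
  · exact h
  · intro i hi; exact (mkU_val_ne v hk j h hi).symm

lemma adj_mkD (j : Fin n) (h : pD v j) : (kPellGraph n k).Adj v (mkD v hk j h) := by
  rw [adj_iff]
  have hh : 1 ≤ (v.1 j : ℕ) ∧ (v.1 j : ℕ) < k := h
  refine ⟨vert_ne_of j (by rw [mkD_val_self]; omega), Or.inr (Or.inl ⟨j, ?_, ?_, ?_⟩)⟩
  · rw [mkD_val_self]; omega
  · rw [mkD_val_self]; omega
  · intro i hi; exact mkD_val_ne v hk j h hi

lemma adj_mkP (j : Fin n) (h : pP v j) : (kPellGraph n k).Adj v (mkP v hk j h) := by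
  rw [adj_iff]
  have hh : (v.1 j : ℕ) = k - 1 := h.2.1
  refine ⟨vert_ne_of j (by rw [mkP_val_fst]; omega),
    Or.inl (Or.inr ⟨j, ⟨(j:ℕ)+1, h.1⟩, rfl, h.2.1, ?_, mkP_val_fst v hk j h,
      mkP_val_snd v hk j h, ?_⟩)⟩
  · have := h.2.2; rwa [fstr_getD, dif_pos h.1] at this
  · intro i hi hi'; exact (mkP_val_ne v hk j h hi hi').symm

lemma adj_mkQ (j : Fin n) (h : pQ v j) : (kPellGraph n k).Adj v (mkQ v hk j h) := by
  rw [adj_iff]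
  have hh : (v.1 j : ℕ) = k := h.1
  refine ⟨vert_ne_of j (by rw [mkQ_val_fst]; omega),
    Or.inr (Or.inr ⟨j, ⟨(j:ℕ)+1, pQ_succ_lt v hk j h⟩, rfl, mkQ_val_fst v hk j h,
      mkQ_val_snd v hk j h, h.1, pQ_succ_val v hk j h, ?_⟩)⟩
  intro i hi hi'; exact mkQ_val_ne v hk j h hi hi'

end Moves

section Bij

variable (v : PellVert n k) (hk : 3 ≤ k)

lemma mkU_val (j : Fin n) (h : pU v j) (i : Fin n) :
    ((mkU v hk j h).1 i : ℕ) = if i = j then (v.1 j : ℕ) + 1 else (v.1 i : ℕ) := by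
  by_cases e1 : i = j
  · subst e1; rw [if_pos rfl, mkU_val_self]
  · rw [if_neg e1, mkU_val_ne v hk j h e1]

lemma mkD_val (j : Fin n) (h : pD v j) (i : Fin n) :
    ((mkD v hk j h).1 i : ℕ) = if i = j then (v.1 j : ℕ) - 1 else (v.1 i : ℕ) := by
  by_cases e1 : i = j
  · subst e1; rw [if_pos rfl, mkD_val_self]
  · rw [if_neg e1, mkD_val_ne v hk j h e1]

lemma mkP_val (j : Fin n) (h : pP v j) (i : Fin n) :
    ((mkP v hk j h).1 i : ℕ) =
      if i = j then k else if (i:ℕ) = (j:ℕ)+1 then k else (v.1 i : ℕ) := by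
  by_cases e1 : i = j
  · subst e1; rw [if_pos rfl, mkP_val_fst]
  · rw [if_neg e1]
    by_cases e2 : (i:ℕ) = (j:ℕ)+1
    · rw [if_pos e2]
      have hi : i = ⟨(j:ℕ)+1, h.1⟩ := by rw [Fin.ext_iff]; exact e2
      rw [hi, mkP_val_snd]
    · rw [if_neg e2, mkP_val_ne v hk j h e1 (fun hc => e2 (congrArg Fin.val hc))]

lemma mkQ_val (j : Fin n) (h : pQ v j) (i : Fin n) :
    ((mkQ v hk j h).1 i : ℕ) =
      if i = j then k - 1 else if (i:ℕ) = (j:ℕ)+1 then k - 1 else (v.1 i : ℕ) := by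
  by_cases e1 : i = j
  · subst e1; rw [if_pos rfl, mkQ_val_fst]
  · rw [if_neg e1]
    by_cases e2 : (i:ℕ) = (j:ℕ)+1
    · rw [if_pos e2]
      have hi : i = ⟨(j:ℕ)+1, pQ_succ_lt v hk j h⟩ := by rw [Fin.ext_iff]; exact e2
      rw [hi, mkQ_val_snd]
    · rw [if_neg e2, mkQ_val_ne v hk j h e1 (fun hc => e2 (congrArg Fin.val hc))]

abbrev MovI : Type := {j : Fin n // pU v j} ⊕ {j : Fin n // pD v j} ⊕
    {j : Fin n // pP v j} ⊕ {j : Fin n // pQ v j}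

def eMov : MovI v → {w : PellVert n k // (kPellGraph n k).Adj v w}
  | Sum.inl ⟨j, h⟩ => ⟨mkU v hk j h, adj_mkU v hk j h⟩
  | Sum.inr (Sum.inl ⟨j, h⟩) => ⟨mkD v hk j h, adj_mkD v hk j h⟩
  | Sum.inr (Sum.inr (Sum.inl ⟨j, h⟩)) => ⟨mkP v hk j h, adj_mkP v hk j h⟩
  | Sum.inr (Sum.inr (Sum.inr ⟨j, h⟩)) => ⟨mkQ v hk j h, adj_mkQ v hk j h⟩

lemma eMov_inj : Function.Injective (eMov v hk) := by
  intro x y he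
  rcases x with ⟨j₁, h₁⟩ | ⟨j₁, h₁⟩ | ⟨j₁, h₁⟩ | ⟨j₁, h₁⟩ <;>
    rcases y with ⟨j₂, h₂⟩ | ⟨j₂, h₂⟩ | ⟨j₂, h₂⟩ | ⟨j₂, h₂⟩
  -- U U
  · have hv : ∀ i : Fin n, ((mkU v hk j₁ h₁).1 i : ℕ) = ((mkU v hk j₂ h₂).1 i : ℕ) :=
      fun i => congrArg (fun z : {w : PellVert n k // (kPellGraph n k).Adj v w} => (z.1.1 i : ℕ)) he
    suffices hj : j₁ = j₂ by subst hj; rfl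
    by_contra hne
    have H := hv j₁
    rw [mkU_val, mkU_val, if_pos rfl, if_neg hne] at H
    omega
  -- U D
  · exfalso
    have hv : ∀ i : Fin n, ((mkU v hk j₁ h₁).1 i : ℕ) = ((mkD v hk j₂ h₂).1 i : ℕ) :=
      fun i => congrArg (fun z : {w : PellVert n k // (kPellGraph n k).Adj v w} => (z.1.1 i : ℕ)) he
    have hd : 1 ≤ (v.1 j₂ : ℕ) ∧ (v.1 j₂ : ℕ) < k := h₂
    by_cases e : j₁ = j₂
    · subst e
      have H := hv j₁
      rw [mkU_val, mkD_val, if_pos rfl, if_pos rfl] at H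
      omega
    · have H := hv j₁
      rw [mkU_val, mkD_val, if_pos rfl, if_neg e] at H
      omega
  -- U P
  · exfalso
    have hv : ∀ i : Fin n, ((mkU v hk j₁ h₁).1 i : ℕ) = ((mkP v hk j₂ h₂).1 i : ℕ) :=
      fun i => congrArg (fun z : {w : PellVert n k // (kPellGraph n k).Adj v w} => (z.1.1 i : ℕ)) he
    have hu : (v.1 j₁ : ℕ) + 1 < k := h₁
    have hp : (v.1 j₂ : ℕ) = k - 1 := h₂.2.1
    by_cases e : j₂ = j₁
    · rw [e] at hp; omega
    · have H := hv j₂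
      rw [mkU_val, mkP_val, if_neg e, if_pos rfl] at H
      omega
  -- U Q
  · exfalso
    have hv : ∀ i : Fin n, ((mkU v hk j₁ h₁).1 i : ℕ) = ((mkQ v hk j₂ h₂).1 i : ℕ) :=
      fun i => congrArg (fun z : {w : PellVert n k // (kPellGraph n k).Adj v w} => (z.1.1 i : ℕ)) he
    have hu : (v.1 j₁ : ℕ) + 1 < k := h₁
    have hq : (v.1 j₂ : ℕ) = k := h₂.1
    by_cases e : j₂ = j₁
    · have H := hv j₂
      rw [mkU_val, mkQ_val, if_pos e, if_pos rfl] at H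
      rw [e] at hq
      omega
    · have H := hv j₂
      rw [mkU_val, mkQ_val, if_neg e, if_pos rfl] at H
      omega
  -- D U
  · exfalso
    have hv : ∀ i : Fin n, ((mkD v hk j₁ h₁).1 i : ℕ) = ((mkU v hk j₂ h₂).1 i : ℕ) :=
      fun i => congrArg (fun z : {w : PellVert n k // (kPellGraph n k).Adj v w} => (z.1.1 i : ℕ)) he
    have hd : 1 ≤ (v.1 j₁ : ℕ) ∧ (v.1 j₁ : ℕ) < k := h₁
    by_cases e : j₁ = j₂
    · subst e
      have H := hv j₁
      rw [mkD_val, mkU_val, if_pos rfl, if_pos rfl] at H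
      omega
    · have H := hv j₁
      rw [mkD_val, mkU_val, if_pos rfl, if_neg e] at H
      omega
  -- D D
  · have hv : ∀ i : Fin n, ((mkD v hk j₁ h₁).1 i : ℕ) = ((mkD v hk j₂ h₂).1 i : ℕ) :=
      fun i => congrArg (fun z : {w : PellVert n k // (kPellGraph n k).Adj v w} => (z.1.1 i : ℕ)) he
    have hd : 1 ≤ (v.1 j₁ : ℕ) ∧ (v.1 j₁ : ℕ) < k := h₁
    suffices hj : j₁ = j₂ by subst hj; rfl
    by_contra hne
    have H := hv j₁
    rw [mkD_val, mkD_val, if_pos rfl, if_neg hne] at H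
    omega
  -- D P
  · exfalso
    have hv : ∀ i : Fin n, ((mkD v hk j₁ h₁).1 i : ℕ) = ((mkP v hk j₂ h₂).1 i : ℕ) :=
      fun i => congrArg (fun z : {w : PellVert n k // (kPellGraph n k).Adj v w} => (z.1.1 i : ℕ)) he
    have hd : 1 ≤ (v.1 j₁ : ℕ) ∧ (v.1 j₁ : ℕ) < k := h₁
    have hp : (v.1 j₂ : ℕ) = k - 1 := h₂.2.1
    by_cases e : j₂ = j₁
    · have H := hv j₂
      rw [mkD_val, mkP_val, if_pos e, if_pos rfl] at H
      rw [e] at hp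
      omega
    · have H := hv j₂
      rw [mkD_val, mkP_val, if_neg e, if_pos rfl] at H
      omega
  -- D Q
  · exfalso
    have hv : ∀ i : Fin n, ((mkD v hk j₁ h₁).1 i : ℕ) = ((mkQ v hk j₂ h₂).1 i : ℕ) :=
      fun i => congrArg (fun z : {w : PellVert n k // (kPellGraph n k).Adj v w} => (z.1.1 i : ℕ)) he
    have hd : 1 ≤ (v.1 j₁ : ℕ) ∧ (v.1 j₁ : ℕ) < k := h₁
    have hq : (v.1 j₂ : ℕ) = k := h₂.1
    by_cases e : j₂ = j₁
    · rw [e] at hq; omega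
    · have H := hv j₂
      rw [mkD_val, mkQ_val, if_neg e, if_pos rfl] at H
      omega
  -- P U
  · exfalso
    have hv : ∀ i : Fin n, ((mkP v hk j₁ h₁).1 i : ℕ) = ((mkU v hk j₂ h₂).1 i : ℕ) :=
      fun i => congrArg (fun z : {w : PellVert n k // (kPellGraph n k).Adj v w} => (z.1.1 i : ℕ)) he
    have hu : (v.1 j₂ : ℕ) + 1 < k := h₂
    have hp : (v.1 j₁ : ℕ) = k - 1 := h₁.2.1
    by_cases e : j₁ = j₂
    · rw [e] at hp; omega
    · have H := hv j₁
      rw [mkP_val, mkU_val, if_pos rfl, if_neg e] at H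
      omega
  -- P D
  · exfalso
    have hv : ∀ i : Fin n, ((mkP v hk j₁ h₁).1 i : ℕ) = ((mkD v hk j₂ h₂).1 i : ℕ) :=
      fun i => congrArg (fun z : {w : PellVert n k // (kPellGraph n k).Adj v w} => (z.1.1 i : ℕ)) he
    have hd : 1 ≤ (v.1 j₂ : ℕ) ∧ (v.1 j₂ : ℕ) < k := h₂
    have hp : (v.1 j₁ : ℕ) = k - 1 := h₁.2.1
    by_cases e : j₁ = j₂
    · have H := hv j₁
      rw [mkP_val, mkD_val, if_pos rfl, if_pos e] at H
      rw [e] at hp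
      omega
    · have H := hv j₁
      rw [mkP_val, mkD_val, if_pos rfl, if_neg e] at H
      omega
  -- P P
  · have hv : ∀ i : Fin n, ((mkP v hk j₁ h₁).1 i : ℕ) = ((mkP v hk j₂ h₂).1 i : ℕ) :=
      fun i => congrArg (fun z : {w : PellVert n k // (kPellGraph n k).Adj v w} => (z.1.1 i : ℕ)) he
    have hp₁ : (v.1 j₁ : ℕ) = k - 1 := h₁.2.1
    have hp₂ : (v.1 j₂ : ℕ) = k - 1 := h₂.2.1
    suffices hj : j₁ = j₂ by subst hj; rfl
    by_contra hne
    have H1 := hv j₁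
    rw [mkP_val, mkP_val, if_pos rfl, if_neg hne] at H1
    by_cases e1 : (j₁ : ℕ) = (j₂ : ℕ) + 1
    · have H2 := hv j₂
      rw [mkP_val, mkP_val, if_neg (Ne.symm hne), if_pos rfl] at H2
      by_cases e2 : (j₂ : ℕ) = (j₁ : ℕ) + 1
      · omega
      · rw [if_neg e2] at H2
        omega
    · rw [if_neg e1] at H1
      omega
  -- P Q
  · exfalso
    have hv : ∀ i : Fin n, ((mkP v hk j₁ h₁).1 i : ℕ) = ((mkQ v hk j₂ h₂).1 i : ℕ) :=
      fun i => congrArg (fun z : {w : PellVert n k // (kPellGraph n k).Adj v w} => (z.1.1 i : ℕ)) he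
    have hq : (v.1 j₂ : ℕ) = k := h₂.1
    have H := hv j₂
    rw [mkP_val, mkQ_val, if_pos rfl] at H
    by_cases e : j₂ = j₁
    · rw [if_pos e] at H; omega
    · rw [if_neg e] at H
      by_cases e2 : (j₂ : ℕ) = (j₁ : ℕ) + 1
      · rw [if_pos e2] at H; omega
      · rw [if_neg e2] at H; omega
  -- Q U
  · exfalso
    have hv : ∀ i : Fin n, ((mkQ v hk j₁ h₁).1 i : ℕ) = ((mkU v hk j₂ h₂).1 i : ℕ) :=
      fun i => congrArg (fun z : {w : PellVert n k // (kPellGraph n k).Adj v w} => (z.1.1 i : ℕ)) he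
    have hu : (v.1 j₂ : ℕ) + 1 < k := h₂
    have hq : (v.1 j₁ : ℕ) = k := h₁.1
    by_cases e : j₁ = j₂
    · rw [e] at hq; omega
    · have H := hv j₁
      rw [mkQ_val, mkU_val, if_pos rfl, if_neg e] at H
      omega
  -- Q D
  · exfalso
    have hv : ∀ i : Fin n, ((mkQ v hk j₁ h₁).1 i : ℕ) = ((mkD v hk j₂ h₂).1 i : ℕ) :=
      fun i => congrArg (fun z : {w : PellVert n k // (kPellGraph n k).Adj v w} => (z.1.1 i : ℕ)) he
    have hd : 1 ≤ (v.1 j₂ : ℕ) ∧ (v.1 j₂ : ℕ) < k := h₂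
    have hq : (v.1 j₁ : ℕ) = k := h₁.1
    by_cases e : j₁ = j₂
    · rw [e] at hq; omega
    · have H := hv j₁
      rw [mkQ_val, mkD_val, if_pos rfl, if_neg e] at H
      omega
  -- Q P
  · exfalso
    have hv : ∀ i : Fin n, ((mkQ v hk j₁ h₁).1 i : ℕ) = ((mkP v hk j₂ h₂).1 i : ℕ) :=
      fun i => congrArg (fun z : {w : PellVert n k // (kPellGraph n k).Adj v w} => (z.1.1 i : ℕ)) he
    have hq : (v.1 j₁ : ℕ) = k := h₁.1
    have H := hv j₁
    rw [mkQ_val, mkP_val, if_pos rfl] at H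
    by_cases e : j₁ = j₂
    · rw [if_pos e] at H; omega
    · rw [if_neg e] at H
      by_cases e2 : (j₁ : ℕ) = (j₂ : ℕ) + 1
      · rw [if_pos e2] at H; omega
      · rw [if_neg e2] at H; omega
  -- Q Q
  · have hv : ∀ i : Fin n, ((mkQ v hk j₁ h₁).1 i : ℕ) = ((mkQ v hk j₂ h₂).1 i : ℕ) :=
      fun i => congrArg (fun z : {w : PellVert n k // (kPellGraph n k).Adj v w} => (z.1.1 i : ℕ)) he
    have hq₁ : (v.1 j₁ : ℕ) = k := h₁.1
    have hq₂ : (v.1 j₂ : ℕ) = k := h₂.1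
    suffices hj : j₁ = j₂ by subst hj; rfl
    by_contra hne
    have H1 := hv j₁
    rw [mkQ_val, mkQ_val, if_pos rfl, if_neg hne] at H1
    by_cases e1 : (j₁ : ℕ) = (j₂ : ℕ) + 1
    · have H2 := hv j₂
      rw [mkQ_val, mkQ_val, if_neg (Ne.symm hne), if_pos rfl] at H2
      by_cases e2 : (j₂ : ℕ) = (j₁ : ℕ) + 1
      · omega
      · rw [if_neg e2] at H2
        omega
    · rw [if_neg e1] at H1
      omega

end Bij

section Surj

variable (v : PellVert n k) (hk : 3 ≤ k)

lemma eMov_surj : Function.Surjective (eMov v hk) := by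
  rintro ⟨w, hadj⟩
  rw [adj_iff] at hadj
  obtain ⟨hne, hcase⟩ := hadj
  rcases hcase with (⟨j, hgj, hlt, hag⟩ | ⟨j, j', hjj, hfj, hfj', hgj, hgj', hag⟩) |
    (⟨j, hgj, hlt, hag⟩ | ⟨j, j', hjj, hfj, hfj', hgj, hgj', hag⟩)
  · refine ⟨Sum.inl ⟨j, hlt⟩, Subtype.ext (Subtype.ext (funext fun i => Fin.ext ?_))⟩
    simp only [eMov]
    by_cases e : i = j
    · subst e
      rw [mkU_val v hk i hlt, if_pos rfl]
      exact hgj.symm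
    · rw [mkU_val v hk j hlt, if_neg e]
      exact congrArg Fin.val (hag i e)
  · have hlt' : (j : ℕ) + 1 < n := hjj ▸ j'.isLt
    have hj'eq : (⟨(j:ℕ)+1, hlt'⟩ : Fin n) = j' := Fin.ext hjj.symm
    have hpP : pP v j := ⟨hlt', hfj, by
      rw [fstr_getD, dif_pos hlt', hj'eq]; exact hfj'⟩
    refine ⟨Sum.inr (Sum.inr (Sum.inl ⟨j, hpP⟩)),
      Subtype.ext (Subtype.ext (funext fun i => Fin.ext ?_))⟩
    simp only [eMov]
    by_cases e1 : i = j
    · subst e1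
      rw [mkP_val, if_pos rfl]
      exact hgj.symm
    · rw [mkP_val, if_neg e1]
      by_cases e2 : (i:ℕ) = (j:ℕ)+1
      · rw [if_pos e2]
        have : i = j' := Fin.ext (e2.trans hjj.symm)
        subst this
        exact hgj'.symm
      · rw [if_neg e2]
        exact congrArg Fin.val (hag i e1 (fun hc => e2 (by rw [hc, hjj])))
  · have hpD : pD v j := ⟨by omega, by omega⟩
    refine ⟨Sum.inr (Sum.inl ⟨j, hpD⟩),
      Subtype.ext (Subtype.ext (funext fun i => Fin.ext ?_))⟩
    simp only [eMov]
    by_cases e : i = j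
    · subst e
      rw [mkD_val, if_pos rfl]
      omega
    · rw [mkD_val, if_neg e]
      exact (congrArg Fin.val (hag i e)).symm
  · have hodd : Odd (cIdx k (fstr v.1) (j : ℕ)) :=
      odd_of_pairDown (by omega) v.1 w.1 v.2 w.2 j j' hjj hgj hfj
        (fun i e1 e2 => (hag i e1 e2).symm)
    have hpQ : pQ v j := ⟨hgj, hodd⟩
    refine ⟨Sum.inr (Sum.inr (Sum.inr ⟨j, hpQ⟩)),
      Subtype.ext (Subtype.ext (funext fun i => Fin.ext ?_))⟩
    simp only [eMov]
    by_cases e1 : i = j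
    · subst e1
      rw [mkQ_val, if_pos rfl]
      omega
    · rw [mkQ_val, if_neg e1]
      by_cases e2 : (i:ℕ) = (j:ℕ)+1
      · rw [if_pos e2]
        have : i = j' := Fin.ext (e2.trans hjj.symm)
        subst this
        omega
      · rw [if_neg e2]
        exact (congrArg Fin.val (hag i e1 (fun hc => e2 (by rw [hc, hjj])))).symm

end Surj

/-! ### Counting -/

lemma count_ofFn_eq : ∀ {m : ℕ} (g : Fin m → ℕ) (a : ℕ),
    (List.ofFn g).count a = (Finset.univ.filter (fun j => g j = a)).card
  | 0, g, a => by simp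
  | (m+1), g, a => by
      rw [List.ofFn_succ, List.count_cons, count_ofFn_eq (fun i => g i.succ) a,
        Finset.card_filter, Finset.card_filter, Fin.sum_univ_succ]
      simp only [beq_iff_eq]
      exact Nat.add_comm _ _

section Count

variable (v : PellVert n k) (hk : 3 ≤ k)

lemma cardU_eq : (Finset.univ.filter (pU v)).card =
    ∑ m ∈ Finset.range (k-1), (Finset.univ.filter (fun j => (v.1 j : ℕ) = m)).card := by
  rw [Finset.card_eq_sum_card_fiberwise (f := fun j => (v.1 j : ℕ)) (t := Finset.range (k-1))
    (fun x hx => by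
      rw [Finset.mem_coe, Finset.mem_filter] at hx
      have : (v.1 x : ℕ) + 1 < k := hx.2
      show (v.1 x : ℕ) ∈ Finset.range (k-1)
      rw [Finset.mem_range]; omega)]
  refine Finset.sum_congr rfl fun b hb => ?_
  rw [Finset.mem_range] at hb
  congr 1
  rw [Finset.filter_filter]
  apply Finset.filter_congr
  intro j _
  constructor
  · exact fun h => h.2
  · intro h
    have h' : (v.1 j : ℕ) = b := h
    exact ⟨show (v.1 j : ℕ) + 1 < k by omega, h⟩

lemma cardD_eq : (Finset.univ.filter (pD v)).card =
    ∑ m ∈ Finset.Icc 1 (k-1), (Finset.univ.filter (fun j => (v.1 j : ℕ) = m)).card := by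
  rw [Finset.card_eq_sum_card_fiberwise (f := fun j => (v.1 j : ℕ)) (t := Finset.Icc 1 (k-1))
    (fun x hx => by
      rw [Finset.mem_coe, Finset.mem_filter] at hx
      have : 1 ≤ (v.1 x : ℕ) ∧ (v.1 x : ℕ) < k := hx.2
      show (v.1 x : ℕ) ∈ Finset.Icc 1 (k-1)
      rw [Finset.mem_Icc]; omega)]
  refine Finset.sum_congr rfl fun b hb => ?_
  rw [Finset.mem_Icc] at hb
  congr 1
  rw [Finset.filter_filter]
  apply Finset.filter_congr
  intro j _
  constructor
  · exact fun h => h.2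
  · intro h
    have h' : (v.1 j : ℕ) = b := h
    exact ⟨show 1 ≤ (v.1 j : ℕ) ∧ (v.1 j : ℕ) < k by omega, h⟩

lemma cardP_eq : (Finset.univ.filter (fun i => (v.1 i : ℕ) = k - 1)).card =
    (Finset.univ.filter (fun i : Fin n => (v.1 i : ℕ) = k - 1 ∧
      ∀ j : Fin n, (j : ℕ) + 1 = (i : ℕ) → (v.1 j : ℕ) ≠ k - 1)).card +
    (Finset.univ.filter (pP v)).card := by
  have hsplit := Finset.card_filter_add_card_filter_not
    (s := Finset.univ.filter (fun i : Fin n => (v.1 i : ℕ) = k - 1))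
    (p := fun i => ∀ j : Fin n, (j : ℕ) + 1 = (i : ℕ) → (v.1 j : ℕ) ≠ k - 1)
  simp only [Finset.filter_filter] at hsplit
  rw [← hsplit]
  congr 1
  -- remaining: card of "has predecessor" set = card of filter (pP v)
  symm
  apply Finset.card_bij (i := fun (j : Fin n) (hj : j ∈ Finset.univ.filter (pP v)) =>
    (⟨(j:ℕ)+1, ((Finset.mem_filter.1 hj).2).1⟩ : Fin n))
  · intro j hj
    rw [Finset.mem_filter] at hj ⊢
    obtain ⟨-, hlt, hj1, hj2⟩ := hj
    refine ⟨Finset.mem_univ _, ?_, ?_⟩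
    · rw [fstr_getD, dif_pos hlt] at hj2
      exact hj2
    · intro hall
      exact absurd hj1 (hall j rfl)
  · intro j₁ hj₁ j₂ hj₂ he
    have := congrArg Fin.val he
    simp only [Fin.val_mk] at this
    exact Fin.ext (by omega)
  · intro i hi
    rw [Finset.mem_filter] at hi
    obtain ⟨-, hik, hnall⟩ := hi
    push_neg at hnall
    obtain ⟨j, hj1, hj2⟩ := hnall
    have hjlt : (j:ℕ)+1 < n := by rw [hj1]; exact i.isLt
    have hieq : (⟨(j:ℕ)+1, hjlt⟩ : Fin n) = i := Fin.ext hj1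
    refine ⟨j, Finset.mem_filter.2 ⟨Finset.mem_univ _, hjlt, hj2, ?_⟩, hieq⟩
    rw [fstr_getD, dif_pos hjlt, hieq]
    exact hik

include hk in
lemma cardQ_eq : (Finset.univ.filter (fun i => (v.1 i : ℕ) = k)).card =
    2 * (Finset.univ.filter (pQ v)).card := by
  have hsplit := Finset.card_filter_add_card_filter_not
    (s := Finset.univ.filter (fun i : Fin n => (v.1 i : ℕ) = k))
    (p := fun i => Odd (cIdx k (fstr v.1) (i:ℕ)))
  simp only [Finset.filter_filter] at hsplit
  have hodd_eq : Finset.univ.filter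
      (fun i : Fin n => (v.1 i : ℕ) = k ∧ Odd (cIdx k (fstr v.1) (i:ℕ))) =
      Finset.univ.filter (pQ v) := rfl
  rw [hodd_eq] at hsplit
  -- bijection between the odd part and the even part
  have hbij : (Finset.univ.filter (pQ v)).card =
      (Finset.univ.filter (fun i : Fin n => (v.1 i : ℕ) = k ∧
        ¬ Odd (cIdx k (fstr v.1) (i:ℕ)))).card := by
    apply Finset.card_bij (i := fun (j : Fin n) (hj : j ∈ Finset.univ.filter (pQ v)) =>
      (⟨(j:ℕ)+1, pQ_succ_lt v hk j (Finset.mem_filter.1 hj).2⟩ : Fin n))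
    · intro j hj
      rw [Finset.mem_filter] at hj ⊢
      obtain ⟨-, hq⟩ := hj
      refine ⟨Finset.mem_univ _, pQ_succ_val v hk j hq, ?_⟩
      have hgd : (fstr v.1).getD ((j:ℕ)+1) 0 = k := by
        rw [fstr_getD, dif_pos (pQ_succ_lt v hk j hq)]
        exact pQ_succ_val v hk j hq
      have : cIdx k (fstr v.1) ((j:ℕ)+1) = cIdx k (fstr v.1) (j:ℕ) + 1 :=
        cIdx_succ_of_eq hgd
      simp only [Fin.val_mk, this]
      rw [Nat.not_odd_iff_even]
      exact hq.2.add_one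
    · intro j₁ hj₁ j₂ hj₂ he
      have := congrArg Fin.val he
      simp only [Fin.val_mk] at this
      exact Fin.ext (by omega)
    · intro i hi
      rw [Finset.mem_filter] at hi
      obtain ⟨-, hik, hnodd⟩ := hi
      rw [Nat.not_odd_iff_even] at hnodd
      have hgdi : (fstr v.1).getD (i:ℕ) 0 = k := by rw [fstr_getD_fin]; exact hik
      have hpos : 0 < cIdx k (fstr v.1) (i:ℕ) := cIdx_pos_of_eq hgdi
      rcases hm : (i:ℕ) with - | m
      · exfalso
        rw [hm] at hgdi hpos hnodd
        rw [cIdx_zero, if_pos hgdi] at hnodd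
        exact (by decide : ¬ Even 1) hnodd
      · have hmlt : m < n := by have := i.isLt; omega
        have hcs : cIdx k (fstr v.1) (m+1) = cIdx k (fstr v.1) m + 1 :=
          cIdx_succ_of_eq (by rw [← hm]; exact hgdi)
        have hoddm : Odd (cIdx k (fstr v.1) m) := by
          rw [hm, hcs] at hnodd
          rcases hnodd with ⟨t, ht⟩
          exact ⟨t - 1, by omega⟩
        have hmk : (fstr v.1).getD m 0 = k := by
          apply getD_eq_k_of_cIdx_pos
          rcases hoddm with ⟨t, ht⟩
          omega
        have hmval : (v.1 ⟨m, hmlt⟩ : ℕ) = k := by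
          rw [fstr_getD, dif_pos hmlt] at hmk
          exact hmk
        refine ⟨⟨m, hmlt⟩, Finset.mem_filter.2 ⟨Finset.mem_univ _, hmval, hoddm⟩, ?_⟩
        exact Fin.ext (by simp [hm])
  omega

end Count

lemma degree_eq (v : PellVert n k) (hk : 3 ≤ k) :
    (kPellGraph n k).degree v =
      (Finset.univ.filter (pU v)).card + (Finset.univ.filter (pD v)).card +
      (Finset.univ.filter (pP v)).card + (Finset.univ.filter (pQ v)).card := by
  have hb : Function.Bijective (eMov v hk) := ⟨eMov_inj v hk, eMov_surj v hk⟩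
  have h1 : Fintype.card (MovI v) = Fintype.card {w // (kPellGraph n k).Adj v w} :=
    Fintype.card_of_bijective hb
  have h2 : (kPellGraph n k).degree v = Fintype.card {w // (kPellGraph n k).Adj v w} := by
    rw [← SimpleGraph.card_neighborFinset_eq_degree, SimpleGraph.neighborFinset_eq_filter,
      ← Fintype.card_subtype]
  have h3 : Fintype.card ({j : Fin n // pU v j} ⊕ {j : Fin n // pD v j} ⊕
      {j : Fin n // pP v j} ⊕ {j : Fin n // pQ v j}) =
      Fintype.card {j : Fin n // pU v j} + (Fintype.card {j : Fin n // pD v j} +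
        (Fintype.card {j : Fin n // pP v j} + Fintype.card {j : Fin n // pQ v j})) := by
    rw [Fintype.card_sum, Fintype.card_sum, Fintype.card_sum]
  have h1' : Fintype.card ({j : Fin n // pU v j} ⊕ {j : Fin n // pD v j} ⊕
      {j : Fin n // pP v j} ⊕ {j : Fin n // pQ v j}) =
      Fintype.card {w // (kPellGraph n k).Adj v w} := h1
  rw [h2, ← h1', h3]
  simp only [Fintype.card_subtype]
  have e1 : Finset.filter (fun x => pU v x) Finset.univ = Finset.filter (pU v) Finset.univ := rfl
  have e2 : Finset.filter (fun x => pD v x) Finset.univ = Finset.filter (pD v) Finset.univ := rfl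
  have e3 : Finset.filter (fun x => pP v x) Finset.univ = Finset.filter (pP v) Finset.univ := rfl
  have e4 : Finset.filter (fun x => pQ v x) Finset.univ = Finset.filter (pQ v) Finset.univ := rfl
  rw [e1, e2, e3, e4]
  omega

theorem kPellGraph_degree (n k : ℕ) (hn : 1 ≤ n) (hk : 3 ≤ k) (v : PellVert n k) :
    (kPellGraph n k).degree v +
        Nat.card {i : Fin n // (v.1 i : ℕ) = k - 1 ∧
          ∀ j : Fin n, (j : ℕ) + 1 = (i : ℕ) → (v.1 j : ℕ) ≠ k - 1} =
      (List.ofFn (fun i => (v.1 i : ℕ))).count 0 +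
        2 * ∑ i ∈ Finset.Icc 1 (k - 1), (List.ofFn (fun i => (v.1 i : ℕ))).count i +
        (List.ofFn (fun i => (v.1 i : ℕ))).count k / 2 := by
  have hr : Nat.card {i : Fin n // (v.1 i : ℕ) = k - 1 ∧
      ∀ j : Fin n, (j : ℕ) + 1 = (i : ℕ) → (v.1 j : ℕ) ≠ k - 1} =
      (Finset.univ.filter (fun i : Fin n => (v.1 i : ℕ) = k - 1 ∧
        ∀ j : Fin n, (j : ℕ) + 1 = (i : ℕ) → (v.1 j : ℕ) ≠ k - 1)).card := by
    rw [Nat.card_eq_fintype_card, Fintype.card_subtype]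
  have hcnt : ∀ m : ℕ, (List.ofFn (fun i => (v.1 i : ℕ))).count m =
      (Finset.univ.filter (fun j : Fin n => (v.1 j : ℕ) = m)).card :=
    fun m => count_ofFn_eq _ m
  rw [hr, degree_eq v hk, hcnt, hcnt]
  simp only [hcnt]
  rw [cardU_eq v, cardD_eq v]
  have hP := cardP_eq v
  have hQ := cardQ_eq v hk
  -- index bookkeeping
  obtain ⟨m, rfl⟩ : ∃ m, k = m + 3 := ⟨k - 3, by omega⟩
  have hk1 : m + 3 - 1 = m + 2 := rfl
  rw [hk1] at hP ⊢
  have eq1 : ∑ b ∈ Finset.range (m+2),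
      (Finset.univ.filter (fun j : Fin n => (v.1 j : ℕ) = b)).card =
      (∑ b ∈ Finset.range (m+1),
        (Finset.univ.filter (fun j : Fin n => (v.1 j : ℕ) = b + 1)).card) +
      (Finset.univ.filter (fun j : Fin n => (v.1 j : ℕ) = 0)).card :=
    Finset.sum_range_succ' _ (m+1)
  have eq2 : ∑ b ∈ Finset.Icc 1 (m+2),
      (Finset.univ.filter (fun j : Fin n => (v.1 j : ℕ) = b)).card =
      (∑ b ∈ Finset.Icc 1 (m+1),
        (Finset.univ.filter (fun j : Fin n => (v.1 j : ℕ) = b)).card) +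
      (Finset.univ.filter (fun j : Fin n => (v.1 j : ℕ) = m + 2)).card :=
    Finset.sum_Icc_succ_top (by omega) _
  have eq3 : ∑ b ∈ Finset.Icc 1 (m+1),
      (Finset.univ.filter (fun j : Fin n => (v.1 j : ℕ) = b)).card =
      ∑ b ∈ Finset.range (m+1),
        (Finset.univ.filter (fun j : Fin n => (v.1 j : ℕ) = b + 1)).card := by
    have hrg : Finset.range (m+2-1) = Finset.range (m+1) := by norm_num
    rw [← Finset.Ico_add_one_right_eq_Icc, Finset.sum_Ico_eq_sum_range, Nat.add_sub_cancel]
    exact Finset.sum_congr rfl fun b _ => by rw [Nat.add_comm 1 b]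
  omega
end

section
/- For n≥1 and k≥3, the maximum degree of the k-Pell graph Π(n,k) is 2n and the minimum degree is ⌈n/2⌉. -/
set_option maxHeartbeats 1000000
def runP (k : ℕ) : Bool → List ℕ → Option Bool
  | s, [] => some s
  | false, a :: l => if a = k then runP k true l else if a < k then runP k false l else none
  | true, a :: l => if a = k then runP k false l else none

@[simp] lemma runP_nil (k : ℕ) (s : Bool) : runP k s [] = some s := by cases s <;> rfl

lemma runP_cons_k (k : ℕ) (s : Bool) (l : List ℕ) : runP k s (k :: l) = runP k (!s) l := by
  cases s <;> simp [runP]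

lemma runP_cons_lt (k a : ℕ) (ha : a < k) (l : List ℕ) :
    runP k false (a :: l) = runP k false l := by
  simp [runP, ha, Nat.ne_of_lt ha]

lemma runP_true_cons_ne (k a : ℕ) (ha : a ≠ k) (l : List ℕ) :
    runP k true (a :: l) = none := by simp [runP, ha]

lemma runP_append (k : ℕ) (s : Bool) (l1 l2 : List ℕ) :
    runP k s (l1 ++ l2) = (runP k s l1).bind (fun s' => runP k s' l2) := by
  induction l1 generalizing s with
  | nil => simp
  | cons a l ih =>
    rcases eq_or_ne a k with rfl | h
    · simp [runP_cons_k, ih]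
    · cases s
      · rcases lt_or_ge a k with h2 | h2
        · simp [List.cons_append, runP_cons_lt _ _ h2, ih]
        · have : ¬ a < k := by omega
          simp [List.cons_append, runP, h, this]
      · simp [List.cons_append, runP_true_cons_ne _ _ h]

lemma isPell_iff (k : ℕ) (l : List ℕ) : isPellStr k l = true ↔ runP k false l = some false := by
  induction l using isPellStr.induct k with
  | case1 => simp [isPellStr]
  | case2 a =>
    rcases eq_or_ne a k with rfl | h
    · simp [isPellStr, runP_cons_k]
    · rcases lt_or_ge a k with h2 | h2
      · simp [isPellStr, h2, runP_cons_lt _ _ h2]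
      · simp [isPellStr, runP, h, Nat.not_lt.mpr h2]
  | case3 b rest ih =>
    simp only [isPellStr, if_pos rfl, runP_cons_k, Bool.and_eq_true, beq_iff_eq]
    rcases eq_or_ne b k with rfl | hb
    · simp [runP_cons_k, ih]
    · simp [runP_true_cons_ne _ _ hb, hb]
  | case4 a b rest ha ih =>
    simp only [isPellStr, if_neg ha, Bool.and_eq_true, decide_eq_true_eq]
    rcases lt_or_ge a k with h2 | h2
    · simp [h2, runP_cons_lt _ _ h2, ih]
    · have : ¬ a < k := by omega
      simp [runP, ha, this]

lemma runP_allLt (k : ℕ) (l : List ℕ) (h : ∀ x ∈ l, x < k) : runP k false l = some false := by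
  induction l with
  | nil => simp
  | cons a l ih =>
    rw [runP_cons_lt k a (h a (by simp)) l]
    exact ih fun x hx => h x (by simp [hx])

lemma runP_replicate (k : ℕ) (m : ℕ) (s : Bool) :
    runP k s (List.replicate m k) = some (if m % 2 = 0 then s else !s) := by
  induction m generalizing s with
  | zero => simp
  | succ m ih =>
    rw [List.replicate_succ, runP_cons_k, ih]
    by_cases h1 : m % 2 = 0
    · have h2 : ¬ (m+1) % 2 = 0 := by omega
      simp [h1, h2]
    · have h2 : (m+1) % 2 = 0 := by omega
      simp [h1, h2]

lemma runP_split (k : ℕ) (l : List ℕ) (j : ℕ) (hj : j < l.length) (s : Bool) :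
    runP k s l = (runP k s (l.take j)).bind
      (fun s' => runP k s' (l[j] :: l.drop (j+1))) := by
  conv_lhs => rw [← List.take_append_drop j l, List.drop_eq_getElem_cons hj]
  rw [runP_append]

lemma P1c (k : ℕ) (l : List ℕ) (hv : runP k false l = some false) (j : ℕ) (hj : j < l.length) :
    ∃ s, runP k false (l.take j) = some s := by
  rw [runP_split k l j hj] at hv
  cases h : runP k false (l.take j) with
  | none => rw [h] at hv; simp at hv
  | some s => exact ⟨s, rfl⟩

lemma P1a (k : ℕ) (l : List ℕ) (hv : runP k false l = some false) (j : ℕ) (hj : j < l.length)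
    (hjk : l[j] = k) (hs : runP k false (l.take j) = some false) :
    ∃ h : j + 1 < l.length, l[j+1] = k := by
  rw [runP_split k l j hj, hs] at hv
  simp only [Option.bind_some, hjk, runP_cons_k, Bool.not_false] at hv
  by_cases h1 : j + 1 < l.length
  · refine ⟨h1, ?_⟩
    rw [List.drop_eq_getElem_cons h1] at hv
    by_contra hne
    rw [runP_true_cons_ne k _ hne] at hv
    simp at hv
  · have : l.drop (j+1) = [] := List.drop_eq_nil_of_le (by omega)
    rw [this] at hv
    simp at hv

lemma P1b (k : ℕ) (l : List ℕ) (j : ℕ) (hj : j ≤ l.length)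
    (hs : runP k false (l.take j) = some true) :
    ∃ h : 1 ≤ j, l[j-1]'(by omega) = k ∧ runP k false (l.take (j-1)) = some false := by
  have hj1 : 1 ≤ j := by
    by_contra h
    have : j = 0 := by omega
    subst this; simp at hs
  refine ⟨hj1, ?_⟩
  obtain ⟨m, rfl⟩ : ∃ m, j = m + 1 := ⟨j - 1, by omega⟩
  simp only [Nat.add_sub_cancel]
  have hlt : m < l.length := by omega
  have : l.take (m+1) = l.take m ++ [l[m]] := (List.take_concat_get' _ _ hlt).symm
  rw [this, runP_append] at hs
  cases h : runP k false (l.take m) with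
  | none => rw [h] at hs; simp at hs
  | some s =>
    rw [h] at hs
    simp only [Option.bind_some] at hs
    cases s with
    | false =>
      rcases eq_or_ne (l[m]'hlt) k with he | he
      · exact ⟨he, rfl⟩
      · rcases lt_or_ge (l[m]'hlt) k with h2 | h2
        · rw [runP_cons_lt k _ h2] at hs; simp at hs
        · have h3 : ¬ (l[m]'hlt) < k := by omega
          simp [runP, he, h3] at hs
    | true =>
      rcases eq_or_ne (l[m]'hlt) k with he | he
      · rw [he, runP_cons_k] at hs; simp at hs
      · rw [runP_true_cons_ne k _ he] at hs; simp at hs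

lemma P2 (k : ℕ) (hk : 1 ≤ k) (l l' : List ℕ) (hlen : l'.length = l.length) (j : ℕ)
    (hj1 : j + 1 < l.length)
    (hv : runP k false l = some false)
    (hs : runP k false (l.take j) = some false)
    (hjk : l[j] = k) (hj1k : l[j+1] = k)
    (hl1 : j + 1 < l'.length)
    (h'j : l'[j]'(Nat.lt_of_succ_lt hl1) = k - 1) (h'j1 : l'[j+1]'hl1 = k - 1)
    (hoth : ∀ i (h : i < l.length) (h' : i < l'.length), i ≠ j → i ≠ j + 1 → l'[i] = l[i]) :
    runP k false l' = some false := by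
  have hj : j < l.length := by omega
  have htake : l'.take j = l.take j := by
    apply List.ext_getElem (by simp [hlen])
    intro i h1 h2
    rw [List.getElem_take, List.getElem_take]
    exact hoth i (by simp at h2; omega) (by simp at h1; omega) (by simp at h2; omega) (by simp at h2; omega)
  have hdrop : l'.drop (j+2) = l.drop (j+2) := by
    apply List.ext_getElem (by simp [hlen])
    intro i h1 h2
    rw [List.getElem_drop, List.getElem_drop]
    exact hoth (j+2+i) (by simp at h2; omega) (by simp at h1; omega) (by omega) (by omega)
  -- original gives state after j+2
  rw [runP_split k l j hj, hs] at hv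
  simp only [Option.bind_some, hjk, runP_cons_k, Bool.not_false] at hv
  rw [List.drop_eq_getElem_cons hj1, hj1k, runP_cons_k] at hv
  simp only [Bool.not_true] at hv
  -- now hv : runP k false (l.drop (j+2)) = some false
  have hd2 : l.drop (j+1+1) = l.drop (j+2) := by norm_num
  rw [hd2] at hv
  rw [runP_split k l' j (by omega), htake, hs]
  simp only [Option.bind_some, h'j]
  rw [runP_cons_lt k (k-1) (by omega)]
  rw [List.drop_eq_getElem_cons (show j + 1 < l'.length by omega), h'j1,
    runP_cons_lt k (k-1) (by omega)]
  have : l'.drop (j+1+1) = l.drop (j+2) := by rw [hdrop]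
  rw [this]
  exact hv

section VertexLemmas
variable {n k : ℕ}

lemma LN_length (f : Fin n → Fin (k+1)) : (List.ofFn fun i => ((f i : ℕ))).length = n := by simp

lemma LN_getElem (f : Fin n → Fin (k+1)) (i : ℕ) (h : i < n) :
    (List.ofFn fun i => ((f i : ℕ)))[i]'(by simp [h]) = (f ⟨i, h⟩ : ℕ) := by
  simp [List.getElem_ofFn]

lemma LN_take_eq (f g : Fin n → Fin (k+1)) (j : ℕ)
    (h : ∀ i : Fin n, (i:ℕ) < j → f i = g i) :
    (List.ofFn fun i => ((f i : ℕ))).take j = (List.ofFn fun i => ((g i : ℕ))).take j := by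
  apply List.ext_getElem (by simp)
  intro i h1 h2
  simp only [List.getElem_take, List.getElem_ofFn]
  have hi : i < j := by simp at h1; omega
  exact congrArg Fin.val (h _ (by simpa using hi))

lemma LN_drop_eq (f g : Fin n → Fin (k+1)) (j : ℕ)
    (h : ∀ i : Fin n, j ≤ (i:ℕ) → f i = g i) :
    (List.ofFn fun i => ((f i : ℕ))).drop j = (List.ofFn fun i => ((g i : ℕ))).drop j := by
  apply List.ext_getElem (by simp)
  intro i h1 h2
  simp only [List.getElem_drop, List.getElem_ofFn]
  exact congrArg Fin.val (h _ (by simp))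

lemma valid_single (f g : Fin n → Fin (k+1)) (j : Fin n)
    (hoth : ∀ i, i ≠ j → f i = g i) (hf : (f j : ℕ) < k) (hg : (g j : ℕ) < k)
    (hval : isPellStr k (List.ofFn fun i => ((f i : ℕ))) = true) :
    isPellStr k (List.ofFn fun i => ((g i : ℕ))) = true := by
  rw [isPell_iff] at hval ⊢
  rw [runP_split k _ (j:ℕ) (by simp [j.isLt])] at hval
  rw [runP_split k _ (j:ℕ) (by simp [j.isLt])]
  have htake := LN_take_eq g f (j:ℕ) (fun i hi => (hoth i (by intro he; subst he; omega)).symm)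
  have hdrop := LN_drop_eq g f ((j:ℕ)+1) (fun i hi => (hoth i (by intro he; subst he; omega)).symm)
  rw [htake, hdrop]
  rw [LN_getElem f (j:ℕ) j.isLt, LN_getElem g (j:ℕ) j.isLt] at *
  simp only [Fin.eta] at *
  cases hst : runP k false ((List.ofFn fun i => ((f i : ℕ))).take (j:ℕ)) with
  | none => rw [hst] at hval; simp at hval
  | some s =>
    rw [hst] at hval
    simp only [Option.bind_some] at hval ⊢
    cases s with
    | false =>
      rw [runP_cons_lt k _ hf] at hval
      rw [runP_cons_lt k _ hg]
      exact hval
    | true =>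
      rw [runP_true_cons_ne k _ (show (f j : ℕ) ≠ k by omega)] at hval
      simp at hval

end VertexLemmas

def Rfun (n k : ℕ) (u : Fin n → Fin (k+1)) : Fin n × Bool → (Fin n → ℕ) := fun p =>
  if p.2 then
    (if (u p.1 : ℕ) = k - 1 then
      (fun i => if (i:ℕ) = (p.1:ℕ) ∨ (i:ℕ) = (p.1:ℕ) + 1 then k else (u i : ℕ))
     else fun i => if i = p.1 then (u p.1 : ℕ) + 1 else (u i : ℕ))
  else
    (if (u p.1 : ℕ) = k then
      (fun i => if (i:ℕ) = (p.1:ℕ) ∨ (i:ℕ) = (p.1:ℕ) + 1 then k - 1 else (u i : ℕ))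
     else fun i => if i = p.1 then (u p.1 : ℕ) - 1 else (u i : ℕ))

lemma toFn_injOn {n k : ℕ} (s : Finset (PellVert n k)) :
    Set.InjOn (fun v : PellVert n k => (fun i => (v.1 i : ℕ))) s :=
  fun a _ b _ h => Subtype.ext (funext fun i => Fin.ext (congrFun h i))

lemma degree_le (n k : ℕ) (hk : 3 ≤ k) (u : PellVert n k) :
    (kPellGraph n k).degree u ≤ 2 * n := by
  classical
  have hsub : ((kPellGraph n k).neighborFinset u).image (fun v => (fun i => (v.1 i : ℕ)))
      ⊆ Finset.univ.image (Rfun n k u.1) := by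
    intro w hw
    simp only [Finset.mem_image] at hw ⊢
    obtain ⟨v, hv, rfl⟩ := hw
    rw [SimpleGraph.mem_neighborFinset, kPellGraph, SimpleGraph.fromRel_adj] at hv
    obtain ⟨hne, hadj⟩ := hv
    rcases hadj with (⟨j, h1, h2, h3⟩ | ⟨j, j', hj', hfj, hfj', hgj, hgj', hoth⟩) |
      (⟨j, h1, h2, h3⟩ | ⟨j, j', hj', hfj, hfj', hgj, hgj', hoth⟩)
    · -- single up from u
      refine ⟨(j, true), Finset.mem_univ _, ?_⟩
      funext i
      have hne' : ¬ (u.1 j : ℕ) = k - 1 := by omega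
      simp only [Rfun, if_true, hne', if_false]
      by_cases hi : i = j
      · subst hi; simp [h1]
      · simp [hi, (h3 i hi)]
    · -- pair up from u
      refine ⟨(j, true), Finset.mem_univ _, ?_⟩
      have hR : Rfun n k u.1 (j, true)
          = fun i : Fin n => if (i:ℕ) = (j:ℕ) ∨ (i:ℕ) = (j:ℕ)+1 then k else (u.1 i : ℕ) := by
        simp [Rfun, hfj]
      rw [hR]
      funext i
      by_cases hi : (i:ℕ) = (j:ℕ) ∨ (i:ℕ) = (j:ℕ) + 1
      · rw [if_pos hi]
        rcases hi with hi | hi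
        · have : i = j := Fin.ext hi
          subst this; omega
        · have : i = j' := Fin.ext (by omega)
          subst this; omega
      · rw [if_neg hi]
        push_neg at hi
        exact congrArg Fin.val (hoth i (fun he => hi.1 (by subst he; rfl))
          (fun he => hi.2 (by subst he; omega)))
    · -- single down (v = u with j decremented)
      refine ⟨(j, false), Finset.mem_univ _, ?_⟩
      funext i
      have hne' : ¬ (u.1 j : ℕ) = k := by omega
      simp only [Rfun, Bool.false_eq_true, if_false, hne']
      by_cases hi : i = j
      · subst hi; simp; omega
      · simp [hi, (h3 i hi)]
    · -- pair down (v has k-1 k-1 where u has k k)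
      refine ⟨(j, false), Finset.mem_univ _, ?_⟩
      have hR : Rfun n k u.1 (j, false)
          = fun i : Fin n => if (i:ℕ) = (j:ℕ) ∨ (i:ℕ) = (j:ℕ)+1 then k-1 else (u.1 i : ℕ) := by
        simp [Rfun, hgj]
      rw [hR]
      funext i
      by_cases hi : (i:ℕ) = (j:ℕ) ∨ (i:ℕ) = (j:ℕ) + 1
      · rw [if_pos hi]
        rcases hi with hi | hi
        · have : i = j := Fin.ext hi
          subst this; omega
        · have : i = j' := Fin.ext (by omega)
          subst this; omega
      · rw [if_neg hi]
        push_neg at hi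
        exact (congrArg Fin.val (hoth i (fun he => hi.1 (by subst he; rfl))
          (fun he => hi.2 (by subst he; omega)))).symm
  calc (kPellGraph n k).degree u
      = (((kPellGraph n k).neighborFinset u).image (fun v => (fun i => (v.1 i : ℕ)))).card := by
        rw [Finset.card_image_of_injOn (toFn_injOn _)]; rfl
    _ ≤ (Finset.univ.image (Rfun n k u.1)).card := Finset.card_le_card hsub
    _ ≤ (Finset.univ : Finset (Fin n × Bool)).card := Finset.card_image_le
    _ = 2 * n := by simp [mul_comm]

lemma valid_of_allLt {n k : ℕ} (f : Fin n → Fin (k+1)) (h : ∀ i, (f i : ℕ) < k) :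
    isPellStr k (List.ofFn fun i => ((f i : ℕ))) = true := by
  rw [isPell_iff]
  apply runP_allLt
  intro x hx
  rw [List.mem_ofFn] at hx
  obtain ⟨i, rfl⟩ := hx
  exact h i

lemma exists_deg_max (n k : ℕ) (hn : 1 ≤ n) (hk : 3 ≤ k) :
    ∃ u : PellVert n k, 2 * n ≤ (kPellGraph n k).degree u := by
  classical
  refine ⟨⟨fun _ => ⟨1, by omega⟩, valid_of_allLt _ (fun i => by simp; omega)⟩, ?_⟩
  set u : PellVert n k := ⟨fun _ => ⟨1, by omega⟩, valid_of_allLt _ (fun i => by simp; omega)⟩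
    with hu
  have hφval : ∀ (p : Fin n × Bool), isPellStr k
      (List.ofFn fun i => (((fun i => if i = p.1 then (if p.2 then (⟨2, by omega⟩ : Fin (k+1))
        else ⟨0, by omega⟩) else ⟨1, by omega⟩) i : Fin (k+1)) : ℕ)) = true := by
    intro p
    apply valid_of_allLt
    intro i
    by_cases hi : i = p.1 <;> cases hp : p.2 <;> simp [hi, hp] <;> omega
  set φ : Fin n × Bool → PellVert n k := fun p =>
    ⟨fun i => if i = p.1 then (if p.2 then ⟨2, by omega⟩ else ⟨0, by omega⟩) else ⟨1, by omega⟩,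
     hφval p⟩ with hφ
  have hval : ∀ p i, ((φ p).1 i : ℕ) = if i = p.1 then (if p.2 then 2 else 0) else 1 := by
    intro p i
    by_cases hi : i = p.1 <;> cases hp : p.2 <;> simp [hφ, hi, hp]
  have hmem : ∀ p : Fin n × Bool, φ p ∈ (kPellGraph n k).neighborFinset u := by
    intro p
    rw [SimpleGraph.mem_neighborFinset, kPellGraph, SimpleGraph.fromRel_adj]
    constructor
    · intro he
      have h2 := congrArg (fun w => (w.1 p.1 : ℕ)) he
      rw [show ((φ p).1 p.1 : ℕ) = ((φ p).1 p.1 : ℕ) from rfl,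
        hval p p.1] at h2
      simp only [if_pos rfl, hu] at h2
      cases hp : p.2 <;> rw [hp] at h2 <;> simp at h2 <;> omega
    · cases hp : p.2
      · right; left
        refine ⟨p.1, ?_, ?_, ?_⟩
        · rw [hval p p.1]; simp [hu, hp]
        · rw [hval p p.1]; simp [hp]; omega
        · intro i hi
          apply Fin.ext
          rw [hval p i]
          simp [hu, hi]
      · left; left
        refine ⟨p.1, ?_, ?_, ?_⟩
        · rw [hval p p.1]; simp [hu, hp]
        · simp [hu]; omega
        · intro i hi
          apply Fin.ext
          rw [hval p i]
          simp [hu, hi]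
  have hinj : Set.InjOn φ (Finset.univ : Finset (Fin n × Bool)) := by
    intro p _ q _ hpq
    have h1 := congrArg (fun w => (w.1 p.1 : ℕ)) hpq
    rw [show ((φ p).1 p.1 : ℕ) = ((φ p).1 p.1 : ℕ) from rfl,
      show ((φ q).1 p.1 : ℕ) = ((φ q).1 p.1 : ℕ) from rfl,
      hval p p.1, hval q p.1] at h1
    simp only [if_pos rfl] at h1
    have hp1 : p.1 = q.1 := by
      by_contra hne
      rw [if_neg hne] at h1
      cases hp : p.2 <;> rw [hp] at h1 <;> simp at h1
    rw [if_pos hp1] at h1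
    have hp2 : p.2 = q.2 := by
      cases hp : p.2 <;> cases hq : q.2 <;> rw [hp, hq] at h1 <;> simp at h1 <;> omega
    exact Prod.ext hp1 hp2
  calc 2 * n = (Finset.univ : Finset (Fin n × Bool)).card := by simp [mul_comm]
    _ ≤ ((kPellGraph n k).neighborFinset u).card :=
        Finset.card_le_card_of_injOn φ (fun p _ => hmem p) hinj
    _ = (kPellGraph n k).degree u := rfl

lemma pair_nbhd (n k : ℕ) (hk : 3 ≤ k) (u : PellVert n k) (a : ℕ) (ha1 : a + 1 < n)
    (hs : runP k false ((List.ofFn fun i => ((u.1 i : ℕ))).take a) = some false)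
    (hua : (u.1 ⟨a, Nat.lt_of_succ_lt ha1⟩ : ℕ) = k) (hua1 : (u.1 ⟨a+1, ha1⟩ : ℕ) = k) :
    ∃ v : PellVert n k, v ∈ (kPellGraph n k).neighborFinset u ∧
      (∀ p : Fin n, ((p:ℕ) = a ∨ (p:ℕ) = a + 1) → (v.1 p : ℕ) = k - 1) ∧
      (∀ p : Fin n, (p:ℕ) ≠ a → (p:ℕ) ≠ a + 1 → v.1 p = u.1 p) := by
  classical
  have hlen : (List.ofFn fun i => ((u.1 i : ℕ))).length = n := by simp
  have hval : runP k false (List.ofFn fun i => ((u.1 i : ℕ))) = some false := by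
    rw [← isPell_iff]; exact u.2
  set g : Fin n → Fin (k+1) :=
    fun p => if (p:ℕ) = a ∨ (p:ℕ) = a + 1 then ⟨k-1, by omega⟩ else u.1 p with hg
  have hgval : ∀ p : Fin n, (g p : ℕ) = if (p:ℕ) = a ∨ (p:ℕ) = a + 1 then k-1 else (u.1 p : ℕ) := by
    intro p
    by_cases hp : (p:ℕ) = a ∨ (p:ℕ) = a + 1 <;> simp [hg, hp]
  have hla : (List.ofFn fun i => ((u.1 i : ℕ)))[a]'(by omega) = k := by
    rw [LN_getElem u.1 a (by omega)]; exact hua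
  have hla1 : (List.ofFn fun i => ((u.1 i : ℕ)))[a+1]'(by omega) = k := by
    rw [LN_getElem u.1 (a+1) (by omega)]; exact hua1
  have hvg : isPellStr k (List.ofFn fun i => ((g i : ℕ))) = true := by
    rw [isPell_iff]
    refine P2 k (by omega) (List.ofFn fun i => ((u.1 i : ℕ))) (List.ofFn fun i => ((g i : ℕ)))
      (by simp) a (by omega) hval hs hla hla1 (by simp; omega) ?_ ?_ ?_
    · rw [LN_getElem g a (by omega), hgval]; simp
    · rw [LN_getElem g (a+1) (by omega), hgval]; simp
    · intro i hi hi' hne1 hne2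
      simp only [List.length_ofFn] at hi hi'
      rw [LN_getElem g i hi', LN_getElem u.1 i hi, hgval]
      simp [hne1, hne2]
  refine ⟨⟨g, hvg⟩, ?_, ?_, ?_⟩
  · rw [SimpleGraph.mem_neighborFinset, kPellGraph, SimpleGraph.fromRel_adj]
    constructor
    · intro he
      have h2 := congrArg (fun w : PellVert n k => (w.1 ⟨a, Nat.lt_of_succ_lt ha1⟩ : ℕ)) he
      rw [show ((⟨g, hvg⟩ : PellVert n k).1 ⟨a, Nat.lt_of_succ_lt ha1⟩ : ℕ)
          = (g ⟨a, Nat.lt_of_succ_lt ha1⟩ : ℕ) from rfl, hgval] at h2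
      simp only [hua] at h2
      simp at h2
      omega
    · right; right
      refine ⟨⟨a, Nat.lt_of_succ_lt ha1⟩, ⟨a+1, ha1⟩, rfl, ?_, ?_, hua, hua1, ?_⟩
      · show (g ⟨a, Nat.lt_of_succ_lt ha1⟩ : ℕ) = k - 1
        rw [hgval]; simp
      · show (g ⟨a+1, ha1⟩ : ℕ) = k - 1
        rw [hgval]; simp
      · intro i hi1 hi2
        show g i = u.1 i
        rw [hg]
        have : ¬ ((i:ℕ) = a ∨ (i:ℕ) = a + 1) := by
          push_neg
          exact ⟨fun he => hi1 (Fin.ext he), fun he => hi2 (Fin.ext he)⟩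
        simp only [this, if_false]
  · intro p hp
    show (g p : ℕ) = k - 1
    rw [hgval, if_pos hp]
  · intro p hp1 hp2
    show g p = u.1 p
    rw [hg]
    simp only [hp1, hp2, false_or, if_false]

lemma degree_ge (n k : ℕ) (hk : 3 ≤ k) (u : PellVert n k) :
    (n + 1) / 2 ≤ (kPellGraph n k).degree u := by
  classical
  have key : ∀ i : Fin ((n+1)/2), ∃ v : PellVert n k,
      v ∈ (kPellGraph n k).neighborFinset u ∧
      (∀ p : Fin n, (p:ℕ) = 2*(i:ℕ) → (v.1 p : ℕ) ≠ (u.1 p : ℕ)) ∧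
      (∀ p : Fin n, ((p:ℕ)+1 < 2*(i:ℕ) ∨ 2*(i:ℕ)+2 ≤ (p:ℕ)) → v.1 p = u.1 p) := by
    intro i
    have hi := i.isLt
    have h2i : 2*(i:ℕ) < n := by omega
    by_cases hcase : (u.1 ⟨2*(i:ℕ), h2i⟩ : ℕ) = k
    · have hval : runP k false (List.ofFn fun t => ((u.1 t : ℕ))) = some false := by
        rw [← isPell_iff]; exact u.2
      have hlen : (List.ofFn fun t => ((u.1 t : ℕ))).length = n := by simp
      obtain ⟨s, hs⟩ := P1c k _ hval (2*(i:ℕ)) (by rw [hlen]; omega)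
      cases s with
      | false =>
        have hlj : (List.ofFn fun t => ((u.1 t : ℕ)))[2*(i:ℕ)]'(by rw [hlen]; omega) = k := by
          rw [LN_getElem u.1 _ h2i]; exact hcase
        obtain ⟨hlt, hk1⟩ := P1a k _ hval (2*(i:ℕ)) (by rw [hlen]; omega) hlj hs
        have hlt' : 2*(i:ℕ)+1 < n := by rw [hlen] at hlt; exact hlt
        have hu1 : (u.1 ⟨2*(i:ℕ)+1, hlt'⟩ : ℕ) = k := by
          rw [LN_getElem u.1 _ hlt'] at hk1; exact hk1
        obtain ⟨v, hvmem, hv1, hv2⟩ := pair_nbhd n k hk u (2*(i:ℕ)) hlt' hs hcase hu1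
        refine ⟨v, hvmem, ?_, ?_⟩
        · intro p hp
          rw [hv1 p (Or.inl hp)]
          have hpj : p = ⟨2*(i:ℕ), h2i⟩ := Fin.ext hp
          rw [hpj, hcase]; omega
        · intro p hp
          exact hv2 p (by omega) (by omega)
      | true =>
        obtain ⟨h1, hk0, hs0⟩ := P1b k _ (2*(i:ℕ)) (by rw [hlen]; omega) hs
        have hm1 : 2*(i:ℕ) - 1 + 1 < n := by omega
        have hu0 : (u.1 ⟨2*(i:ℕ)-1, Nat.lt_of_succ_lt hm1⟩ : ℕ) = k := by
          rw [LN_getElem u.1 _ (Nat.lt_of_succ_lt hm1)] at hk0; exact hk0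
        have hu1 : (u.1 ⟨2*(i:ℕ)-1+1, hm1⟩ : ℕ) = k := by
          have : (⟨2*(i:ℕ)-1+1, hm1⟩ : Fin n) = ⟨2*(i:ℕ), h2i⟩ := Fin.ext (by simp; omega)
          rw [this]; exact hcase
        obtain ⟨v, hvmem, hv1, hv2⟩ := pair_nbhd n k hk u (2*(i:ℕ)-1) hm1 hs0 hu0 hu1
        refine ⟨v, hvmem, ?_, ?_⟩
        · intro p hp
          rw [hv1 p (Or.inr (by omega))]
          have hpj : p = ⟨2*(i:ℕ), h2i⟩ := Fin.ext hp
          rw [hpj, hcase]; omega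
        · intro p hp
          exact hv2 p (by omega) (by omega)
    · have hult : (u.1 ⟨2*(i:ℕ), h2i⟩ : ℕ) < k := by
        have := (u.1 ⟨2*(i:ℕ), h2i⟩).isLt; omega
      by_cases h0 : (u.1 ⟨2*(i:ℕ), h2i⟩ : ℕ) = 0
      · -- up move
        set j : Fin n := ⟨2*(i:ℕ), h2i⟩ with hjdef
        set g : Fin n → Fin (k+1) := fun p => if p = j then ⟨1, by omega⟩ else u.1 p with hg
        have hgval : ∀ p, (g p : ℕ) = if p = j then 1 else (u.1 p : ℕ) := fun p => by
          by_cases hp : p = j <;> simp [hg, hp]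
        have hvg : isPellStr k (List.ofFn fun t => ((g t : ℕ))) = true := by
          refine valid_single u.1 g j (fun t ht => ?_) hult (by rw [hgval]; simp; omega) u.2
          show u.1 t = g t
          rw [hg]; simp [ht]
        refine ⟨⟨g, hvg⟩, ?_, ?_, ?_⟩
        · rw [SimpleGraph.mem_neighborFinset, kPellGraph, SimpleGraph.fromRel_adj]
          refine ⟨?_, Or.inl (Or.inl ⟨j, ?_, ?_, ?_⟩)⟩
          · intro he
            have h2 := congrArg (fun w : PellVert n k => (w.1 j : ℕ)) he
            rw [show ((⟨g,hvg⟩ : PellVert n k).1 j : ℕ) = (g j : ℕ) from rfl,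
              hgval] at h2
            simp at h2; omega
          · show (g j : ℕ) = (u.1 j : ℕ) + 1
            rw [hgval, if_pos rfl]; omega
          · omega
          · intro t ht
            show u.1 t = g t
            rw [hg]; simp [ht]
        · intro p hp
          have hpj : p = j := Fin.ext hp
          rw [hpj]
          show (g j : ℕ) ≠ (u.1 j : ℕ)
          rw [hgval]; simp; omega
        · intro p hp
          have hpj : p ≠ j := by
            intro he; rw [he] at hp; simp [hjdef] at hp <;> omega
          show g p = u.1 p
          rw [hg]; simp [hpj]
      · -- down move
        set j : Fin n := ⟨2*(i:ℕ), h2i⟩ with hjdef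
        set g : Fin n → Fin (k+1) :=
          fun p => if p = j then ⟨(u.1 j : ℕ) - 1, by omega⟩ else u.1 p with hg
        have hgval : ∀ p, (g p : ℕ) = if p = j then (u.1 j : ℕ) - 1 else (u.1 p : ℕ) := fun p => by
          by_cases hp : p = j <;> simp [hg, hp]
        have hvg : isPellStr k (List.ofFn fun t => ((g t : ℕ))) = true := by
          refine valid_single u.1 g j (fun t ht => ?_) hult (by rw [hgval]; simp; omega) u.2
          show u.1 t = g t
          rw [hg]; simp [ht]
        refine ⟨⟨g, hvg⟩, ?_, ?_, ?_⟩
        · rw [SimpleGraph.mem_neighborFinset, kPellGraph, SimpleGraph.fromRel_adj]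
          refine ⟨?_, Or.inr (Or.inl ⟨j, ?_, ?_, ?_⟩)⟩
          · intro he
            have h2 := congrArg (fun w : PellVert n k => (w.1 j : ℕ)) he
            rw [show ((⟨g,hvg⟩ : PellVert n k).1 j : ℕ) = (g j : ℕ) from rfl,
              hgval] at h2
            simp at h2; omega
          · show (u.1 j : ℕ) = (g j : ℕ) + 1
            rw [hgval]; simp; omega
          · rw [hgval]; simp; omega
          · intro t ht
            show g t = u.1 t
            rw [hg]; simp [ht]
        · intro p hp
          have hpj : p = j := Fin.ext hp
          rw [hpj]
          show (g j : ℕ) ≠ (u.1 j : ℕ)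
          rw [hgval]; simp; omega
        · intro p hp
          have hpj : p ≠ j := by
            intro he; rw [he] at hp; simp [hjdef] at hp <;> omega
          show g p = u.1 p
          rw [hg]; simp [hpj]
  choose f hf1 hf2 hf3 using key
  have main : ∀ p q : Fin ((n+1)/2), (p:ℕ) < (q:ℕ) → f p = f q → False := by
    intro p q hpq hfe
    have hq : 2*(q:ℕ) < n := by have := q.isLt; omega
    set t : Fin n := ⟨2*(q:ℕ), hq⟩ with ht
    have e1 : (f p).1 t = u.1 t := hf3 p t (by right; simp [ht]; omega)
    have e2 := hf2 q t rfl
    apply e2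
    rw [← hfe]
    exact congrArg Fin.val e1
  have hinj : Set.InjOn f (Finset.univ : Finset (Fin ((n+1)/2))) := by
    intro p _ q _ hpq
    by_contra hne
    rcases Nat.lt_or_ge (p:ℕ) (q:ℕ) with h | h
    · exact main p q h hpq
    · rcases Nat.lt_or_ge (q:ℕ) (p:ℕ) with h2 | h2
      · exact main q p h2 hpq.symm
      · exact hne (Fin.ext (by omega))
  calc (n+1)/2 = (Finset.univ : Finset (Fin ((n+1)/2))).card := by simp
    _ ≤ ((kPellGraph n k).neighborFinset u).card :=
        Finset.card_le_card_of_injOn f (fun p _ => hf1 p) hinj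
    _ = (kPellGraph n k).degree u := rfl

lemma exists_deg_min (n k : ℕ) (hn : 1 ≤ n) (hk : 3 ≤ k) :
    ∃ u : PellVert n k, (kPellGraph n k).degree u ≤ (n+1)/2 := by
  classical
  set m := n / 2 with hm
  set g : Fin n → Fin (k+1) :=
    fun i => if (i:ℕ) < 2*m then ⟨k, by omega⟩ else ⟨k-1, by omega⟩ with hg
  have hgval : ∀ p : Fin n, (g p : ℕ) = if (p:ℕ) < 2*m then k else k-1 := fun p => by
    by_cases hp : (p:ℕ) < 2*m <;> simp [hg, hp]
  have hlist : (List.ofFn fun t => ((g t : ℕ)))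
      = List.replicate (2*m) k ++ List.replicate (n - 2*m) (k-1) := by
    apply List.ext_getElem (by simp; omega)
    intro t h1 h2
    rw [LN_getElem g t (by simp at h1; omega), hgval]
    by_cases htm : t < 2*m
    · rw [List.getElem_append_left (by simp; omega)]
      simp [htm]
    · rw [List.getElem_append_right (by simp; omega)]
      simp [htm]
  have hvg : isPellStr k (List.ofFn fun t => ((g t : ℕ))) = true := by
    rw [isPell_iff, hlist, runP_append, runP_replicate]
    simp only [Nat.mul_mod_right, if_pos rfl, Option.bind_some]
    apply runP_allLt
    intro x hx
    rw [List.eq_of_mem_replicate hx]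
    omega
  set ustar : PellVert n k := ⟨g, hvg⟩ with hustar
  refine ⟨ustar, ?_⟩
  set W : ℕ → (Fin n → ℕ) := fun t =>
    if 2*t+1 < n then (fun p : Fin n => if (p:ℕ) = 2*t ∨ (p:ℕ) = 2*t+1 then k-1 else (g p : ℕ))
    else (fun p : Fin n => if (p:ℕ) = 2*t then k-2 else (g p : ℕ)) with hW
  have hsub : (((kPellGraph n k).neighborFinset ustar).image (fun v => (fun i => (v.1 i : ℕ))))
      ⊆ (Finset.range ((n+1)/2)).image W := by
    intro w hw
    simp only [Finset.mem_image] at hw ⊢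
    obtain ⟨v, hv, rfl⟩ := hw
    rw [SimpleGraph.mem_neighborFinset, kPellGraph, SimpleGraph.fromRel_adj] at hv
    obtain ⟨hne, hadj⟩ := hv
    rcases hadj with (⟨j, h1, h2, h3⟩ | ⟨j, j', hj', hfj, hfj', hgj, hgj', hoth⟩) |
      (⟨j, h1, h2, h3⟩ | ⟨j, j', hj', hfj, hfj', hgj, hgj', hoth⟩)
    · -- single up from ustar : impossible
      exfalso
      have h2' : (g j : ℕ) + 1 < k := h2
      have h4 := hgval j
      by_cases hj : (j:ℕ) < 2*m
      · rw [if_pos hj] at h4; omega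
      · rw [if_neg hj] at h4; omega
    · -- pair up from ustar : impossible
      exfalso
      have hfj2 : (g j : ℕ) = k - 1 := hfj
      have hfj'2 : (g j' : ℕ) = k - 1 := hfj'
      have h4 := hgval j
      have h5 := hgval j'
      have hj2 : ¬ ((j:ℕ) < 2*m) := by
        intro hlt; rw [if_pos hlt] at h4; omega
      have hj'2 : ¬ ((j':ℕ) < 2*m) := by
        intro hlt; rw [if_pos hlt] at h5; omega
      have := j'.isLt
      omega
    · -- single down
      have h1' : (g j : ℕ) = (v.1 j : ℕ) + 1 := h1
      have h4 := hgval j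
      have hj2 : ¬ ((j:ℕ) < 2*m) := by
        intro hlt; rw [if_pos hlt] at h4; omega
      rw [if_neg hj2] at h4
      have hjlt := j.isLt
      have hnodd : ¬ (2*m+1 < n) := by omega
      refine ⟨m, Finset.mem_range.mpr (by omega), ?_⟩
      have hWm : W m = fun p : Fin n => if (p:ℕ) = 2*m then k-2 else (g p : ℕ) := by
        rw [hW]; simp only [hnodd, if_false]
      rw [hWm]
      funext p
      by_cases hp : (p:ℕ) = 2*m
      · rw [if_pos hp]
        have hpj : p = j := Fin.ext (by omega)
        rw [hpj]; omega
      · rw [if_neg hp]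
        have hpj : p ≠ j := fun he => hp (by rw [he]; omega)
        have h6 : (v.1 p : ℕ) = (g p : ℕ) := congrArg Fin.val (h3 p hpj)
        omega
    · -- pair down
      have hfj2 : (v.1 j : ℕ) = k - 1 := hfj
      have hfj'2 : (v.1 j' : ℕ) = k - 1 := hfj'
      have h4 := hgval j
      have hj2 : (j:ℕ) < 2*m := by
        by_contra hlt
        rw [if_neg hlt] at h4
        have hgj2 : (g j : ℕ) = k := hgj
        omega
      have hvval : runP k false (List.ofFn fun t => ((v.1 t : ℕ))) = some false := by
        rw [← isPell_iff]; exact v.2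
      have hlenv : (List.ofFn fun t => ((v.1 t : ℕ))).length = n := by simp
      have htk : (List.ofFn fun t => ((v.1 t : ℕ))).take (j:ℕ) = List.replicate (j:ℕ) k := by
        apply List.ext_getElem
          (by rw [List.length_take, List.length_replicate, hlenv]; omega)
        intro t h1 h2
        simp only [List.length_take, hlenv] at h1
        rw [List.getElem_take, LN_getElem v.1 t (by omega), List.getElem_replicate]
        have ht1 : (⟨t, by omega⟩ : Fin n) ≠ j := by
          intro he
          have := congrArg Fin.val he
          simp at this; omega
        have ht2 : (⟨t, by omega⟩ : Fin n) ≠ j' := by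
          intro he
          have := congrArg Fin.val he
          simp at this; omega
        have h6 : (v.1 (⟨t, by omega⟩ : Fin n) : ℕ) = (g (⟨t, by omega⟩ : Fin n) : ℕ) :=
          congrArg Fin.val (hoth _ ht1 ht2)
        rw [h6, hgval]
        have hcond : ((⟨t, by omega⟩ : Fin n) : ℕ) < 2*m := by simp; omega
        rw [if_pos hcond]
      have hjeven : (j:ℕ) % 2 = 0 := by
        by_contra hodd
        rw [runP_split k _ (j:ℕ) (by rw [hlenv]; exact j.isLt), htk, runP_replicate] at hvval
        simp only [hodd, if_false, Option.bind_some, Bool.not_false] at hvval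
        rw [LN_getElem v.1 (j:ℕ) j.isLt] at hvval
        simp only [Fin.eta] at hvval
        rw [runP_true_cons_ne k _ (by omega)] at hvval
        simp at hvval
      have hcond' : (j:ℕ)+1 < n := by have := j'.isLt; omega
      have hj2t : 2*((j:ℕ)/2) = (j:ℕ) := by omega
      refine ⟨(j:ℕ)/2, Finset.mem_range.mpr (by omega), ?_⟩
      have hWt : W ((j:ℕ)/2)
          = fun p : Fin n => if (p:ℕ) = (j:ℕ) ∨ (p:ℕ) = (j:ℕ)+1 then k-1 else (g p : ℕ) := by
        rw [hW]
        simp only [hj2t]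
        rw [if_pos hcond']
      rw [hWt]
      funext p
      by_cases hp : (p:ℕ) = (j:ℕ) ∨ (p:ℕ) = (j:ℕ)+1
      · rw [if_pos hp]
        rcases hp with hp | hp
        · have hpj : p = j := Fin.ext hp
          rw [hpj]; omega
        · have hpj : p = j' := Fin.ext (by omega)
          rw [hpj]; omega
      · rw [if_neg hp]
        push_neg at hp
        have hp1 : p ≠ j := fun he => hp.1 (by rw [he])
        have hp2 : p ≠ j' := fun he => hp.2 (by rw [he]; omega)
        have h6 : (v.1 p : ℕ) = (g p : ℕ) := congrArg Fin.val (hoth p hp1 hp2)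
        omega
  calc (kPellGraph n k).degree ustar
      = (((kPellGraph n k).neighborFinset ustar).image (fun v => (fun i => (v.1 i : ℕ)))).card := by
        rw [Finset.card_image_of_injOn (toFn_injOn _)]; rfl
    _ ≤ ((Finset.range ((n+1)/2)).image W).card := Finset.card_le_card hsub
    _ ≤ (Finset.range ((n+1)/2)).card := Finset.card_image_le
    _ = (n+1)/2 := by simp

theorem kPellGraph_max_min_degree (n k : ℕ) (hn : 1 ≤ n) (hk : 3 ≤ k) :
    (kPellGraph n k).maxDegree = 2 * n ∧ (kPellGraph n k).minDegree = (n + 1) / 2 := by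
  classical
  obtain ⟨u1, hu1⟩ := exists_deg_max n k hn hk
  obtain ⟨u2, hu2⟩ := exists_deg_min n k hn hk
  haveI : Nonempty (PellVert n k) := ⟨u1⟩
  constructor
  · refine le_antisymm
      (SimpleGraph.maxDegree_le_of_forall_degree_le _ _ (degree_le n k hk)) ?_
    exact le_trans hu1 (SimpleGraph.degree_le_maxDegree _ u1)
  · refine le_antisymm (le_trans (SimpleGraph.minDegree_le_degree _ u2) hu2) ?_
    exact SimpleGraph.le_minDegree_of_forall_le_degree _ _ (fun v => degree_ge n k hk v)
end
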